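/- arXiv:2006.09572 — 9 statements merged into one kernel-verified Lean document; each statement's English description precedes it below -/
import Mathlib

section
/- Let A be a nontrivial linearly ordered abelian group and let G be any linearly ordered abelian group. Then there exist an index type ι, an ultrafilter 𝒰 on ι, and an additive group homomorphism f from G into the ultrapower Filter.Germ (𝒰 : Filter ι) A that is injective and strictly monotone (i.e. an embedding of ordered groups). In other words, every totally ordered abelian ℓ-group lies in ISP_U(A) for every nontrivial totally ordered abelian ℓ-group A. -/
set_option linter.unusedSectionVars false

open Filter

variable {α : Type*} [Fintype α] [DecidableEq α]

/-- membership in the `ℚ≥0`-cone generated by a list of vectors -/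
def InCone : List (α → ℚ) → (α → ℚ) → Prop
  | [], u => u = 0
  | v :: L, u => ∃ c : ℚ, 0 ≤ c ∧ InCone L (u - c • v)

theorem inCone_map {ψ : (α → ℚ) →ₗ[ℚ] ℚ} (pr : (α → ℚ) →ₗ[ℚ] (α → ℚ)) :
    ∀ L : List (α → ℚ), (∀ v ∈ L, 0 ≤ ψ v) → ∀ w, InCone (L.map pr) w →
      ∃ u₀, pr u₀ = w ∧ InCone L u₀ ∧ 0 ≤ ψ u₀ := by
  intro L
  induction L with
  | nil =>
    intro _ w hw
    exact ⟨0, by simpa [InCone] using hw.symm, rfl, by simp⟩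
  | cons v L IH =>
    intro hL w hw
    obtain ⟨c, hc, hcone⟩ := hw
    obtain ⟨u₁, hu₁w, hu₁cone, hu₁ψ⟩ := IH (fun x hx => hL x (List.mem_cons_of_mem _ hx)) _ hcone
    refine ⟨u₁ + c • v, by rw [map_add, map_smul, hu₁w]; abel, ⟨c, hc, by simpa using hu₁cone⟩, ?_⟩
    have hv : 0 ≤ ψ v := hL v (List.mem_cons_self)
    have : ψ (u₁ + c • v) = ψ u₁ + c * ψ v := by simp [map_add, map_smul, smul_eq_mul]
    rw [this]
    positivity

theorem farkas_aux : ∀ (n : ℕ) (L : List (α → ℚ)), L.length = n → ∀ (u : α → ℚ),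
    InCone L u ∨ ∃ ψ : (α → ℚ) →ₗ[ℚ] ℚ, (∀ v ∈ L, 0 ≤ ψ v) ∧ ψ u < 0 := by
  intro n
  induction n with
  | zero =>
    intro L hL u
    rw [List.length_eq_zero_iff] at hL
    subst hL
    by_cases h : u = 0
    · exact Or.inl h
    · right
      have : ∃ j, u j ≠ 0 := by
        by_contra hc; push_neg at hc; exact h (funext hc)
      obtain ⟨j, hj⟩ := this
      refine ⟨(-(u j)⁻¹) • LinearMap.proj j, by simp, ?_⟩
      have : ((-(u j)⁻¹) • (LinearMap.proj j : (α → ℚ) →ₗ[ℚ] ℚ)) u = (-(u j)⁻¹) * u j := rfl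
      rw [this, neg_mul, inv_mul_cancel₀ hj]
      norm_num
  | succ m IH =>
    intro L hL u
    match L, hL with
    | v₀ :: L, hL =>
    have hLm : L.length = m := by simpa using hL
    rcases IH L hLm u with h | ⟨ψ, hψL, hψu⟩
    · exact Or.inl ⟨0, le_refl 0, by simpa using h⟩
    by_cases hv₀ : 0 ≤ ψ v₀
    · refine Or.inr ⟨ψ, ?_, hψu⟩
      intro v hv
      rcases List.mem_cons.1 hv with rfl | hv
      · exact hv₀
      · exact hψL v hv
    push_neg at hv₀
    have hne : ψ v₀ ≠ 0 := ne_of_lt hv₀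
    set pr : (α → ℚ) →ₗ[ℚ] (α → ℚ) := LinearMap.id - (ψ v₀)⁻¹ • ψ.smulRight v₀ with hprdef
    have hpr : ∀ w, pr w = w - (ψ w / ψ v₀) • v₀ := by
      intro w
      simp only [hprdef, LinearMap.sub_apply, LinearMap.id_apply, LinearMap.smul_apply,
        LinearMap.smulRight_apply, smul_smul, div_eq_inv_mul]
    have hψpr : ∀ w, ψ (pr w) = 0 := by
      intro w
      rw [hpr, map_sub, map_smul, smul_eq_mul, div_mul_cancel₀ _ hne, sub_self]
    rcases IH (L.map pr) (by simpa using hLm) (pr u) with h | ⟨χ, hχL, hχu⟩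
    · left
      obtain ⟨u₀, hu₀w, hu₀cone, hu₀ψ⟩ := inCone_map pr L hψL _ h
      set t : ℚ := (ψ u - ψ u₀) / ψ v₀ with ht
      have hut : u - t • v₀ = u₀ := by
        have h1 : pr u - pr u₀ = 0 := by rw [hu₀w, sub_self]
        rw [hpr, hpr] at h1
        have h2 : (u - u₀) - ((ψ u - ψ u₀) / ψ v₀) • v₀ = 0 := by
          rw [sub_div, sub_smul]
          rw [show u - (ψ u / ψ v₀) • v₀ - (u₀ - (ψ u₀ / ψ v₀) • v₀)
            = u - u₀ - ((ψ u / ψ v₀) • v₀ - (ψ u₀ / ψ v₀) • v₀) by abel] at h1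
          convert h1 using 2
        have := sub_eq_zero.1 h2
        rw [← ht] at this
        rw [← this]; abel
      refine ⟨t, ?_, by rw [hut]; exact hu₀cone⟩
      have hnum : ψ u - ψ u₀ < 0 := by linarith
      exact le_of_lt (div_pos_of_neg_of_neg hnum hv₀)
    · right
      refine ⟨χ.comp pr, ?_, by simpa using hχu⟩
      intro v hv
      rcases List.mem_cons.1 hv with rfl | hv
      · have : pr v = 0 := by rw [hpr, div_self hne, one_smul, sub_self]
        simp [this]
      · exact hχL (pr v) (List.mem_map.2 ⟨v, hv, rfl⟩)

theorem farkas (L : List (α → ℚ)) (u : α → ℚ) :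
    InCone L u ∨ ∃ ψ : (α → ℚ) →ₗ[ℚ] ℚ, (∀ v ∈ L, 0 ≤ ψ v) ∧ ψ u < 0 :=
  farkas_aux L.length L rfl u

/-- coordinatewise cast `ℤ → ℚ` as an additive hom -/
def qc : (α → ℤ) →+ (α → ℚ) :=
  AddMonoidHom.mk' (fun v a => (v a : ℚ)) (by intro u v; funext a; push_cast; simp)

@[simp] theorem qc_apply (v : α → ℤ) (a : α) : qc v a = (v a : ℚ) := rfl

theorem qc_injective : Function.Injective (qc (α := α)) := by
  intro u v h
  funext a
  have : ((u a : ℚ)) = ((v a : ℚ)) := congrFun h a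
  exact_mod_cast this

theorem rat_num_eq (c : ℚ) : ((c.num : ℤ) : ℚ) = c * c.den := by
  have hden : (c.den : ℚ) ≠ 0 := Nat.cast_ne_zero.mpr c.den_nz
  calc ((c.num : ℤ) : ℚ) = ((c.num : ℚ) / c.den) * c.den := by field_simp
    _ = c * c.den := by rw [Rat.num_div_den]

/-- membership in the `ℕ`-cone generated by a list of integer vectors -/
def InConeN : List (α → ℤ) → (α → ℤ) → Prop
  | [], u => u = 0
  | v :: L, u => ∃ m : ℕ, InConeN L (u - m • v)

theorem inConeN_smul (d : ℕ) : ∀ (L : List (α → ℤ)) (u), InConeN L u → InConeN L (d • u) := by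
  intro L
  induction L with
  | nil => intro u hu; rw [show u = 0 from hu]; simp [InConeN]
  | cons v L IH =>
    rintro u ⟨m, hm⟩
    refine ⟨d * m, ?_⟩
    rw [show d • u - (d * m) • v = d • (u - m • v) by rw [smul_sub, mul_smul]]
    exact IH _ hm

theorem rat_den_clear (c : ℚ) (hc : 0 ≤ c) : ∃ (d m : ℕ), 0 < d ∧ (m : ℚ) = d * c := by
  refine ⟨c.den, c.num.toNat, c.pos, ?_⟩
  have h0 : (0:ℤ) ≤ c.num := Rat.num_nonneg.2 hc
  calc (c.num.toNat : ℚ) = ((c.num.toNat : ℤ) : ℚ) := by push_cast; ring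
    _ = ((c.num : ℤ) : ℚ) := by rw [Int.toNat_of_nonneg h0]
    _ = c * c.den := rat_num_eq c
    _ = ↑c.den * c := mul_comm _ _

theorem inConeN_of_inCone : ∀ (L : List (α → ℤ)) (w : α → ℚ),
    InCone (L.map qc) w → ∃ (N : ℕ) (z : α → ℤ), 0 < N ∧ qc z = N • w ∧ InConeN L z := by
  intro L
  induction L with
  | nil =>
    intro w hw
    refine ⟨1, 0, one_pos, ?_, rfl⟩
    rw [show w = 0 from hw]
    simp
  | cons v L IH =>
    rintro w ⟨c, hc, hcone⟩
    obtain ⟨N₁, z₁, hN₁, hz₁, hz₁cone⟩ := IH _ hcone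
    obtain ⟨d, m, hd, hm⟩ := rat_den_clear c hc
    refine ⟨d * N₁, d • z₁ + (N₁ * m) • v, by positivity, ?_, ?_⟩
    · rw [map_add, map_nsmul, map_nsmul, hz₁]
      have h1 : ∀ (n : ℕ) (x : α → ℚ), n • x = (n : ℚ) • x := fun n x => by
        rw [Nat.cast_smul_eq_nsmul]
      simp only [h1]
      push_cast
      match_scalars
      · ring
      · linear_combination (N₁ : ℚ) * hm
    · refine ⟨N₁ * m, ?_⟩
      rw [show d • z₁ + (N₁ * m) • v - (N₁ * m) • v = d • z₁ by abel]
      exact inConeN_smul d L z₁ hz₁cone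

section OrderedGroup

variable {G : Type*} [AddCommGroup G] [LinearOrder G] [IsOrderedAddMonoid G]

theorem pi_nonneg_of_inConeN (π : (α → ℤ) →+ G) :
    ∀ (L : List (α → ℤ)) (u), (∀ v ∈ L, 0 ≤ π v) → InConeN L u → 0 ≤ π u := by
  intro L
  induction L with
  | nil => intro u _ hu; rw [show u = 0 from hu]; simp
  | cons v L IH =>
    rintro u hL ⟨m, hm⟩
    have h1 : 0 ≤ π (u - m • v) := IH _ (fun x hx => hL x (List.mem_cons_of_mem _ hx)) hm
    have h2 : 0 ≤ m • π v := nsmul_nonneg (hL v (List.mem_cons_self)) m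
    have : π u = π (u - m • v) + m • π v := by
      rw [← map_nsmul, ← map_add, sub_add_cancel]
    rw [this]
    exact add_nonneg h1 h2

theorem exists_common_den (s : Finset α) (f : α → ℚ) :
    ∃ D : ℕ, 0 < D ∧ ∀ b ∈ s, ∃ m : ℤ, (m : ℚ) = D * f b := by
  induction s using Finset.cons_induction with
  | empty => exact ⟨1, one_pos, by simp⟩
  | cons b s hb IH =>
    obtain ⟨D, hD, hDs⟩ := IH
    refine ⟨(f b).den * D, by positivity, ?_⟩
    intro x hx
    rcases Finset.mem_cons.1 hx with rfl | hx
    · refine ⟨(f x).num * D, ?_⟩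
      push_cast
      rw [show ((f x).num : ℚ) * D = ((f x).den * f x) * D by rw [mul_comm ((f x).den:ℚ), Rat.mul_den_eq_num]]
      ring
    · obtain ⟨m, hm⟩ := hDs x hx
      exact ⟨(f b).den * m, by push_cast; rw [hm]; ring⟩

theorem claimB (π : (α → ℤ) →+ G) (P : List (α → ℤ)) (hP : ∀ p ∈ P, 0 ≤ π p)
    (q : α → ℤ) (hq : 0 < π q) :
    ∃ φ : (α → ℤ) →+ ℤ, (∀ v, π v = 0 → φ v = 0) ∧ (∀ p ∈ P, 0 ≤ φ p) ∧ 0 < φ q := by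
  classical
  -- the kernel of `π` is finitely generated
  obtain ⟨T, hT⟩ : (LinearMap.ker π.toIntLinearMap).FG :=
    IsNoetherian.noetherian (LinearMap.ker π.toIntLinearMap)
  have hTker : ∀ w ∈ T, π w = 0 := by
    intro w hw
    have : w ∈ LinearMap.ker π.toIntLinearMap := by
      rw [← hT]; exact Submodule.subset_span hw
    exact this
  set L : List (α → ℤ) := P ++ T.toList ++ T.toList.map (fun w => -w) with hLdef
  have hLpos : ∀ v ∈ L, 0 ≤ π v := by
    intro v hv
    rcases List.mem_append.1 hv with hv | hv
    · rcases List.mem_append.1 hv with hv | hv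
      · exact hP v hv
      · rw [hTker v (Finset.mem_toList.1 hv)]
    · obtain ⟨w, hw, rfl⟩ := List.mem_map.1 hv
      rw [map_neg, hTker w (Finset.mem_toList.1 hw), neg_zero]
  rcases farkas (L.map qc) (qc (-q)) with h | ⟨ψ, hψL, hψu⟩
  · -- impossible: `-q` would be a nonnegative combination of positives and kernel elements
    exfalso
    obtain ⟨N, z, hN, hz, hzcone⟩ := inConeN_of_inCone L (qc (-q)) h
    have hz' : z = N • (-q) := by
      apply qc_injective
      rw [hz, map_nsmul]
    have h1 : 0 ≤ π z := pi_nonneg_of_inConeN π L z hLpos hzcone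
    rw [hz', map_nsmul, map_neg] at h1
    have h2 : 0 < N • π q := nsmul_pos hq (by omega)
    rw [smul_neg] at h1
    exact (neg_nonneg.1 h1).not_gt h2
  · -- rationalize the separating functional
    have hmemL : ∀ x ∈ L, 0 ≤ ψ (qc x) := fun x hx => hψL _ (List.mem_map.2 ⟨x, hx, rfl⟩)
    have hψT : ∀ w ∈ T, ψ (qc w) = 0 := by
      intro w hw
      have hwL : w ∈ L := List.mem_append.2 (Or.inl
        (List.mem_append.2 (Or.inr (Finset.mem_toList.2 hw))))
      have hwL' : -w ∈ L := List.mem_append.2 (Or.inr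
        (List.mem_map.2 ⟨w, Finset.mem_toList.2 hw, rfl⟩))
      have h1 := hmemL w hwL
      have h2 := hmemL (-w) hwL'
      rw [map_neg, map_neg] at h2
      linarith
    obtain ⟨D, hD, hDden⟩ := exists_common_den Finset.univ
      (fun a => ψ (qc (Pi.single a 1)))
    choose mcoef hmcoef using fun a => hDden a (Finset.mem_univ a)
    set φ : (α → ℤ) →+ ℤ := AddMonoidHom.mk' (fun v => ∑ a, v a * mcoef a) (by
      intro u v
      simp only [Pi.add_apply, add_mul]
      rw [Finset.sum_add_distrib]) with hφdef
    have hqcsum : ∀ v : α → ℤ, ψ (qc v) = ∑ a, (v a : ℚ) * ψ (qc (Pi.single a 1)) := by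
      intro v
      have : qc v = ∑ a, (v a : ℚ) • qc (Pi.single a 1) := by
        funext b
        simp only [Finset.sum_apply, Pi.smul_apply, qc_apply, Pi.single_apply, smul_eq_mul]
        push_cast
        simp only [mul_ite, mul_one, mul_zero]
        rw [Finset.sum_ite_eq Finset.univ b (fun a => ((v a : ℚ)))]
        simp
      rw [this, map_sum]
      simp [smul_eq_mul]
    have hkey : ∀ v : α → ℤ, ((φ v : ℤ) : ℚ) = D * ψ (qc v) := by
      intro v
      rw [hqcsum]
      simp only [hφdef, AddMonoidHom.mk'_apply]
      push_cast
      rw [Finset.mul_sum]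
      congr 1
      funext a
      rw [hmcoef a]
      ring
    have hψker : ∀ x ∈ Submodule.span ℤ (T : Set (α → ℤ)), ψ (qc x) = 0 := by
      intro x hxmem
      induction hxmem using Submodule.span_induction with
      | mem x hx => exact hψT x hx
      | zero => simp
      | add x y _ _ hx hy => rw [map_add, map_add, hx, hy, add_zero]
      | smul c x _ hx => rw [map_zsmul, map_zsmul, hx, smul_zero]
    refine ⟨φ, ?_, ?_, ?_⟩
    · intro v hv
      have hvmem : v ∈ Submodule.span ℤ (T : Set (α → ℤ)) := by
        rw [hT]
        exact hv
      have hψv : ψ (qc v) = 0 := hψker v hvmem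
      have : ((φ v : ℤ) : ℚ) = 0 := by rw [hkey, hψv, mul_zero]
      exact_mod_cast this
    · intro p hp
      have hpL : p ∈ L := List.mem_append.2 (Or.inl (List.mem_append.2 (Or.inl hp)))
      have h1 : 0 ≤ ψ (qc p) := hmemL p hpL
      have : (0:ℚ) ≤ ((φ p : ℤ) : ℚ) := by rw [hkey]; positivity
      exact_mod_cast this
    · have h1 : 0 < ψ (qc q) := by
        rw [map_neg, map_neg] at hψu
        linarith
      have : (0:ℚ) < ((φ q : ℤ) : ℚ) := by
        rw [hkey]
        have : (0:ℚ) < D := by exact_mod_cast hD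
        positivity
      exact_mod_cast this

theorem claimC (π : (α → ℤ) →+ G) (P : Finset (α → ℤ)) (hP : ∀ p ∈ P, 0 < π p) :
    ∃ φ : (α → ℤ) →+ ℤ, (∀ v, π v = 0 → φ v = 0) ∧ ∀ p ∈ P, 0 < φ p := by
  have h : ∀ q : {x // x ∈ P}, ∃ φ : (α → ℤ) →+ ℤ,
      (∀ v, π v = 0 → φ v = 0) ∧ (∀ p ∈ P.toList, 0 ≤ φ p) ∧ 0 < φ (q : α → ℤ) :=
    fun q => claimB π P.toList (fun p hp => (hP p (Finset.mem_toList.1 hp)).le) q (hP q q.2)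
  choose Φ h1 h2 h3 using h
  refine ⟨∑ q ∈ P.attach, Φ q, ?_, ?_⟩
  · intro v hv
    rw [AddMonoidHom.finset_sum_apply]
    exact Finset.sum_eq_zero fun q _ => h1 q v hv
  · intro p hp
    rw [AddMonoidHom.finset_sum_apply]
    apply Finset.sum_pos'
    · exact fun q _ => h2 q p (Finset.mem_toList.2 hp)
    · exact ⟨⟨p, hp⟩, Finset.mem_attach _ _, h3 ⟨p, hp⟩⟩

end OrderedGroup

section Main

/-- indicator vector (classical decidability, to avoid instance mismatches) -/
noncomputable def unitvec {β : Type*} (z : β) : β → ℤ := by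
  classical exact fun x => if x = z then 1 else 0

theorem unitvec_same {β : Type*} (z : β) : unitvec z z = 1 := by
  simp [unitvec]

theorem unitvec_ne {β : Type*} {x z : β} (h : x ≠ z) : unitvec z x = 0 := by
  simp [unitvec, h]

variable {G : Type} [AddCommGroup G] [LinearOrder G] [IsOrderedAddMonoid G]

/-- the canonical additive map `(↥S → ℤ) →+ G` -/
noncomputable def piS (S : Finset G) : ({x // x ∈ S} → ℤ) →+ G :=
  AddMonoidHom.mk' (fun v => ∑ x : {x // x ∈ S}, v x • (x : G)) (by
    intro u v
    rw [← Finset.sum_add_distrib]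
    refine Finset.sum_congr rfl fun x _ => ?_
    rw [Pi.add_apply, add_zsmul])

theorem piS_apply (S : Finset G) (v : {x // x ∈ S} → ℤ) :
    piS S v = ∑ x : {x // x ∈ S}, v x • (x : G) := rfl

theorem piS_single (S : Finset G) (z : {x // x ∈ S}) :
    piS S (unitvec z) = (z : G) := by
  rw [piS_apply, Finset.sum_eq_single z]
  · rw [unitvec_same, one_smul]
  · intro b _ hb
    rw [unitvec_ne hb, zero_smul]
  · intro h
    exact absurd (Finset.mem_univ z) h

theorem exists_phiS (S : Finset G) :
    ∃ φ : ({x // x ∈ S} → ℤ) →+ ℤ,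
      (∀ v, piS S v = 0 → φ v = 0) ∧
      (∀ x y : {x // x ∈ S}, (x : G) < (y : G) →
        0 < φ (unitvec y - unitvec x)) := by
  classical
  set P : Finset ({x // x ∈ S} → ℤ) :=
    ((Finset.univ : Finset ({x // x ∈ S} × {x // x ∈ S})).filter
      fun p => (p.1 : G) < (p.2 : G)).image
      fun p => unitvec p.2 - unitvec p.1 with hPdef
  have hP : ∀ p ∈ P, 0 < piS S p := by
    intro p hp
    obtain ⟨⟨x, y⟩, hxy, rfl⟩ := Finset.mem_image.1 hp
    have hlt : (x : G) < (y : G) := (Finset.mem_filter.1 hxy).2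
    rw [map_sub, piS_single, piS_single]
    simpa using hlt
  obtain ⟨φ, hker, hpos⟩ := claimC (piS S) P hP
  refine ⟨φ, hker, fun x y hxy => ?_⟩
  refine hpos _ (Finset.mem_image.2 ⟨(x, y), ?_, rfl⟩)
  exact Finset.mem_filter.2 ⟨Finset.mem_univ _, hxy⟩

end Main

/-- Every totally ordered abelian ℓ-group `G` embeds (as an ordered group) into an
ultrapower of any nontrivial totally ordered abelian ℓ-group `A`:
`G ∈ ISP_U(A)`. -/
theorem lgroup_embeds_in_ultrapower (A : Type) [AddCommGroup A] [LinearOrder A] [IsOrderedAddMonoid A] [Nontrivial A]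
    (G : Type) [AddCommGroup G] [LinearOrder G] [IsOrderedAddMonoid G] :
    ∃ (ι : Type) (𝒰 : Ultrafilter ι) (f : G →+ Filter.Germ (𝒰 : Filter ι) A),
      Function.Injective f ∧ StrictMono f := by
  classical
  obtain ⟨b, hb⟩ := exists_ne (0 : A)
  have ha : (0:A) < |b| := abs_pos.2 hb
  set a := |b| with hadef
  haveI : Nonempty (Finset G) := ⟨∅⟩
  set 𝒰 : Ultrafilter (Finset G) := Ultrafilter.of Filter.atTop with h𝒰
  have h𝒰le : (𝒰 : Filter (Finset G)) ≤ Filter.atTop := Ultrafilter.of_le _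
  choose φ hφker hφpos using fun S : Finset G => exists_phiS (G := G) S
  have hcex : ∀ (S : Finset G) (g : G), ∃ v : {x // x ∈ S} → ℤ,
      (∃ w, piS S w = g) → piS S v = g := by
    intro S g
    by_cases h : ∃ w, piS S w = g
    · obtain ⟨w, hw⟩ := h
      exact ⟨w, fun _ => hw⟩
    · exact ⟨0, fun hcon => absurd hcon h⟩
  choose c hc using hcex
  set raw : G → Finset G → A := fun g S => (φ S (c S g)) • a with hrawdef
  have hrange : ∀ (S : Finset G) (x : G) (hx : x ∈ S), ∃ v, piS S v = x :=
    fun S x hx => ⟨unitvec ⟨x, hx⟩, piS_single S ⟨x, hx⟩⟩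
  have hadd : ∀ x y : G, ∀ S : Finset G, x ∈ S → y ∈ S →
      raw (x + y) S = raw x S + raw y S := by
    intro x y S hx hy
    have h1 := hc S x (hrange S x hx)
    have h2 := hc S y (hrange S y hy)
    have h3 : ∃ v, piS S v = x + y := ⟨unitvec ⟨x, hx⟩ + unitvec ⟨y, hy⟩, by
      rw [map_add, piS_single, piS_single]⟩
    have h4 := hc S (x + y) h3
    have h5 : piS S (c S (x+y) - c S x - c S y) = 0 := by
      rw [map_sub, map_sub, h1, h2, h4]; abel
    have h6 := hφker S _ h5
    rw [map_sub, map_sub] at h6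
    have h7 : φ S (c S (x+y)) = φ S (c S x) + φ S (c S y) := by omega
    show (φ S (c S (x+y))) • a = (φ S (c S x)) • a + (φ S (c S y)) • a
    rw [h7, add_zsmul]
  have hlt : ∀ x y : G, x < y → ∀ S : Finset G, x ∈ S → y ∈ S →
      raw x S < raw y S := by
    intro x y hxy S hx hy
    have h1 := hc S x (hrange S x hx)
    have h2 := hc S y (hrange S y hy)
    have h5 : piS S ((c S y - c S x) - (unitvec ⟨y, hy⟩ - unitvec ⟨x, hx⟩)) = 0 := by
      rw [map_sub, map_sub, map_sub, h1, h2, piS_single, piS_single]; abel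
    have h6 := hφker S _ h5
    rw [map_sub, map_sub] at h6
    have h7 := hφpos S ⟨x, hx⟩ ⟨y, hy⟩ hxy
    have h8 : φ S (c S x) < φ S (c S y) := by omega
    show (φ S (c S x)) • a < (φ S (c S y)) • a
    exact zsmul_lt_zsmul_left ha h8
  have hev : ∀ x y : G, ∀ᶠ S in (𝒰 : Filter (Finset G)), x ∈ S ∧ y ∈ S := by
    intro x y
    have h1 : {S : Finset G | {x, y} ≤ S} ∈ (Filter.atTop : Filter (Finset G)) :=
      Filter.mem_atTop _
    refine Filter.mem_of_superset (h𝒰le h1) ?_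
    intro S hS
    rw [Set.mem_setOf_eq] at hS
    have hS' : ({x, y} : Finset G) ⊆ S := hS
    rw [Finset.insert_subset_iff, Finset.singleton_subset_iff] at hS'
    exact hS'
  set F : G →+ Filter.Germ (𝒰 : Filter (Finset G)) A := AddMonoidHom.mk'
    (fun g => (↑(raw g) : Filter.Germ (𝒰 : Filter (Finset G)) A)) (by
      intro x y
      rw [← Filter.Germ.coe_add]
      exact Filter.Germ.coe_eq.2 ((hev x y).mono fun S hS => by
        rw [Pi.add_apply]
        exact hadd x y S hS.1 hS.2)) with hFdef
  have hmono : StrictMono F := by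
    intro x y hxy
    have hle : F x ≤ F y := by
      rw [hFdef]
      simp only [AddMonoidHom.mk'_apply]
      exact Filter.Germ.coe_le.2 ((hev x y).mono fun S hS => (hlt x y hxy S hS.1 hS.2).le)
    have hne : ¬ (F y ≤ F x) := by
      rw [hFdef]
      simp only [AddMonoidHom.mk'_apply]
      intro hcon
      have h1 : ∀ᶠ S in (𝒰 : Filter (Finset G)), raw y S ≤ raw x S :=
        Filter.Germ.coe_le.1 hcon
      obtain ⟨S, ⟨hxS, hyS⟩, hS⟩ := ((hev x y).and h1).exists
      exact absurd (hlt x y hxy S hxS hyS) (not_lt.2 hS)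
    exact lt_of_le_not_ge hle hne
  exact ⟨Finset G, 𝒰, F, hmono.injective, hmono⟩
end

section
/- A system of linear inequalities L : Fin r → (Fin n → ℤ) is full-dimensional if and only if for every linearly ordered abelian group G the set of solutions {g : Fin n → G | ∀ i, 0 ≤ ∑ j, (L i j) • g j} generates the group Fin n → G as an additive group, i.e. its AddSubgroup.closure equals ⊤. -/
open Finset

/-- A tuple `g` in a (pre)ordered abelian group is a solution of the system of linear
inequalities given by the integer matrix `L` if all the linear forms are nonnegative at `g`. -/
def IsSolution {r n : ℕ} (L : Fin r → Fin n → ℤ) {G : Type*} [AddCommGroup G] [Preorder G]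
    (g : Fin n → G) : Prop :=
  ∀ i : Fin r, 0 ≤ ∑ j, (L i j) • g j

/-- A system of linear inequalities is full-dimensional if no nonzero integer linear form
vanishes on all of its rational solutions. -/
def FullDimensional {r n : ℕ} (L : Fin r → Fin n → ℤ) : Prop :=
  ¬ ∃ a : Fin n → ℤ, a ≠ 0 ∧
      ∀ x : Fin n → ℚ, (∀ i : Fin r, 0 ≤ ∑ j, (L i j : ℚ) * x j) →
        ∑ j, (a j : ℚ) * x j = 0

private lemma den_mul_self (q : ℚ) : (q.den : ℚ) * q = q.num := by
  rw [mul_comm]; exact_mod_cast Rat.mul_den_eq_num q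

private lemma clear_denom {n : ℕ} (x : Fin n → ℚ) :
    ∃ (d : ℕ) (y : Fin n → ℤ), 0 < d ∧ ∀ j, (y j : ℚ) = (d : ℚ) * x j := by
  refine ⟨∏ j, (x j).den, fun j => (x j).num * ∏ k ∈ univ.erase j, ((x k).den : ℤ),
    Finset.prod_pos fun j _ => (x j).pos, fun j => ?_⟩
  have h : (∏ k, ((x k).den : ℚ)) = ((x j).den : ℚ) * ∏ k ∈ univ.erase j, ((x k).den : ℚ) :=
    (Finset.mul_prod_erase _ _ (mem_univ j)).symm
  push_cast
  rw [h, mul_comm (((x j).den : ℚ)), mul_assoc, den_mul_self, mul_comm]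

/-- From full-dimensionality, obtain an integer point where every nonzero row is `≥ 1`
and every row is nonnegative. -/
private lemma exists_pos_point {r n : ℕ} {L : Fin r → Fin n → ℤ} (hL : FullDimensional L) :
    ∃ x₀ : Fin n → ℤ, ∀ i, L i = 0 ∨ 1 ≤ ∑ j, L i j * x₀ j := by
  classical
  set P : Fin r → Prop := fun i => ∃ y : Fin n → ℤ,
      (∀ k, 0 ≤ ∑ j, L k j * y j) ∧ 0 < ∑ j, L i j * y j with hP
  have key : ∀ i : Fin r, L i = 0 ∨ P i := by
    intro i
    by_cases hQ : ∃ x : Fin n → ℚ,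
        (∀ k : Fin r, 0 ≤ ∑ j, (L k j : ℚ) * x j) ∧ 0 < ∑ j, (L i j : ℚ) * x j
    · obtain ⟨x, hx, hxi⟩ := hQ
      obtain ⟨d, y, hd, hy⟩ := clear_denom x
      refine Or.inr ⟨y, fun k => ?_, ?_⟩
      · have h1 : (0:ℚ) ≤ ∑ j, (L k j : ℚ) * (y j : ℚ) := by
          simp only [hy]
          calc (0:ℚ) ≤ (d:ℚ) * ∑ j, (L k j : ℚ) * x j :=
                mul_nonneg (by positivity) (hx k)
          _ = ∑ j, (L k j : ℚ) * ((d:ℚ) * x j) := by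
                rw [Finset.mul_sum]; exact Finset.sum_congr rfl fun j _ => by ring
        exact_mod_cast h1
      · have h1 : (0:ℚ) < ∑ j, (L i j : ℚ) * (y j : ℚ) := by
          simp only [hy]
          calc (0:ℚ) < (d:ℚ) * ∑ j, (L i j : ℚ) * x j :=
                mul_pos (by positivity) hxi
          _ = ∑ j, (L i j : ℚ) * ((d:ℚ) * x j) := by
                rw [Finset.mul_sum]; exact Finset.sum_congr rfl fun j _ => by ring
        exact_mod_cast h1
    · left
      by_contra hne
      exact hL ⟨L i, hne, fun x hx =>
        le_antisymm (not_lt.mp fun h => hQ ⟨x, hx, h⟩) (hx i)⟩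
  let y : Fin r → Fin n → ℤ := fun i => if h : P i then h.choose else 0
  have hy1 : ∀ i k, 0 ≤ ∑ j, L k j * y i j := by
    intro i k
    by_cases h : P i
    · simp only [y, dif_pos h]
      exact h.choose_spec.1 k
    · simp [y, dif_neg h]
  have hy2 : ∀ i, P i → 0 < ∑ j, L i j * y i j := by
    intro i h
    simp only [y, dif_pos h]
    exact h.choose_spec.2
  refine ⟨fun j => ∑ i, y i j, fun i => ?_⟩
  rcases key i with h | h
  · exact Or.inl h
  · right
    have hsum : ∑ j, L i j * (∑ k, y k j) = ∑ k, ∑ j, L i j * y k j := by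
      rw [Finset.sum_comm]
      exact Finset.sum_congr rfl fun j _ => Finset.mul_sum _ _ _
    have hpos : 0 < ∑ k, ∑ j, L i j * y k j :=
      Finset.sum_pos' (fun k _ => hy1 k i) ⟨i, mem_univ i, hy2 i h⟩
    rw [hsum]; omega

/-- A system of linear inequalities is full-dimensional iff for every linearly ordered
abelian group `G` its set of solutions generates `Gⁿ` as a group. -/
theorem fullDimensional_iff_solutions_generate {r n : ℕ} (L : Fin r → Fin n → ℤ) :
    FullDimensional L ↔
      ∀ (G : Type) [AddCommGroup G] [LinearOrder G] [IsOrderedAddMonoid G],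
        AddSubgroup.closure {g : Fin n → G | IsSolution L g} = ⊤ := by
  constructor
  · intro hL G _ _ _
    obtain ⟨x₀, hx₀⟩ := exists_pos_point hL
    rw [eq_top_iff]
    intro g _
    set t : G := ∑ i, |∑ j, L i j • g j| with ht
    have ht0 : 0 ≤ t := Finset.sum_nonneg fun i _ => abs_nonneg _
    have hti : ∀ i, |∑ j, L i j • g j| ≤ t := fun i =>
      Finset.single_le_sum (f := fun k => |∑ j, L k j • g j|) (fun k _ => abs_nonneg _)
        (mem_univ i)
    set s : Fin n → G := fun j => (x₀ j) • t with hs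
    have hcomp : ∀ i, ∑ j, L i j • s j = (∑ j, L i j * x₀ j) • t := by
      intro i
      rw [Finset.sum_smul]
      exact Finset.sum_congr rfl fun j _ => by rw [hs]; exact (mul_smul _ _ _).symm
    have key1 : IsSolution L s := by
      intro i
      rw [hcomp i]
      rcases hx₀ i with h0 | h1
      · simp [show ∀ j, L i j = 0 from fun j => congrFun h0 j]
      · exact zsmul_nonneg ht0 (by omega)
    have key2 : IsSolution L (g + s) := by
      intro i
      have : ∑ j, L i j • (g j + s j) = (∑ j, L i j • g j) + (∑ j, L i j * x₀ j) • t := by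
        rw [← hcomp i, ← Finset.sum_add_distrib]
        exact Finset.sum_congr rfl fun j _ => smul_add _ _ _
      simp only [Pi.add_apply]
      rw [this]
      rcases hx₀ i with h0 | h1
      · simp [show ∀ j, L i j = 0 from fun j => congrFun h0 j]
      · have h2 : t ≤ (∑ j, L i j * x₀ j) • t := by
          calc t = (1:ℤ) • t := (one_zsmul t).symm
          _ ≤ _ := zsmul_le_zsmul_left ht0 h1
        have h3 : -(∑ j, L i j • g j) ≤ (∑ j, L i j * x₀ j) • t :=
          le_trans (le_trans (neg_le_abs _) (hti i)) h2
        rw [add_comm]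
        exact neg_le_iff_add_nonneg.mp h3
    have hg : g = (g + s) - s := by abel
    rw [hg]
    exact AddSubgroup.sub_mem _ (AddSubgroup.subset_closure key2)
      (AddSubgroup.subset_closure key1)
  · intro h hbad
    obtain ⟨a, ha, hva⟩ := hbad
    have hQ := h ℚ
    let φ : (Fin n → ℚ) →+ ℚ :=
      { toFun := fun x => ∑ j, (a j : ℚ) * x j
        map_zero' := by simp
        map_add' := fun x y => by
          simp only [Pi.add_apply, mul_add]
          rw [Finset.sum_add_distrib] }
    have hker : AddSubgroup.closure {g : Fin n → ℚ | IsSolution L g} ≤ φ.ker := by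
      rw [AddSubgroup.closure_le]
      intro x hx
      have hx' : ∀ i : Fin r, 0 ≤ ∑ j, (L i j : ℚ) * x j := by
        intro i
        have := hx i
        simpa [zsmul_eq_mul] using this
      exact hva x hx'
    rw [hQ, top_le_iff] at hker
    have h0 : φ (fun j => (a j : ℚ)) = 0 := by
      have : (fun j => (a j : ℚ)) ∈ φ.ker := hker ▸ AddSubgroup.mem_top _
      exact this
    have hsq : ∑ j, ((a j : ℚ))^2 = 0 := by
      simpa [φ, sq] using h0
    apply ha
    funext j
    have hj : ((a j : ℚ))^2 = 0 :=
      (Finset.sum_eq_zero_iff_of_nonneg fun k _ => sq_nonneg _).mp hsq j (mem_univ j)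
    have : (a j : ℚ) = 0 := by
      exact pow_eq_zero_iff (by norm_num) |>.mp hj
    exact_mod_cast this
end

section
/- Let T be a min–max term datum in n variables. Then there exist m ≥ 1, full-dimensional systems of linear inequalities α_1, …, α_m in n variables, and integer linear forms t_1, …, t_m : Fin n → ℤ such that for every linearly ordered abelian group G: (i) every tuple g : Fin n → G is a solution of at least one α_l, and (ii) whenever g is a solution of α_l, one has T_G(g) = ∑ j, (t_l j) • g j. -/
/-- A min–max term datum in `n` variables: a finite family `u` of integer linear forms
together with a nonempty finite family of nonempty subsets of the index set. -/
structure MinMaxTermDatum (n : ℕ) where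
  p : ℕ
  u : Fin p → Fin n → ℤ
  q : ℕ
  hq : 0 < q
  S : Fin q → Finset (Fin p)
  hS : ∀ i, (S i).Nonempty

/-- The function induced by a min–max term datum on an abelian ℓ-group:
the meet over the family of the joins of the corresponding integer linear forms. -/
def MinMaxTermDatum.eval {n : ℕ} (T : MinMaxTermDatum n) {G : Type*}
    [Lattice G] [AddCommGroup G] (g : Fin n → G) : G :=
  (Finset.univ : Finset (Fin T.q)).inf' ⟨⟨0, T.hq⟩, Finset.mem_univ _⟩
    fun i => (T.S i).sup' (T.hS i) fun j => ∑ l, (T.u j l) • g l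

private lemma zsmul_pos' {G : Type*} [AddCommGroup G] [LinearOrder G] [IsOrderedAddMonoid G] {z : ℤ} {a : G}
    (hz : 0 < z) (ha : 0 < a) : 0 < z • a := by
  have h1 : z • a = z.toNat • a := by
    rw [← natCast_zsmul]; congr 1; exact (Int.toNat_of_nonneg hz.le).symm
  rw [h1]
  exact nsmul_pos ha (by omega)

theorem fmcore (n : ℕ) : ∀ (ι : Type) [Fintype ι] (d : ι → Fin n → ℤ)
    (G : Type) [AddCommGroup G] [LinearOrder G] [IsOrderedAddMonoid G] (g : Fin n → G),
    (∀ i, 0 < ∑ l, d i l • g l) →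
    ∃ x : Fin n → ℚ, ∀ i, 0 < ∑ l, (d i l : ℚ) * x l := by
  induction n with
  | zero =>
    intro ι _ d G _ _ _ g h
    exact ⟨0, fun i => absurd (h i) (by simp)⟩
  | succ n IH =>
    intro ι _ d G _ _ _ g h
    classical
    set c : ι → ℤ := fun i => d i (Fin.last n) with hc
    set e : ι → Fin n → ℤ := fun i l => d i l.castSucc with he
    set g' : Fin n → G := fun l => g l.castSucc with hg'
    set A : ι → G := fun i => ∑ l, e i l • g' l with hA
    have hval : ∀ i, 0 < A i + c i • g (Fin.last n) := by
      intro i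
      have := h i
      rwa [Fin.sum_univ_castSucc] at this
    -- eliminated system
    set ι' : Type := ({ij : ι × ι // 0 < c ij.1 ∧ c ij.2 < 0}) ⊕ {i : ι // c i = 0} with hι'
    set d' : ι' → Fin n → ℤ := Sum.elim
      (fun ij l => (-c ij.1.2) * e ij.1.1 l + c ij.1.1 * e ij.1.2 l)
      (fun i l => e i.1 l) with hd'
    have hsum : ∀ (a b : ι), ∑ l, ((-c b) * e a l + c a * e b l) • g' l
        = (-c b) • A a + c a • A b := by
      intro a b
      rw [hA]
      simp only [Finset.smul_sum, add_smul, mul_smul, Finset.sum_add_distrib]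
    have hyp' : ∀ k : ι', 0 < ∑ l, d' k l • g' l := by
      rintro (⟨⟨a, b⟩, hab⟩ | ⟨a, ha⟩)
      · simp only [hd', Sum.elim_inl]
        rw [hsum a b]
        have ha1 : 0 < c a := hab.1
        have hb1 : c b < 0 := hab.2
        have h1 : 0 < (-c b) • (A a + c a • g (Fin.last n)) :=
          zsmul_pos' (by omega) (hval a)
        have h2 : 0 < c a • (A b + c b • g (Fin.last n)) :=
          zsmul_pos' ha1 (hval b)
        have h3 := add_pos h1 h2
        have key : -c b • (A a + c a • g (Fin.last n)) + c a • (A b + c b • g (Fin.last n))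
            = -c b • A a + c a • A b := by module
        rwa [key] at h3
      · simp only [hd', Sum.elim_inr]
        have := hval a
        rw [ha, zero_smul, add_zero] at this
        exact this
    obtain ⟨x', hx'⟩ := IH ι' d' G g' hyp'
    set B : ι → ℚ := fun i => ∑ l, (e i l : ℚ) * x' l with hB
    have hpair : ∀ a b : ι, 0 < c a → c b < 0 → 0 < (-c b : ℚ) * B a + (c a : ℚ) * B b := by
      intro a b ha hb
      have := hx' (Sum.inl ⟨(a, b), ha, hb⟩)
      simp only [hd', Sum.elim_inl] at this
      rw [hB]
      calc (0:ℚ) < ∑ l, (((-c b) * e a l + c a * e b l : ℤ) : ℚ) * x' l := this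
        _ = (-c b : ℚ) * ∑ l, (e a l : ℚ) * x' l + (c a : ℚ) * ∑ l, (e b l : ℚ) * x' l := by
            push_cast
            rw [Finset.mul_sum, Finset.mul_sum, ← Finset.sum_add_distrib]
            congr 1; funext l; ring
    have hzero : ∀ a : ι, c a = 0 → 0 < B a := by
      intro a ha
      exact hx' (Sum.inr ⟨a, ha⟩)
    -- choose last coordinate
    set lam : ι → ℚ := fun i => -B i / (c i : ℚ) with hlam
    set Lb : Finset ι := Finset.univ.filter (fun i => 0 < c i) with hLb
    set Ub : Finset ι := Finset.univ.filter (fun i => c i < 0) with hUb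
    have hLU : ∀ a ∈ Lb, ∀ b ∈ Ub, lam a < lam b := by
      intro a hma b hmb
      rw [hLb, Finset.mem_filter] at hma
      rw [hUb, Finset.mem_filter] at hmb
      have ha : (0:ℚ) < (c a : ℚ) := by exact_mod_cast hma.2
      have hb : (c b : ℚ) < 0 := by exact_mod_cast hmb.2
      have hp := hpair a b hma.2 hmb.2
      show -B a / (c a : ℚ) < -B b / (c b : ℚ)
      have hrw : -B b / (c b : ℚ) = B b / (-(c b : ℚ)) := by rw [div_neg, neg_div]
      rw [hrw, div_lt_div_iff₀ ha (by linarith)]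
      nlinarith
    set xn : ℚ :=
      if hL : Lb.Nonempty then
        if hU : Ub.Nonempty then (Lb.sup' hL lam + Ub.inf' hU lam) / 2
        else Lb.sup' hL lam + 1
      else if hU : Ub.Nonempty then Ub.inf' hU lam - 1 else 0 with hxn
    have hlow : ∀ a ∈ Lb, lam a < xn := by
      intro a ha
      have hL : Lb.Nonempty := ⟨a, ha⟩
      rw [hxn, dif_pos hL]
      by_cases hU : Ub.Nonempty
      · rw [dif_pos hU]
        have h1 : lam a ≤ Lb.sup' hL lam := Finset.le_sup' lam ha
        have h2 : Lb.sup' hL lam < Ub.inf' hU lam := by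
          rw [Finset.sup'_lt_iff]
          intro b hb
          rw [Finset.lt_inf'_iff]
          intro u hu
          exact hLU b hb u hu
        linarith
      · rw [dif_neg hU]
        have h1 : lam a ≤ Lb.sup' hL lam := Finset.le_sup' lam ha
        linarith
    have hup : ∀ b ∈ Ub, xn < lam b := by
      intro b hb
      have hU : Ub.Nonempty := ⟨b, hb⟩
      rw [hxn]
      by_cases hL : Lb.Nonempty
      · rw [dif_pos hL, dif_pos hU]
        have h1 : Ub.inf' hU lam ≤ lam b := Finset.inf'_le lam hb
        have h2 : Lb.sup' hL lam < Ub.inf' hU lam := by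
          rw [Finset.sup'_lt_iff]
          intro a ha
          rw [Finset.lt_inf'_iff]
          intro u hu
          exact hLU a ha u hu
        linarith
      · rw [dif_neg hL, dif_pos hU]
        have h1 : Ub.inf' hU lam ≤ lam b := Finset.inf'_le lam hb
        linarith
    refine ⟨Fin.snoc x' xn, fun i => ?_⟩
    rw [Fin.sum_univ_castSucc]
    simp only [Fin.snoc_castSucc, Fin.snoc_last]
    have hBi : ∑ l : Fin n, (d i l.castSucc : ℚ) * x' l = B i := rfl
    rw [hBi]
    rcases lt_trichotomy (c i) 0 with hci | hci | hci
    · have hb : i ∈ Ub := by rw [hUb]; simp [hci]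
      have h5 : xn < -B i / (c i : ℚ) := hup i hb
      have hcq : (c i : ℚ) < 0 := by exact_mod_cast hci
      have h2 : (c i : ℚ) * xn > (c i:ℚ) * (-B i / (c i:ℚ)) :=
        mul_lt_mul_of_neg_left h5 hcq
      rw [mul_div_cancel₀ _ (ne_of_lt hcq)] at h2
      have hdc : (d i (Fin.last n) : ℚ) = (c i : ℚ) := rfl
      rw [hdc]
      linarith
    · have := hzero i hci
      have hdi : d i (Fin.last n) = 0 := hci
      have h0 : (d i (Fin.last n) : ℚ) = 0 := by exact_mod_cast hdi
      rw [h0]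
      linarith
    · have hb : i ∈ Lb := by rw [hLb]; simp [hci]
      have h5 : -B i / (c i : ℚ) < xn := hlow i hb
      have hcq : (0:ℚ) < (c i : ℚ) := by exact_mod_cast hci
      have h2 : (c i:ℚ) * (-B i / (c i:ℚ)) < (c i : ℚ) * xn :=
        mul_lt_mul_of_pos_left h5 hcq
      rw [mul_div_cancel₀ _ (ne_of_gt hcq)] at h2
      have hdc : (d i (Fin.last n) : ℚ) = (c i : ℚ) := rfl
      rw [hdc]
      linarith


open Polynomial in
theorem avoid {n : ℕ} (ι : Type) [Fintype ι] (d : ι → Fin n → ℤ) :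
    ∃ y : Fin n → ℚ, ∀ i, d i ≠ 0 → ∑ l, (d i l : ℚ) * y l ≠ 0 := by
  classical
  set P : ι → ℚ[X] := fun i => ∑ l, C ((d i l : ℚ)) * X ^ (l : ℕ) with hP
  have hPne : ∀ i, d i ≠ 0 → P i ≠ 0 := by
    intro i hi
    obtain ⟨l₀, hl₀⟩ : ∃ l₀, d i l₀ ≠ 0 := by
      by_contra hcon
      push_neg at hcon
      exact hi (funext hcon)
    intro hzero
    have hcoeff : (P i).coeff (l₀ : ℕ) = (d i l₀ : ℚ) := by
      rw [hP]
      rw [finset_sum_coeff]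
      rw [Finset.sum_eq_single l₀]
      · simp
      · intro b _ hb
        rw [coeff_C_mul, coeff_X_pow, if_neg (by simpa [Fin.val_eq_val] using Ne.symm hb)]
        ring
      · simp
    rw [hzero] at hcoeff
    simp at hcoeff
    exact hl₀ (by exact_mod_cast hcoeff.symm)
  set bad : Finset ℚ := Finset.univ.biUnion
    (fun i : ι => if d i ≠ 0 then (P i).roots.toFinset else ∅) with hbad
  obtain ⟨t, ht⟩ := Infinite.exists_notMem_finset bad
  refine ⟨fun l => t ^ (l : ℕ), fun i hi => ?_⟩
  have heval : ∑ l, (d i l : ℚ) * t ^ (l : ℕ) = (P i).eval t := by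
    rw [hP, eval_finset_sum]
    simp [eval_C, eval_pow, eval_X]
  rw [heval]
  intro hroot
  apply ht
  rw [hbad, Finset.mem_biUnion]
  refine ⟨i, Finset.mem_univ i, ?_⟩
  rw [if_pos hi, Multiset.mem_toFinset, Polynomial.mem_roots (hPne i hi)]
  exact hroot

theorem realize {n : ℕ} (ι : Type) [Fintype ι] (d : ι → Fin n → ℤ)
    (G : Type) [AddCommGroup G] [LinearOrder G] [IsOrderedAddMonoid G] (g : Fin n → G) :
    ∃ x : Fin n → ℚ,
      (∀ i, 0 < ∑ l, d i l • g l → 0 < ∑ l, (d i l : ℚ) * x l) ∧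
      (∀ i, d i ≠ 0 → ∑ l, (d i l : ℚ) * x l ≠ 0) := by
  classical
  obtain ⟨y, hy⟩ := avoid ι d
  set G' : Type := G ×ₗ ℚ with hG'
  set g₂ : Fin n → G' := fun l => toLex (g l, y l) with hg₂
  have hsum : ∀ i : ι, ∑ l, d i l • g₂ l
      = toLex (∑ l, d i l • g l, ∑ l, (d i l : ℚ) * y l) := by
    intro i
    have : ∀ l, d i l • g₂ l = toLex (d i l • g l, (d i l : ℚ) * y l) := by
      intro l
      rw [hg₂]
      show d i l • toLex ((g l, y l) : G × ℚ) = _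
      rw [show ((d i l : ℚ) * y l) = d i l • y l by rw [zsmul_eq_mul]]
      rfl
    rw [Finset.sum_congr rfl (fun l _ => this l)]
    have hpair : ((∑ l, d i l • g l, ∑ l, (d i l : ℚ) * y l) : G × ℚ)
        = ∑ l, ((d i l • g l, (d i l : ℚ) * y l) : G × ℚ) := by
      apply Prod.ext <;> simp [Prod.fst_sum, Prod.snd_sum]
    rw [hpair]
    induction (Finset.univ : Finset (Fin n)) using Finset.cons_induction with
    | empty => rfl
    | cons a s ha ih => rw [Finset.sum_cons, Finset.sum_cons, ih]; rfl
  have hposC : ∀ i : ι, 0 < ∑ l, d i l • g l → 0 < ∑ l, d i l • g₂ l := by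
    intro i hi
    rw [hsum i]
    show toLex ((0 : G × ℚ)) < _
    rw [Prod.Lex.lt_iff]
    exact Or.inl hi
  have hneC : ∀ i : ι, d i ≠ 0 → ∑ l, d i l • g₂ l ≠ 0 := by
    intro i hi h0
    rw [hsum i] at h0
    have : (∑ l, d i l • g l, ∑ l, (d i l : ℚ) * y l) = ((0 : G), (0 : ℚ)) := by
      exact_mod_cast congrArg ofLex h0
    exact hy i hi (congrArg Prod.snd this)
  set ι' : Type := {i : ι // 0 < ∑ l, d i l • g₂ l} ⊕ {i : ι // ∑ l, d i l • g₂ l < 0}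
    with hι'
  set d' : ι' → Fin n → ℤ := Sum.elim (fun i l => d i.1 l) (fun i l => -(d i.1 l)) with hd'
  have hyp' : ∀ k : ι', 0 < ∑ l, d' k l • g₂ l := by
    rintro (⟨i, hi⟩ | ⟨i, hi⟩)
    · exact hi
    · simp only [hd', Sum.elim_inr, neg_smul]
      rw [Finset.sum_neg_distrib]
      exact neg_pos.mpr hi
  obtain ⟨x, hx⟩ := fmcore n ι' d' G' g₂ hyp'
  refine ⟨x, fun i hi => ?_, fun i hi => ?_⟩
  · exact hx (Sum.inl ⟨i, hposC i hi⟩)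
  · rcases lt_trichotomy (∑ l, d i l • g₂ l) 0 with hlt | heq | hgt
    · have := hx (Sum.inr ⟨i, hlt⟩)
      simp only [hd', Sum.elim_inr] at this
      push_cast at this
      have h2 : 0 < -∑ l, (d i l : ℚ) * x l := by
        calc (0:ℚ) < ∑ l, -(d i l : ℚ) * x l := this
          _ = -∑ l, (d i l : ℚ) * x l := by
              rw [← Finset.sum_neg_distrib]
              exact Finset.sum_congr rfl (fun l _ => by ring)
      intro h0; rw [h0] at h2; simp at h2
    · exact absurd heq (hneC i hi)
    · have := hx (Sum.inl ⟨i, hgt⟩)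
      simp only [hd', Sum.elim_inl] at this
      exact ne_of_gt this

section Aux

variable {n : ℕ}

/-- The system of linear inequalities expressing that `σ i` is a maximizer in `S i` for
each `i` and that `σ c` is a minimizer among the `σ i`. -/
def MinMaxTermDatum.sys (T : MinMaxTermDatum n) (σ : Fin T.q → Fin T.p) (c : Fin T.q) :
    Fin (T.q * T.p + T.q) → Fin n → ℤ :=
  fun k => Sum.elim
    (fun kp : Fin (T.q * T.p) =>
      if (finProdFinEquiv.symm kp).2 ∈ T.S (finProdFinEquiv.symm kp).1 then
        (fun l => T.u (σ (finProdFinEquiv.symm kp).1) l - T.u (finProdFinEquiv.symm kp).2 l)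
      else 0)
    (fun i : Fin T.q => fun l => T.u (σ i) l - T.u (σ c) l)
    (finSumFinEquiv.symm k)

lemma rowval {p : ℕ} (u : Fin p → Fin n → ℤ) (a b : Fin p) {G : Type*} [AddCommGroup G]
    (g : Fin n → G) :
    ∑ l, (u a l - u b l) • g l = (∑ l, u a l • g l) - ∑ l, u b l • g l := by
  rw [← Finset.sum_sub_distrib]
  exact Finset.sum_congr rfl fun l _ => sub_smul _ _ _

lemma sys_sol_iff (T : MinMaxTermDatum n) (σ : Fin T.q → Fin T.p) (c : Fin T.q)
    {G : Type} [AddCommGroup G] [LinearOrder G] [IsOrderedAddMonoid G] (g : Fin n → G) :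
    IsSolution (T.sys σ c) g ↔
      ((∀ i, ∀ j ∈ T.S i, ∑ l, T.u j l • g l ≤ ∑ l, T.u (σ i) l • g l) ∧
       (∀ i, ∑ l, T.u (σ c) l • g l ≤ ∑ l, T.u (σ i) l • g l)) := by
  constructor
  · intro h
    constructor
    · intro i j hj
      have := h (finSumFinEquiv (Sum.inl (finProdFinEquiv (i, j))))
      rw [MinMaxTermDatum.sys] at this
      simp only [Equiv.symm_apply_apply, Sum.elim_inl] at this
      rw [if_pos hj, rowval] at this
      exact sub_nonneg.mp this
    · intro i
      have := h (finSumFinEquiv (Sum.inr i))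
      rw [MinMaxTermDatum.sys] at this
      simp only [Equiv.symm_apply_apply, Sum.elim_inr] at this
      rw [rowval] at this
      exact sub_nonneg.mp this
  · rintro ⟨h1, h2⟩ k
    rw [MinMaxTermDatum.sys]
    rcases hk : finSumFinEquiv.symm k with kp | i
    · rw [Sum.elim_inl]
      by_cases hmem : (finProdFinEquiv.symm kp).2 ∈ T.S (finProdFinEquiv.symm kp).1
      · rw [if_pos hmem, rowval, sub_nonneg]
        exact h1 _ _ hmem
      · rw [if_neg hmem]
        simp
    · rw [Sum.elim_inr, rowval, sub_nonneg]
      exact h2 i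

lemma sys_eval_eq (T : MinMaxTermDatum n) (σ : Fin T.q → Fin T.p) (c : Fin T.q)
    (hmem : ∀ i, σ i ∈ T.S i)
    {G : Type} [AddCommGroup G] [LinearOrder G] [IsOrderedAddMonoid G] (g : Fin n → G)
    (hsol : IsSolution (T.sys σ c) g) :
    T.eval g = ∑ l, T.u (σ c) l • g l := by
  obtain ⟨h1, h2⟩ := (sys_sol_iff T σ c g).1 hsol
  rw [MinMaxTermDatum.eval]
  apply le_antisymm
  · apply Finset.inf'_le_of_le _ (Finset.mem_univ c)
    exact Finset.sup'_le _ _ fun j hj => h1 c j hj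
  · apply Finset.le_inf'
    intro i _
    exact Finset.le_sup'_of_le _ (hmem i) (h2 i)

lemma shift_sum (w : Fin n → ℤ) (x : Fin n → ℚ) (b : Fin n) (d : ℚ) :
    ∑ l, (w l : ℚ) * (x l + if l = b then d else 0)
      = (∑ l, (w l : ℚ) * x l) + (w b : ℚ) * d := by
  classical
  have : ∀ l ∈ Finset.univ, (w l : ℚ) * (x l + if l = b then d else 0)
      = (w l : ℚ) * x l + (if l = b then (w l : ℚ) * d else 0) := by
    intro l _
    split_ifs with h
    · rw [h]; ring
    · ring
  rw [Finset.sum_congr rfl this, Finset.sum_add_distrib,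
    Finset.sum_ite_eq' Finset.univ b (fun l => (w l : ℚ) * d)]
  simp

lemma fulldim_of_point {r : ℕ} (L : Fin r → Fin n → ℤ) (x : Fin n → ℚ)
    (hx : ∀ k, L k = 0 ∨ 0 < ∑ l, (L k l : ℚ) * x l) : FullDimensional L := by
  classical
  rintro ⟨a, ha, hvan⟩
  set val : Fin r → ℚ := fun k => ∑ l, (L k l : ℚ) * x l with hval
  set Mk : Fin r → ℚ := fun k => ∑ l, |(L k l : ℚ)| with hMk
  set R : Finset (Fin r) := Finset.univ.filter (fun k => L k ≠ 0) with hR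
  have hvalpos : ∀ k ∈ R, 0 < val k := by
    intro k hk
    rw [hR, Finset.mem_filter] at hk
    rcases hx k with h | h
    · exact absurd h hk.2
    · exact h
  have hzeroval : ∀ k, L k = 0 → val k = 0 := by
    intro k h
    rw [hval]
    simp [h]
  set δ : ℚ := if hRne : R.Nonempty then (R.inf' hRne val) / (1 + R.sup' hRne Mk) else 1
    with hδ
  have hMknn : ∀ k, 0 ≤ Mk k := fun k => Finset.sum_nonneg fun l _ => abs_nonneg _
  have hden : ∀ hRne : R.Nonempty, (0:ℚ) < 1 + R.sup' hRne Mk := by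
    intro hRne
    obtain ⟨k, hk⟩ := hRne
    have := Finset.le_sup' Mk hk
    have := hMknn k
    linarith
  have hδpos : 0 < δ := by
    rw [hδ]
    split_ifs with hRne
    · apply div_pos _ (hden hRne)
      rw [Finset.lt_inf'_iff]
      exact fun k hk => hvalpos k hk
    · norm_num
  -- x is a solution
  have hsolx : ∀ k, 0 ≤ val k := by
    intro k
    rcases hx k with h | h
    · rw [hzeroval k h]
    · exact h.le
  -- perturbed points are solutions
  have hpert : ∀ b : Fin n, ∀ k, 0 ≤ ∑ l, (L k l : ℚ) * (x l + if l = b then δ else 0) := by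
    intro b k
    rw [shift_sum]
    show 0 ≤ val k + (L k b : ℚ) * δ
    rcases hx k with h | h
    · have hvk : val k = 0 := hzeroval k h
      rw [hvk, h]
      simp
    · have hLk : L k ≠ 0 := by
        intro h0
        have hv : (0:ℚ) < val k := h
        rw [hzeroval k h0] at hv
        exact lt_irrefl _ hv
      have hkR : k ∈ R := by rw [hR, Finset.mem_filter]; exact ⟨Finset.mem_univ _, hLk⟩
      have hRne : R.Nonempty := ⟨k, hkR⟩
      have hδle : δ = R.inf' hRne val / (1 + R.sup' hRne Mk) := by rw [hδ, dif_pos hRne]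
      have e1 : δ * (1 + R.sup' hRne Mk) = R.inf' hRne val := by
        rw [hδle, div_mul_cancel₀ _ (ne_of_gt (hden hRne))]
      have h1 : |(L k b : ℚ)| ≤ Mk k :=
        Finset.single_le_sum (f := fun l => |(L k l : ℚ)|) (fun _ _ => abs_nonneg _)
          (Finset.mem_univ b)
      have h2 : Mk k ≤ R.sup' hRne Mk := Finset.le_sup' Mk hkR
      have h3 : R.inf' hRne val ≤ val k := Finset.inf'_le val hkR
      have habs : |(L k b : ℚ)| * δ ≤ R.sup' hRne Mk * δ :=
        mul_le_mul_of_nonneg_right (le_trans h1 h2) hδpos.le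
      have h4 : -(|(L k b : ℚ)| * δ) ≤ (L k b : ℚ) * δ := by
        have := neg_abs_le (L k b : ℚ)
        nlinarith
      nlinarith
  have h0 := hvan x hsolx
  have hb : ∀ b : Fin n, (a b : ℚ) = 0 := by
    intro b
    have h1 := hvan _ (hpert b)
    rw [shift_sum, h0] at h1
    have h2 : (a b : ℚ) * δ = 0 := by linarith
    rcases mul_eq_zero.1 h2 with h | h
    · exact h
    · exact absurd h (ne_of_gt hδpos)
  apply ha
  funext j
  simp only [Pi.zero_apply]
  exact_mod_cast hb j

lemma sys_cover (T : MinMaxTermDatum n) (G : Type) [AddCommGroup G] [LinearOrder G] [IsOrderedAddMonoid G]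
    (g : Fin n → G) :
    ∃ (σ : Fin T.q → Fin T.p) (c : Fin T.q), (∀ i, σ i ∈ T.S i) ∧
      IsSolution (T.sys σ c) g ∧ FullDimensional (T.sys σ c) := by
  classical
  obtain ⟨x, hx1, hx2⟩ := realize (Fin T.p × Fin T.p)
    (fun jj l => T.u jj.1 l - T.u jj.2 l) G g
  set Fx : Fin T.p → ℚ := fun j => ∑ l, (T.u j l : ℚ) * x l with hFx
  have hFxd : ∀ a b : Fin T.p, ∑ l, ((T.u a l - T.u b l : ℤ) : ℚ) * x l = Fx a - Fx b := by
    intro a b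
    rw [hFx, ← Finset.sum_sub_distrib]
    exact Finset.sum_congr rfl fun l _ => by push_cast; ring
  have hsel : ∀ i, ∃ j ∈ T.S i, ∀ j' ∈ T.S i, Fx j' ≤ Fx j := fun i =>
    Finset.exists_max_image (T.S i) Fx (T.hS i)
  choose σ hσmem hσmax using hsel
  obtain ⟨c, -, hcmin⟩ := Finset.exists_min_image Finset.univ (fun i => Fx (σ i))
    ⟨⟨0, T.hq⟩, Finset.mem_univ _⟩
  have hrow : ∀ k, T.sys σ c k = 0 ∨
      ∃ a b : Fin T.p, T.sys σ c k = (fun l => T.u a l - T.u b l) ∧ Fx b ≤ Fx a := by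
    intro k
    rw [MinMaxTermDatum.sys]
    rcases hk : finSumFinEquiv.symm k with kp | i
    · rw [Sum.elim_inl]
      by_cases hmem : (finProdFinEquiv.symm kp).2 ∈ T.S (finProdFinEquiv.symm kp).1
      · rw [if_pos hmem]
        exact Or.inr ⟨_, _, rfl, hσmax _ _ hmem⟩
      · rw [if_neg hmem]; exact Or.inl rfl
    · rw [Sum.elim_inr]
      exact Or.inr ⟨_, _, rfl, hcmin i (Finset.mem_univ i)⟩
  refine ⟨σ, c, hσmem, ?_, ?_⟩
  · intro k
    rcases hrow k with h | ⟨a, b, heq, hle⟩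
    · rw [h]; simp
    · rw [heq, rowval, sub_nonneg]
      by_contra hcon
      push_neg at hcon
      have hpos : 0 < ∑ l, (T.u b l - T.u a l) • g l := by
        rw [rowval]; exact sub_pos.mpr hcon
      have := hx1 (b, a) hpos
      rw [hFxd b a] at this
      linarith
  · apply fulldim_of_point _ x
    intro k
    rcases hrow k with h | ⟨a, b, heq, hle⟩
    · exact Or.inl h
    · by_cases hz : (fun l => T.u a l - T.u b l) = (0 : Fin n → ℤ)
      · rw [heq, hz]
        exact Or.inl rfl
      · right
        rw [heq]
        have hge : (0:ℚ) ≤ ∑ l, ((T.u a l - T.u b l : ℤ) : ℚ) * x l := by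
          rw [hFxd a b]; linarith
        have hne : ∑ l, ((T.u a l - T.u b l : ℤ) : ℚ) * x l ≠ 0 := hx2 (a, b) hz
        exact lt_of_le_of_ne hge (Ne.symm hne)

end Aux

/-- Every min–max term is piecewise linear: there are finitely many full-dimensional
systems of linear inequalities covering every tuple in every linearly ordered abelian
group, on each of which the term agrees with an integer linear form. -/
theorem minMaxTerm_piecewise_linear {n : ℕ} (T : MinMaxTermDatum n) :
    ∃ m : ℕ, 0 < m ∧
      ∃ (r : Fin m → ℕ) (α : (l : Fin m) → Fin (r l) → Fin n → ℤ)
        (t : Fin m → Fin n → ℤ),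
        (∀ l : Fin m, FullDimensional (α l)) ∧
        ∀ (G : Type) [AddCommGroup G] [LinearOrder G] [IsOrderedAddMonoid G] (g : Fin n → G),
          (∃ l : Fin m, IsSolution (α l) g) ∧
          ∀ l : Fin m, IsSolution (α l) g → T.eval g = ∑ j, (t l j) • g j := by
  classical
  letI V : Type := {v : (Fin T.q → Fin T.p) × Fin T.q //
    (∀ i, v.1 i ∈ T.S i) ∧ FullDimensional (T.sys v.1 v.2)}
  letI : Fintype V := Fintype.ofFinite V
  have hVne : Nonempty V := by
    obtain ⟨σ, c, hmem, hsol, hfd⟩ := sys_cover T ℚ (fun _ => 0)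
    exact ⟨⟨(σ, c), hmem, hfd⟩⟩
  refine ⟨Fintype.card V, Fintype.card_pos_iff.mpr hVne, fun _ => T.q * T.p + T.q,
    fun l => T.sys (((Fintype.equivFin V).symm l).1.1) (((Fintype.equivFin V).symm l).1.2),
    fun l => T.u ((((Fintype.equivFin V).symm l).1.1) (((Fintype.equivFin V).symm l).1.2)),
    fun l => (((Fintype.equivFin V).symm l).2).2, fun G _ _ _ g => ⟨?_, ?_⟩⟩
  · obtain ⟨σ, c, hmem, hsol, hfd⟩ := sys_cover T G g
    exact ⟨Fintype.equivFin V ⟨(σ, c), hmem, hfd⟩, by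
      simpa only [Equiv.symm_apply_apply] using hsol⟩
  · intro l hsol
    exact sys_eval_eq T _ _ (((Fintype.equivFin V).symm l).2).1 g hsol
end

section
/- Let G be a linearly ordered abelian group, k a positive integer, α a full-dimensional system of linear inequalities in n variables, and t : Fin n → ℤ an integer linear form. If for every solution g : Fin n → G of α there exists h ∈ G with k • h = ∑ j, (t j) • g j, then for every tuple g : Fin n → G (solution or not) there exists h ∈ G with k • h = ∑ j, (t j) • g j. -/
/-- If the value of an integer linear form `t` is divisible by `k` at every solution of a
full-dimensional system of linear inequalities in a linearly ordered abelian group `G`,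
then it is divisible by `k` at every tuple of `G`. -/
theorem divisibility_on_solutions_extends {r n : ℕ} (G : Type) [AddCommGroup G] [LinearOrder G] [IsOrderedAddMonoid G]
    (k : ℕ) (hk : 0 < k) (α : Fin r → Fin n → ℤ) (hα : FullDimensional α) (t : Fin n → ℤ)
    (hdiv : ∀ g : Fin n → G, IsSolution α g → ∃ h : G, k • h = ∑ j, (t j) • g j) :
    ∀ g : Fin n → G, ∃ h : G, k • h = ∑ j, (t j) • g j := by
  -- Step 1: for every i, find a rational solution, positive on row i when α i ≠ 0
  have key : ∀ i : Fin r, ∃ x : Fin n → ℚ,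
      (∀ i', 0 ≤ ∑ j, (α i' j : ℚ) * x j) ∧
      (α i ≠ 0 → 0 < ∑ j, (α i j : ℚ) * x j) := by
    intro i
    by_cases hi : α i = 0
    · exact ⟨0, by simp, fun h => absurd hi h⟩
    · by_contra hcon
      push_neg at hcon
      apply hα
      refine ⟨α i, hi, fun x hx => ?_⟩
      have h1 := hx i
      have h2 := (hcon x hx).2
      linarith
  choose X hX1 hX2 using key
  set x : Fin n → ℚ := fun j => ∑ i, X i j with hxdef
  have hxsol : ∀ i', 0 ≤ ∑ j, (α i' j : ℚ) * x j := by
    intro i'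
    have heq : ∑ j, (α i' j : ℚ) * x j = ∑ i, ∑ j, (α i' j : ℚ) * X i j := by
      simp only [hxdef, Finset.mul_sum]
      rw [Finset.sum_comm]
    rw [heq]
    exact Finset.sum_nonneg fun i _ => hX1 i i'
  have hxpos : ∀ i, α i ≠ 0 → 0 < ∑ j, (α i j : ℚ) * x j := by
    intro i hi
    have heq : ∑ j, (α i j : ℚ) * x j = ∑ i', ∑ j, (α i j : ℚ) * X i' j := by
      simp only [hxdef, Finset.mul_sum]
      rw [Finset.sum_comm]
    rw [heq]
    have h1 := Finset.single_le_sum (f := fun i' => ∑ j, (α i j : ℚ) * X i' j)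
      (fun i' _ => hX1 i' i) (Finset.mem_univ i)
    have h2 := hX2 i hi
    linarith
  -- Step 2: clear denominators to get an integer vector w
  set N : ℕ := ∏ j, (x j).den with hNdef
  have hNpos : 0 < N := Finset.prod_pos fun j _ => (x j).pos
  set w : Fin n → ℤ := fun j => (N / (x j).den : ℕ) * (x j).num with hwdef
  have hw : ∀ j, (w j : ℚ) = N * x j := by
    intro j
    have hd : (x j).den ∣ N := Finset.dvd_prod_of_mem _ (Finset.mem_univ j)
    have h1 : ((N / (x j).den : ℕ) : ℚ) * ((x j).den : ℚ) = (N : ℚ) := by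
      rw [← Nat.cast_mul, Nat.div_mul_cancel hd]
    have hden0 : ((x j).den : ℚ) ≠ 0 := by
      exact_mod_cast (x j).den_nz
    have h2 : ((x j).num : ℚ) = x j * ((x j).den : ℚ) :=
      (div_eq_iff hden0).mp (Rat.num_div_den (x j))
    have h3 : (w j : ℚ) = ((N / (x j).den : ℕ) : ℚ) * ((x j).num : ℚ) := by
      simp only [hwdef, Int.cast_mul, Int.cast_natCast]
    rw [h3, h2, ← mul_assoc, mul_comm (((N / (x j).den : ℕ) : ℚ)) (x j), mul_assoc, h1]
    ring
  have hcast : ∀ i, ((∑ j, α i j * w j : ℤ) : ℚ) = N * ∑ j, (α i j : ℚ) * x j := by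
    intro i
    push_cast
    rw [Finset.mul_sum]
    refine Finset.sum_congr rfl fun j _ => ?_
    rw [hw j]; ring
  have hwnn : ∀ i, 0 ≤ ∑ j, α i j * w j := by
    intro i
    have h0 : (0 : ℚ) ≤ ((∑ j, α i j * w j : ℤ) : ℚ) := by
      rw [hcast i]
      have : (0:ℚ) ≤ (N:ℚ) := by positivity
      exact mul_nonneg this (hxsol i)
    exact_mod_cast h0
  have hwpos : ∀ i, α i ≠ 0 → 1 ≤ ∑ j, α i j * w j := by
    intro i hi
    have h0 : (0 : ℚ) < ((∑ j, α i j * w j : ℤ) : ℚ) := by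
      rw [hcast i]
      have hN : (0:ℚ) < (N:ℚ) := by exact_mod_cast hNpos
      exact mul_pos hN (hxpos i hi)
    have : (0:ℤ) < ∑ j, α i j * w j := by exact_mod_cast h0
    omega
  -- Step 3: given g, build a solution g + w • c
  intro g
  set s : Fin r → G := fun i => ∑ j, α i j • g j with hsdef
  set c : G := ∑ i, |s i| with hcdef
  have hc0 : 0 ≤ c := Finset.sum_nonneg fun i _ => abs_nonneg _
  have hci : ∀ i, -(s i) ≤ c := by
    intro i
    have h1 : |s i| ≤ c := Finset.single_le_sum (f := fun i => |s i|)
      (fun i _ => abs_nonneg _) (Finset.mem_univ i)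
    have h2 : -(s i) ≤ |s i| := neg_le_abs _
    exact h2.trans h1
  -- expansion lemma
  have hexp : ∀ v : Fin n → ℤ, ∑ j, v j • (g j + w j • c)
      = (∑ j, v j • g j) + (∑ j, v j * w j) • c := by
    intro v
    rw [Finset.sum_smul, ← Finset.sum_add_distrib]
    refine Finset.sum_congr rfl fun j _ => ?_
    rw [smul_add, smul_smul]
  have hsol1 : IsSolution α (fun j => g j + w j • c) := by
    intro i
    rw [hexp (α i)]
    by_cases hi : α i = 0
    · have hs0 : s i = 0 := by
        simp only [hsdef]
        refine Finset.sum_eq_zero fun j _ => ?_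
        rw [show α i j = 0 from congrFun hi j, zero_smul]
      have hM0 : ∑ j, α i j * w j = 0 := by
        refine Finset.sum_eq_zero fun j _ => ?_
        rw [show α i j = 0 from congrFun hi j, zero_mul]
      rw [show (∑ j, α i j • g j) = s i from rfl, hs0, hM0, zero_smul, add_zero]
    · have hM : 1 ≤ ∑ j, α i j * w j := hwpos i hi
      have h1 : c ≤ (∑ j, α i j * w j) • c := by
        calc c = (1:ℤ) • c := (one_smul _ _).symm
        _ ≤ (∑ j, α i j * w j) • c := zsmul_le_zsmul_left hc0 hM
      have h2 : -(s i) ≤ (∑ j, α i j * w j) • c := (hci i).trans h1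
      have h3 : 0 ≤ s i + (∑ j, α i j * w j) • c := by
        rw [← add_neg_cancel (s i)]
        exact add_le_add_right h2 (s i)
      exact h3
  have hsol2 : IsSolution α (fun j => w j • c) := by
    intro i
    have heq : ∑ j, α i j • (w j • c) = (∑ j, α i j * w j) • c := by
      rw [Finset.sum_smul]
      exact Finset.sum_congr rfl fun j _ => smul_smul _ _ _
    rw [heq]
    exact zsmul_nonneg hc0 (hwnn i)
  obtain ⟨h1, hh1⟩ := hdiv _ hsol1
  obtain ⟨h2, hh2⟩ := hdiv _ hsol2
  refine ⟨h1 - h2, ?_⟩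
  rw [smul_sub, hh1, hh2, hexp t]
  have heq : ∑ j, t j • (w j • c) = (∑ j, t j * w j) • c := by
    rw [Finset.sum_smul]
    exact Finset.sum_congr rfl fun j _ => smul_smul _ _ _
  rw [heq]
  abel
end

section
/- Let G be a linearly ordered abelian group, k a positive integer, and a : Fin m → Fin n → ℤ a matrix of integers. Let d be the greatest common divisor of k together with all the entries a j i, and write k = d * k'. If for every j : Fin m and every tuple g : Fin n → G there exists h ∈ G with k • h = ∑ i, (a j i) • g i, then every element of G is divisible by k', i.e. for every x ∈ G there exists h ∈ G with k' • h = x. -/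
/-- Let `k > 0` and let `a` be an integer matrix.  Let `d` be the gcd of `k` together with
all entries of `a`, and `k' := k / d` (so `k = d * k'`).  If in a linearly ordered abelian
group `G` every value `∑ i, a j i • g i` of one of the rows is divisible by `k`, then every
element of `G` is divisible by `k'`. -/
theorem divisible_by_quotient_gcd {m n : ℕ} (G : Type) [AddCommGroup G] [LinearOrder G] [IsOrderedAddMonoid G]
    (k : ℕ) (hk : 0 < k) (a : Fin m → Fin n → ℤ)
    (hdiv : ∀ (j : Fin m) (g : Fin n → G), ∃ h : G, k • h = ∑ i, (a j i) • g i) :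
    ∀ x : G, ∃ h : G,
      (k / Nat.gcd k ((Finset.univ : Finset (Fin m × Fin n)).gcd
        fun ji => (a ji.1 ji.2).natAbs)) • h = x := by
  intro x
  set f : Fin m × Fin n → ℕ := fun ji => (a ji.1 ji.2).natAbs with hf
  set D := (Finset.univ : Finset (Fin m × Fin n)).gcd f with hD
  set d := Nat.gcd k D with hd
  -- the set of coefficients c such that c • x is divisible by k is a subgroup of ℤ
  let H : AddSubgroup ℤ :=
    { carrier := {c | ∃ h : G, (k : ℤ) • h = c • x}
      zero_mem' := ⟨0, by simp⟩
      add_mem' := by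
        rintro c1 c2 ⟨h1, e1⟩ ⟨h2, e2⟩
        exact ⟨h1 + h2, by rw [smul_add, e1, e2, ← add_smul]⟩
      neg_mem' := by
        rintro c ⟨h, e⟩
        exact ⟨-h, by rw [smul_neg, e, neg_smul]⟩ }
  have hmem : ∀ c : ℤ, c ∈ H ↔ ∃ h : G, (k : ℤ) • h = c • x := fun c => Iff.rfl
  have hk_mem : ((k : ℕ) : ℤ) ∈ H := ⟨x, rfl⟩
  have ha_mem : ∀ ji : Fin m × Fin n, a ji.1 ji.2 ∈ H := by
    rintro ⟨j, i⟩
    obtain ⟨h, e⟩ := hdiv j (fun i' => if i' = i then x else 0)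
    refine ⟨h, ?_⟩
    rw [natCast_zsmul, e]
    simp [apply_ite, Finset.sum_ite_eq']
  have hgcd : ∀ p q : ℕ, (p : ℤ) ∈ H → (q : ℤ) ∈ H → ((Nat.gcd p q : ℕ) : ℤ) ∈ H := by
    intro p q hp hq
    have : ((Nat.gcd p q : ℕ) : ℤ) = (p : ℤ) * Int.gcdA p q + (q : ℤ) * Int.gcdB p q := by
      have := Int.gcd_eq_gcd_ab (p : ℤ) (q : ℤ)
      simpa [Int.gcd_natCast_natCast] using this
    rw [this]
    refine H.add_mem ?_ ?_
    · simpa [mul_comm, zsmul_eq_mul] using H.zsmul_mem hp (Int.gcdA p q)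
    · simpa [mul_comm, zsmul_eq_mul] using H.zsmul_mem hq (Int.gcdB p q)
  have hnat_mem : ∀ ji : Fin m × Fin n, ((f ji : ℕ) : ℤ) ∈ H := by
    intro ji
    rcases Int.natAbs_eq (a ji.1 ji.2) with h | h
    · rw [hf]; exact h ▸ ha_mem ji
    · rw [hf]
      have := H.neg_mem (ha_mem ji)
      rw [h] at this
      simpa using this
  have hD_mem : ∀ s : Finset (Fin m × Fin n), ((s.gcd f : ℕ) : ℤ) ∈ H := by
    intro s
    induction s using Finset.induction_on with
    | empty => simpa using H.zero_mem
    | insert b s hx ih =>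
        rw [Finset.gcd_insert]
        have : GCDMonoid.gcd (f b) (s.gcd f) = Nat.gcd (f b) (s.gcd f) := rfl
        rw [this]
        exact hgcd _ _ (hnat_mem b) ih
  have hd_mem : ((d : ℕ) : ℤ) ∈ H := hgcd k D hk_mem (hD_mem _)
  obtain ⟨h, e⟩ := hd_mem
  refine ⟨h, ?_⟩
  have hdk : d * (k / d) = k := Nat.mul_div_cancel' (Nat.gcd_dvd_left k D)
  have hd0 : (d : ℤ) ≠ 0 := by
    exact_mod_cast (Nat.gcd_pos_of_pos_left D hk).ne'
  have hcast : (k : ℤ) = (d : ℤ) * ((k / d : ℕ) : ℤ) := by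
    rw [← Nat.cast_mul, hdk]
  rw [hcast, mul_smul] at e
  have := zsmul_right_injective (G := G) hd0 e
  rw [natCast_zsmul] at this
  exact this
end

section
/- Let G be a linearly ordered abelian group and let D be an additive subgroup of G that is divisible (for every positive integer n and every d ∈ D there exists e ∈ D with n • e = d). If G satisfies an EFD-system φ in the language 𝓛 of ℓ-groups, then D, with its induced linearly ordered abelian group structure (hence the induced 𝓛-structure, where the lattice operations are max and min), also satisfies φ. -/
open FirstOrder Language

/-- The binary function symbols of the language of ℓ-groups: `+`, `∨`, `∧`. -/
inductive LGrpBin : Type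
  | add : LGrpBin
  | join : LGrpBin
  | meet : LGrpBin

/-- Function symbols of the language of ℓ-groups: a constant `0`, a unary `-`,
and binary `+`, `∨`, `∧`. -/
def LGrpFunc : ℕ → Type
  | 0 => Unit
  | 1 => Unit
  | 2 => LGrpBin
  | _ => Empty

/-- The first-order language of (abelian) ℓ-groups. -/
def LGrpLang : FirstOrder.Language :=
  ⟨LGrpFunc, fun _ => Empty⟩

/-- The evident `LGrpLang`-structure on any abelian ℓ-group. -/
instance lgrpStructure (G : Type*) [Lattice G] [AddCommGroup G] :
    LGrpLang.Structure G where
  funMap {n} f x :=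
    match n, f, x with
    | 0, _, _ => 0
    | 1, _, x => -(x 0)
    | 2, LGrpBin.add, x => x 0 + x 1
    | 2, LGrpBin.join, x => x 0 ⊔ x 1
    | 2, LGrpBin.meet, x => x 0 ⊓ x 1
    | (_+3), f, _ => f.elim
  RelMap {_} r := r.elim

/-- An EFD-system in a language `L`: data for an EFD-sentence
`∀ x_1 … x_n ∃! z_1 … z_m, ⋀_{i<r} s_i(x̄,z̄) = t_i(x̄,z̄)` with `m, r ≥ 1`. -/
structure EFDSystem (L : FirstOrder.Language) where
  n : ℕ
  m : ℕ
  r : ℕ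
  hm : 0 < m
  hr : 0 < r
  lhs : Fin r → L.Term (Fin n ⊕ Fin m)
  rhs : Fin r → L.Term (Fin n ⊕ Fin m)

/-- A structure `G` satisfies an EFD-system if for every tuple `x` there is exactly one
tuple `z` solving all the equations. -/
def EFDSystem.Satisfies {L : FirstOrder.Language} (φ : EFDSystem L)
    (G : Type*) [L.Structure G] : Prop :=
  ∀ x : Fin φ.n → G, ∃! z : Fin φ.m → G, ∀ i : Fin φ.r,
    Term.realize (Sum.elim x z) (φ.lhs i) = Term.realize (Sum.elim x z) (φ.rhs i)


section FunMap

variable {H : Type*} [Lattice H] [AddCommGroup H]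

lemma funMap_zero (f : LGrpLang.Functions 0) (x : Fin 0 → H) :
    @Structure.funMap LGrpLang H (lgrpStructure H) 0 f x = (0 : H) := rfl

lemma funMap_neg (f : LGrpLang.Functions 1) (x : Fin 1 → H) :
    @Structure.funMap LGrpLang H (lgrpStructure H) 1 f x = -(x 0) := rfl

lemma funMap_add (x : Fin 2 → H) :
    @Structure.funMap LGrpLang H (lgrpStructure H) 2 LGrpBin.add x = x 0 + x 1 := rfl

lemma funMap_join (x : Fin 2 → H) :
    @Structure.funMap LGrpLang H (lgrpStructure H) 2 LGrpBin.join x = x 0 ⊔ x 1 := rfl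

lemma funMap_meet (x : Fin 2 → H) :
    @Structure.funMap LGrpLang H (lgrpStructure H) 2 LGrpBin.meet x = x 0 ⊓ x 1 := rfl

end FunMap

section LemC

variable {G : Type*} [AddCommGroup G] [LinearOrder G] [IsOrderedAddMonoid G]

private lemma cons_mono {M₁ M K : ℕ} {g ε ε₁ : G} (hg : 0 ≤ g) (hM : M₁ ≤ M) (hε : ε ≤ ε₁)
    (h : M • g ≤ K • ε) : M₁ • g ≤ K • ε₁ :=
  le_trans (nsmul_le_nsmul_left hg hM) (le_trans h (nsmul_le_nsmul_right hε K))

private lemma perturb_le {G : Type*} [AddCommGroup G] [LinearOrder G] [IsOrderedAddMonoid G] {A B : G} {d₁ d₂ : ℤ}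
    {K : ℕ} {g : G} (key : (d₁ - d₂) • g ≤ K • (B - A)) :
    K • A + d₁ • g ≤ K • B + d₂ • g := by
  have e1 : K • A + d₁ • g = (K • B + d₂ • g) + ((d₁ - d₂) • g - K • (B - A)) := by
    rw [sub_zsmul, nsmul_sub]; abel
  rw [e1]
  simpa using sub_nonpos.2 key

/-- Key linearization lemma: an ℓ-group term is, at a given base point `a` and along a
given integer direction `v`, given by a single integer linear form, uniformly in
positive scalings of the base point, as long as the perturbation is small compared
to the scaling. -/
private lemma lemmaC {α : Type*} [Fintype α] [DecidableEq α] {p : G} (hp : 0 < p)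
    (t : LGrpLang.Term α) (a : α → G) (v : α → ℤ) :
    ∃ (c : α → ℤ) (M : ℕ) (ε : G), 0 < ε ∧
      Term.realize a t = ∑ j, c j • a j ∧
      ∀ (K : ℕ) (g : G), 0 ≤ g → M • g ≤ K • ε →
        Term.realize (fun j => K • a j + v j • g) t
          = K • (∑ j, c j • a j) + (∑ j, c j * v j) • g := by
  induction t with
  | var i =>
      refine ⟨fun j => if j = i then 1 else 0, 0, p, hp, ?_, ?_⟩
      · simp [Term.realize]
      · intro K g _ _
        simp [Term.realize, ite_smul, ite_mul]
  | @func l f ts ih =>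
      exact match l, f, ts, ih with
      | 0, _, ts, ih => by
          refine ⟨0, 0, p, hp, ?_, ?_⟩
          · simp [Term.realize, funMap_zero]
          · intro K g _ _
            simp [Term.realize, funMap_zero]
      | 1, _, ts, ih => by
          obtain ⟨c, M, ε, hε, hb, hper⟩ := ih 0
          refine ⟨-c, M, ε, hε, ?_, ?_⟩
          · simp only [Term.realize, funMap_neg]
            rw [hb]
            simp [neg_zsmul]
          · intro K g hg h
            simp only [Term.realize, funMap_neg]
            rw [hper K g hg h]
            simp only [neg_zsmul, neg_mul, smul_neg, neg_add, Pi.neg_apply,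
              Finset.sum_neg_distrib]
      | 2, LGrpBin.add, ts, ih => by
          obtain ⟨c₁, M₁, ε₁, hε₁, hb₁, hp₁⟩ := ih 0
          obtain ⟨c₂, M₂, ε₂, hε₂, hb₂, hp₂⟩ := ih 1
          refine ⟨c₁ + c₂, M₁ ⊔ M₂, ε₁ ⊓ ε₂, lt_min hε₁ hε₂, ?_, ?_⟩
          · simp only [Term.realize, funMap_add]
            rw [hb₁, hb₂]
            simp [add_zsmul, Finset.sum_add_distrib]
          · intro K g hg h
            simp only [Term.realize, funMap_add]
            rw [hp₁ K g hg (cons_mono hg le_sup_left inf_le_left h),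
              hp₂ K g hg (cons_mono hg le_sup_right inf_le_right h)]
            simp only [Pi.add_apply, add_zsmul, add_mul, Finset.sum_add_distrib, smul_add,
              add_smul]
            abel
      | 2, LGrpBin.join, ts, ih => by
          obtain ⟨c₁, M₁, ε₁, hε₁, hb₁, hp₁⟩ := ih 0
          obtain ⟨c₂, M₂, ε₂, hε₂, hb₂, hp₂⟩ := ih 1
          rcases lt_trichotomy (∑ j, c₁ j • a j) (∑ j, c₂ j • a j) with hAB | hAB | hAB
          · refine ⟨c₂, M₁ ⊔ M₂ ⊔ ((∑ j, c₁ j * v j) - ∑ j, c₂ j * v j).natAbs,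
              ε₁ ⊓ ε₂ ⊓ ((∑ j, c₂ j • a j) - ∑ j, c₁ j • a j),
              lt_min (lt_min hε₁ hε₂) (sub_pos.2 hAB), ?_, ?_⟩
            · simp only [Term.realize, funMap_join]
              rw [hb₁, hb₂]
              exact sup_eq_right.2 hAB.le
            · intro K g hg h
              simp only [Term.realize, funMap_join]
              rw [hp₁ K g hg (cons_mono hg (le_sup_of_le_left le_sup_left) (inf_le_left.trans inf_le_left) h),
                hp₂ K g hg (cons_mono hg (le_sup_of_le_left le_sup_right) (inf_le_left.trans inf_le_right) h)]
              have key : ((∑ j, c₁ j * v j) - ∑ j, c₂ j * v j) • g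
                  ≤ K • ((∑ j, c₂ j • a j) - ∑ j, c₁ j • a j) := by
                refine le_trans (zsmul_le_zsmul_left hg (Int.le_natAbs)) ?_
                rw [natCast_zsmul]
                exact cons_mono hg le_sup_right inf_le_right h
              exact sup_eq_right.2 (perturb_le key)
          · rcases le_total (∑ j, c₁ j * v j) (∑ j, c₂ j * v j) with hd | hd
            · refine ⟨c₂, M₁ ⊔ M₂, ε₁ ⊓ ε₂, lt_min hε₁ hε₂, ?_, ?_⟩
              · simp only [Term.realize, funMap_join]
                rw [hb₁, hb₂, hAB, sup_idem]
              · intro K g hg h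
                simp only [Term.realize, funMap_join]
                rw [hp₁ K g hg (cons_mono hg le_sup_left inf_le_left h),
                  hp₂ K g hg (cons_mono hg le_sup_right inf_le_right h), hAB]
                exact sup_eq_right.2 (add_le_add_right (zsmul_le_zsmul_left hg hd) _)
            · refine ⟨c₁, M₁ ⊔ M₂, ε₁ ⊓ ε₂, lt_min hε₁ hε₂, ?_, ?_⟩
              · simp only [Term.realize, funMap_join]
                rw [hb₁, hb₂, hAB, sup_idem]
              · intro K g hg h
                simp only [Term.realize, funMap_join]
                rw [hp₁ K g hg (cons_mono hg le_sup_left inf_le_left h),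
                  hp₂ K g hg (cons_mono hg le_sup_right inf_le_right h), hAB]
                exact sup_eq_left.2 (add_le_add_right (zsmul_le_zsmul_left hg hd) _)
          · refine ⟨c₁, M₁ ⊔ M₂ ⊔ ((∑ j, c₂ j * v j) - ∑ j, c₁ j * v j).natAbs,
              ε₁ ⊓ ε₂ ⊓ ((∑ j, c₁ j • a j) - ∑ j, c₂ j • a j),
              lt_min (lt_min hε₁ hε₂) (sub_pos.2 hAB), ?_, ?_⟩
            · simp only [Term.realize, funMap_join]
              rw [hb₁, hb₂]
              exact sup_eq_left.2 hAB.le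
            · intro K g hg h
              simp only [Term.realize, funMap_join]
              rw [hp₁ K g hg (cons_mono hg (le_sup_of_le_left le_sup_left) (inf_le_left.trans inf_le_left) h),
                hp₂ K g hg (cons_mono hg (le_sup_of_le_left le_sup_right) (inf_le_left.trans inf_le_right) h)]
              have key : ((∑ j, c₂ j * v j) - ∑ j, c₁ j * v j) • g
                  ≤ K • ((∑ j, c₁ j • a j) - ∑ j, c₂ j • a j) := by
                refine le_trans (zsmul_le_zsmul_left hg (Int.le_natAbs)) ?_
                rw [natCast_zsmul]
                exact cons_mono hg le_sup_right inf_le_right h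
              exact sup_eq_left.2 (perturb_le key)
      | 2, LGrpBin.meet, ts, ih => by
          obtain ⟨c₁, M₁, ε₁, hε₁, hb₁, hp₁⟩ := ih 0
          obtain ⟨c₂, M₂, ε₂, hε₂, hb₂, hp₂⟩ := ih 1
          rcases lt_trichotomy (∑ j, c₁ j • a j) (∑ j, c₂ j • a j) with hAB | hAB | hAB
          · refine ⟨c₁, M₁ ⊔ M₂ ⊔ ((∑ j, c₁ j * v j) - ∑ j, c₂ j * v j).natAbs,
              ε₁ ⊓ ε₂ ⊓ ((∑ j, c₂ j • a j) - ∑ j, c₁ j • a j),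
              lt_min (lt_min hε₁ hε₂) (sub_pos.2 hAB), ?_, ?_⟩
            · simp only [Term.realize, funMap_meet]
              rw [hb₁, hb₂]
              exact inf_eq_left.2 hAB.le
            · intro K g hg h
              simp only [Term.realize, funMap_meet]
              rw [hp₁ K g hg (cons_mono hg (le_sup_of_le_left le_sup_left) (inf_le_left.trans inf_le_left) h),
                hp₂ K g hg (cons_mono hg (le_sup_of_le_left le_sup_right) (inf_le_left.trans inf_le_right) h)]
              have key : ((∑ j, c₁ j * v j) - ∑ j, c₂ j * v j) • g
                  ≤ K • ((∑ j, c₂ j • a j) - ∑ j, c₁ j • a j) := by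
                refine le_trans (zsmul_le_zsmul_left hg (Int.le_natAbs)) ?_
                rw [natCast_zsmul]
                exact cons_mono hg le_sup_right inf_le_right h
              exact inf_eq_left.2 (perturb_le key)
          · rcases le_total (∑ j, c₁ j * v j) (∑ j, c₂ j * v j) with hd | hd
            · refine ⟨c₁, M₁ ⊔ M₂, ε₁ ⊓ ε₂, lt_min hε₁ hε₂, ?_, ?_⟩
              · simp only [Term.realize, funMap_meet]
                rw [hb₁, hb₂, hAB, inf_idem]
              · intro K g hg h
                simp only [Term.realize, funMap_meet]
                rw [hp₁ K g hg (cons_mono hg le_sup_left inf_le_left h),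
                  hp₂ K g hg (cons_mono hg le_sup_right inf_le_right h), hAB]
                exact inf_eq_left.2 (add_le_add_right (zsmul_le_zsmul_left hg hd) _)
            · refine ⟨c₂, M₁ ⊔ M₂, ε₁ ⊓ ε₂, lt_min hε₁ hε₂, ?_, ?_⟩
              · simp only [Term.realize, funMap_meet]
                rw [hb₁, hb₂, hAB, inf_idem]
              · intro K g hg h
                simp only [Term.realize, funMap_meet]
                rw [hp₁ K g hg (cons_mono hg le_sup_left inf_le_left h),
                  hp₂ K g hg (cons_mono hg le_sup_right inf_le_right h), hAB]
                exact inf_eq_right.2 (add_le_add_right (zsmul_le_zsmul_left hg hd) _)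
          · refine ⟨c₂, M₁ ⊔ M₂ ⊔ ((∑ j, c₂ j * v j) - ∑ j, c₁ j * v j).natAbs,
              ε₁ ⊓ ε₂ ⊓ ((∑ j, c₁ j • a j) - ∑ j, c₂ j • a j),
              lt_min (lt_min hε₁ hε₂) (sub_pos.2 hAB), ?_, ?_⟩
            · simp only [Term.realize, funMap_meet]
              rw [hb₁, hb₂]
              exact inf_eq_right.2 hAB.le
            · intro K g hg h
              simp only [Term.realize, funMap_meet]
              rw [hp₁ K g hg (cons_mono hg (le_sup_of_le_left le_sup_left) (inf_le_left.trans inf_le_left) h),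
                hp₂ K g hg (cons_mono hg (le_sup_of_le_left le_sup_right) (inf_le_left.trans inf_le_right) h)]
              have key : ((∑ j, c₂ j * v j) - ∑ j, c₁ j * v j) • g
                  ≤ K • ((∑ j, c₁ j • a j) - ∑ j, c₂ j • a j) := by
                refine le_trans (zsmul_le_zsmul_left hg (Int.le_natAbs)) ?_
                rw [natCast_zsmul]
                exact cons_mono hg le_sup_right inf_le_right h
              exact inf_eq_right.2 (perturb_le key)
      | (l+3), f, ts, ih => f.elim

end LemC

private lemma span_rat_to_int {m : ℕ} (s : Set (Fin m → ℚ)) (x : Fin m → ℚ)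
    (hx : x ∈ Submodule.span ℚ s) :
    ∃ k : ℕ, 0 < k ∧ (k : ℤ) • x ∈ Submodule.span ℤ s := by
  induction hx using Submodule.span_induction with
  | mem y hy => exact ⟨1, one_pos, by simpa using Submodule.subset_span hy⟩
  | zero => exact ⟨1, one_pos, by simp⟩
  | add y z _ _ hy hz =>
      obtain ⟨k₁, hk₁, h₁⟩ := hy
      obtain ⟨k₂, hk₂, h₂⟩ := hz
      refine ⟨k₁ * k₂, Nat.mul_pos hk₁ hk₂, ?_⟩
      have : ((k₁ * k₂ : ℕ) : ℤ) • (y + z)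
          = (k₂ : ℤ) • ((k₁ : ℤ) • y) + (k₁ : ℤ) • ((k₂ : ℤ) • z) := by
        rw [smul_add, smul_smul, smul_smul]
        push_cast
        rw [mul_comm (k₂ : ℤ)]
      rw [this]
      exact Submodule.add_mem _ (Submodule.smul_mem _ _ h₁) (Submodule.smul_mem _ _ h₂)
  | smul q y _ hy =>
      obtain ⟨k, hk, h⟩ := hy
      refine ⟨q.den * k, Nat.mul_pos q.pos hk, ?_⟩
      have : ((q.den * k : ℕ) : ℤ) • (q • y) = q.num • ((k : ℤ) • y) := by
        rw [smul_smul]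
        push_cast
        rw [← Int.cast_smul_eq_zsmul ℚ, ← Int.cast_smul_eq_zsmul ℚ]
        rw [smul_smul]
        congr 1
        push_cast
        rw [mul_comm (q.den : ℚ), mul_assoc, mul_comm (q.den:ℚ)]
        rw [Rat.mul_den_eq_num]
        ring
      rw [this]
      exact Submodule.smul_mem _ _ h

private lemma lemmaLA {m : ℕ} (R : AddSubgroup (Fin m → ℤ))
    (h : ∀ v : Fin m → ℤ, v ≠ 0 → ∃ w ∈ R, ∑ j, w j * v j ≠ 0) (i : Fin m) :
    ∃ k : ℕ, 0 < k ∧ (k : ℤ) • Pi.single i (1 : ℤ) ∈ R := by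
  classical
  set f : (Fin m → ℤ) →ₗ[ℤ] (Fin m → ℚ) :=
    LinearMap.pi (fun j => (Int.castAddHom ℚ).toIntLinearMap.comp (LinearMap.proj j)) with hf
  have hfapp : ∀ (w : Fin m → ℤ) (j : Fin m), f w j = (w j : ℚ) := fun w j => rfl
  set S : Submodule ℚ (Fin m → ℚ) := Submodule.span ℚ (f '' (R : Set (Fin m → ℤ))) with hS
  have hStop : S = ⊤ := by
    by_contra hne
    obtain ⟨x₀, hx₀⟩ : ∃ x₀, x₀ ∉ S := by
      by_contra hc
      push_neg at hc
      exact hne (Submodule.eq_top_iff'.2 hc)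
    obtain ⟨φ, hφx, hφS⟩ := Submodule.exists_dual_map_eq_bot_of_notMem hx₀ inferInstance
    have hφ0 : ∀ y ∈ S, φ y = 0 := by
      intro y hy
      have : φ y ∈ S.map φ := Submodule.mem_map_of_mem hy
      rwa [hφS, Submodule.mem_bot] at this
    -- the vector of values of φ on the standard basis
    set vq : Fin m → ℚ := fun j => φ (fun l => if j = l then 1 else 0) with hvq
    have hφeq : ∀ y : Fin m → ℚ, φ y = ∑ j, y j • vq j := fun y =>
      LinearMap.pi_apply_eq_sum_univ φ y
    have hvqne : ∃ j, vq j ≠ 0 := by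
      by_contra hc
      push_neg at hc
      apply hφx
      rw [hφeq]
      simp [hc]
    -- clear denominators
    set N : ℕ := ∏ j, (vq j).den with hN
    have hNpos : 0 < N := Finset.prod_pos fun j _ => (vq j).pos
    have hdvd : ∀ j, (vq j).den ∣ N := fun j => Finset.dvd_prod_of_mem _ (Finset.mem_univ j)
    set v : Fin m → ℤ := fun j => (vq j).num * (N / (vq j).den : ℕ) with hv
    have hcast : ∀ j, (v j : ℚ) = (N : ℚ) * vq j := by
      intro j
      have h1 : ((vq j).den * (N / (vq j).den) : ℕ) = N := Nat.mul_div_cancel' (hdvd j)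
      have h2 : ((vq j).num : ℚ) = vq j * ((vq j).den : ℚ) := by
        rw [Rat.mul_den_eq_num]
      rw [hv]
      rw [Int.cast_mul, Int.cast_natCast, h2]
      rw [mul_assoc, ← Nat.cast_mul, h1]
      ring
    have hvne : v ≠ 0 := by
      obtain ⟨j, hj⟩ := hvqne
      intro hc
      apply hj
      have : (v j : ℚ) = 0 := by rw [congrFun hc j]; simp
      rw [hcast j] at this
      rcases mul_eq_zero.1 this with h' | h'
      · exact absurd h' (by exact_mod_cast hNpos.ne')
      · exact h'
    obtain ⟨w, hwR, hwv⟩ := h v hvne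
    apply hwv
    have hfw : φ (f w) = 0 := hφ0 _ (Submodule.subset_span ⟨w, hwR, rfl⟩)
    rw [hφeq] at hfw
    have : (N : ℚ) * ∑ j, (w j : ℚ) * vq j = 0 := by
      have e1 : ∑ j, (w j : ℚ) * vq j = ∑ j, (f w) j • vq j :=
        Finset.sum_congr rfl fun j _ => by rw [hfapp, smul_eq_mul]
      rw [e1, hfw, mul_zero]
    have hsum : ∑ j, (w j : ℚ) * vq j = 0 := by
      rcases mul_eq_zero.1 this with h' | h'
      · exact absurd h' (by exact_mod_cast hNpos.ne')
      · exact h'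
    have : ((∑ j, w j * v j : ℤ) : ℚ) = (N : ℚ) * ∑ j, (w j : ℚ) * vq j := by
      push_cast
      rw [Finset.mul_sum]
      exact Finset.sum_congr rfl fun j _ => by rw [hcast j]; ring
    rw [hsum, mul_zero] at this
    exact_mod_cast this
  -- now S = ⊤, extract integer multiple
  have hmem : Pi.single i (1 : ℚ) ∈ S := hStop ▸ Submodule.mem_top
  obtain ⟨k, hk, hkmem⟩ := span_rat_to_int _ _ hmem
  have : Submodule.span ℤ (f '' (R : Set (Fin m → ℤ)))
      = Submodule.map f (AddSubgroup.toIntSubmodule R) := by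
    rw [← Submodule.span_eq (AddSubgroup.toIntSubmodule R), Submodule.map_span]
    rfl
  rw [this] at hkmem
  obtain ⟨w, hwR, hwe⟩ := hkmem
  have hweq : w = (k : ℤ) • Pi.single i (1 : ℤ) := by
    funext j
    have hj := congrFun hwe j
    rw [hfapp] at hj
    rcases eq_or_ne j i with rfl | hji
    · have h1 : (w j : ℚ) = (k : ℚ) := by simpa using hj
      have h2 : w j = (k : ℤ) := by exact_mod_cast h1
      simp [h2]
    · have h1 : (w j : ℚ) = 0 := by simpa [Pi.single_apply, hji] using hj
      have h2 : w j = 0 := by exact_mod_cast h1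
      simp [Pi.single_apply, hji, h2]
  exact ⟨k, hk, hweq ▸ hwR⟩

section Main

variable {G : Type*} [AddCommGroup G] [LinearOrder G] [IsOrderedAddMonoid G]

private lemma coe_sup (D : AddSubgroup G) (u w : D) :
    ((u ⊔ w : D) : G) = (u : G) ⊔ (w : G) := by
  rcases le_total u w with h | h
  · rw [sup_eq_right.2 h, sup_eq_right.2 (show (u : G) ≤ (w : G) from h)]
  · rw [sup_eq_left.2 h, sup_eq_left.2 (show (w : G) ≤ (u : G) from h)]

private lemma coe_inf (D : AddSubgroup G) (u w : D) :
    ((u ⊓ w : D) : G) = (u : G) ⊓ (w : G) := by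
  rcases le_total u w with h | h
  · rw [inf_eq_left.2 h, inf_eq_left.2 (show (u : G) ≤ (w : G) from h)]
  · rw [inf_eq_right.2 h, inf_eq_right.2 (show (w : G) ≤ (u : G) from h)]

private lemma coe_realize (D : AddSubgroup G) {α : Type*} (t : LGrpLang.Term α) (w : α → D) :
    ((Term.realize w t : D) : G) = Term.realize (fun j => (w j : G)) t := by
  induction t with
  | var i => rfl
  | @func l f ts ih =>
      exact match l, f, ts, ih with
      | 0, _, ts, ih => by
          simp only [Term.realize, funMap_zero]
          rfl
      | 1, _, ts, ih => by
          simp only [Term.realize, funMap_neg]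
          rw [← ih 0]
          rfl
      | 2, LGrpBin.add, ts, ih => by
          simp only [Term.realize, funMap_add]
          rw [← ih 0, ← ih 1]
          rfl
      | 2, LGrpBin.join, ts, ih => by
          simp only [Term.realize, funMap_join]
          rw [← ih 0, ← ih 1, coe_sup]
      | 2, LGrpBin.meet, ts, ih => by
          simp only [Term.realize, funMap_meet]
          rw [← ih 0, ← ih 1, coe_inf]
      | (l+3), f, ts, ih => f.elim

end Main

/-- If a linearly ordered abelian group `G` satisfies an EFD-sentence `φ`, then so does
every divisible subgroup `D` of `G` (with its induced linearly ordered group structure,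
where the lattice operations are `max` and `min`). -/
theorem efd_satisfies_divisible_subgroup (G : Type) [AddCommGroup G] [LinearOrder G] [IsOrderedAddMonoid G]
    (D : AddSubgroup G)
    (hdiv : ∀ n : ℕ, 0 < n → ∀ d : D, ∃ e : D, n • e = d)
    (φ : EFDSystem LGrpLang) (hG : φ.Satisfies G) :
    φ.Satisfies D := by
  classical
  intro x
  by_cases hpos : ∃ p : G, 0 < p
  · obtain ⟨p, hp⟩ := hpos
    obtain ⟨z, hz, huniq⟩ := hG (fun i => (x i : G))
    set a : Fin φ.n ⊕ Fin φ.m → G := Sum.elim (fun i => (x i : G)) z with ha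
    let R : AddSubgroup (Fin φ.m → ℤ) :=
      { carrier := {w | ∑ j, w j • z j ∈ D}
        zero_mem' := by
          show ∑ j, (0 : Fin φ.m → ℤ) j • z j ∈ D
          simpa using D.zero_mem
        add_mem' := by
          intro u w hu hw
          have e : ∑ j, (u + w) j • z j = (∑ j, u j • z j) + ∑ j, w j • z j := by
            simp [add_zsmul, Finset.sum_add_distrib]
          show ∑ j, (u + w) j • z j ∈ D
          rw [e]
          exact D.add_mem hu hw
        neg_mem' := by
          intro u hu
          have e : ∑ j, (-u) j • z j = -∑ j, u j • z j := by
            simp [neg_zsmul]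
          show ∑ j, (-u) j • z j ∈ D
          rw [e]
          exact D.neg_mem hu }
    have hR : ∀ v : Fin φ.m → ℤ, v ≠ 0 → ∃ w ∈ R, ∑ j, w j * v j ≠ 0 := by
      intro v hv
      by_contra hcon
      push_neg at hcon
      set vv : Fin φ.n ⊕ Fin φ.m → ℤ := Sum.elim 0 v with hvv
      choose cs Ms εs hεs hbs hps using fun i => lemmaC hp (φ.lhs i) a vv
      choose ct Mt εt hεt hbt hpt using fun i => lemmaC hp (φ.rhs i) a vv
      have hrne : (Finset.univ : Finset (Fin φ.r)).Nonempty := by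
        have : Nonempty (Fin φ.r) := ⟨⟨0, φ.hr⟩⟩
        exact Finset.univ_nonempty
      set M : ℕ := Finset.univ.sup (fun i => Ms i ⊔ Mt i) with hM
      set ε : G := Finset.univ.inf' hrne (fun i => εs i ⊓ εt i) with hε
      have hεpos : 0 < ε := by
        rw [hε, Finset.lt_inf'_iff]
        exact fun i _ => lt_min (hεs i) (hεt i)
      set K : ℕ := M + 1 with hK
      have hbound_s : ∀ i, Ms i • ε ≤ K • εs i := by
        intro i
        calc Ms i • ε ≤ M • ε :=
              nsmul_le_nsmul_left hεpos.le
                (le_trans le_sup_left (Finset.le_sup (f := fun i => Ms i ⊔ Mt i) (Finset.mem_univ i)))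
          _ ≤ M • εs i :=
              nsmul_le_nsmul_right
                (le_trans (Finset.inf'_le (fun i => εs i ⊓ εt i) (Finset.mem_univ i)) inf_le_left) M
          _ ≤ K • εs i := nsmul_le_nsmul_left (hεs i).le (Nat.le_succ M)
      have hbound_t : ∀ i, Mt i • ε ≤ K • εt i := by
        intro i
        calc Mt i • ε ≤ M • ε :=
              nsmul_le_nsmul_left hεpos.le
                (le_trans le_sup_right (Finset.le_sup (f := fun i => Ms i ⊔ Mt i) (Finset.mem_univ i)))
          _ ≤ M • εt i :=
              nsmul_le_nsmul_right
                (le_trans (Finset.inf'_le (fun i => εs i ⊓ εt i) (Finset.mem_univ i)) inf_le_right) M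
          _ ≤ K • εt i := nsmul_le_nsmul_left (hεt i).le (Nat.le_succ M)
      have hsplit : ∀ c : Fin φ.n ⊕ Fin φ.m → ℤ,
          ∑ q, c q • a q = (∑ j, c (Sum.inl j) • (x j : G)) + ∑ j, c (Sum.inr j) • z j := by
        intro c
        rw [Fintype.sum_sum_type]
        rfl
      have hbase : ∀ i, ∑ q, cs i q • a q = ∑ q, ct i q • a q := by
        intro i
        rw [← hbs i, ← hbt i]
        exact hz i
      have hrow : ∀ i, (fun j => cs i (Sum.inr j) - ct i (Sum.inr j)) ∈ R := by
        intro i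
        have e0 : (∑ j, cs i (Sum.inr j) • z j) - ∑ j, ct i (Sum.inr j) • z j
            = (∑ j, ct i (Sum.inl j) • (x j : G)) - ∑ j, cs i (Sum.inl j) • (x j : G) := by
          rw [sub_eq_sub_iff_add_eq_add]
          have h1 := hsplit (cs i)
          have h2 := hsplit (ct i)
          have h3 := hbase i
          rw [h1, h2] at h3
          exact (add_comm _ _).trans h3
        show ∑ j, (cs i (Sum.inr j) - ct i (Sum.inr j)) • z j ∈ D
        have e1 : ∑ j, (cs i (Sum.inr j) - ct i (Sum.inr j)) • z j
            = (∑ j, cs i (Sum.inr j) • z j) - ∑ j, ct i (Sum.inr j) • z j := by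
          rw [← Finset.sum_sub_distrib]
          exact Finset.sum_congr rfl fun j _ => sub_smul _ _ _
        have e2 : ∑ j, (ct i (Sum.inl j) - cs i (Sum.inl j)) • (x j : G)
            = (∑ j, ct i (Sum.inl j) • (x j : G)) - ∑ j, cs i (Sum.inl j) • (x j : G) := by
          rw [← Finset.sum_sub_distrib]
          exact Finset.sum_congr rfl fun j _ => sub_smul _ _ _
        have e : ∑ j, (cs i (Sum.inr j) - ct i (Sum.inr j)) • z j
            = ∑ j, (ct i (Sum.inl j) - cs i (Sum.inl j)) • (x j : G) := by
          rw [e1, e0, ← e2]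
        rw [e]
        exact AddSubgroup.sum_mem D fun j _ => AddSubgroup.zsmul_mem D (x j).2 _
      have hd : ∀ i, ∑ j, (cs i (Sum.inr j) - ct i (Sum.inr j)) * v j = 0 :=
        fun i => hcon _ (hrow i)
      have hcoef : ∀ i, ∑ q, cs i q * vv q = ∑ q, ct i q * vv q := by
        intro i
        have h0 : ∑ j, cs i (Sum.inr j) * v j = ∑ j, ct i (Sum.inr j) * v j := by
          have h1 := hd i
          simp only [sub_mul, Finset.sum_sub_distrib, sub_eq_zero] at h1
          exact h1
        rw [Fintype.sum_sum_type, Fintype.sum_sum_type]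
        simp only [hvv, Sum.elim_inl, Sum.elim_inr, Pi.zero_apply, mul_zero]
        rw [h0]
      -- the two solutions for the scaled parameters
      set xK : Fin φ.n → G := fun i => K • (x i : G) with hxK
      set zK : Fin φ.m → G := fun j => K • z j with hzK
      set zK' : Fin φ.m → G := fun j => K • z j + v j • ε with hzK'
      have hpt1 : (fun q => K • a q + vv q • ε) = Sum.elim xK zK' := by
        funext q
        cases q with
        | inl i => simp [ha, hvv, hxK]
        | inr j => simp [ha, hvv, hzK']
      have hpt0 : (fun q => K • a q + vv q • (0 : G)) = Sum.elim xK zK := by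
        funext q
        cases q with
        | inl i => simp [ha, hxK]
        | inr j => simp [ha, hzK]
      have hsol0 : ∀ i, Term.realize (Sum.elim xK zK) (φ.lhs i)
          = Term.realize (Sum.elim xK zK) (φ.rhs i) := by
        intro i
        rw [← hpt0]
        rw [hps i K 0 le_rfl (by simpa using nsmul_nonneg (hεs i).le K),
          hpt i K 0 le_rfl (by simpa using nsmul_nonneg (hεt i).le K)]
        rw [hbase i, hcoef i]
      have hsol1 : ∀ i, Term.realize (Sum.elim xK zK') (φ.lhs i)
          = Term.realize (Sum.elim xK zK') (φ.rhs i) := by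
        intro i
        rw [← hpt1]
        rw [hps i K ε hεpos.le (hbound_s i), hpt i K ε hεpos.le (hbound_t i)]
        rw [hbase i, hcoef i]
      obtain ⟨u, _, huu⟩ := hG xK
      have h1 : zK = u := huu _ hsol0
      have h2 : zK' = u := huu _ hsol1
      have hv0 : ∀ j, v j • ε = 0 := by
        intro j
        have := congrFun (h1.trans h2.symm) j
        rw [hzK, hzK'] at this
        exact (left_eq_add.1 this).symm ▸ rfl
      apply hv
      funext j
      rcases lt_trichotomy (v j) 0 with hlt | heq | hgt
      · exfalso
        have : (0:G) < (-(v j)) • ε := zsmul_pos hεpos (by omega)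
        rw [neg_zsmul, hv0 j, neg_zero] at this
        exact lt_irrefl _ this
      · exact heq
      · exfalso
        have : (0:G) < v j • ε := zsmul_pos hεpos hgt
        rw [hv0 j] at this
        exact lt_irrefl _ this
    have hzD : ∀ j, z j ∈ D := by
      intro j
      obtain ⟨k, hk, hmem⟩ := lemmaLA R hR j
      have hmem' : (k : ℤ) • z j ∈ D := by
        have h' : ∑ l, ((k : ℤ) • Pi.single j (1:ℤ) : Fin φ.m → ℤ) l • z l ∈ D := hmem
        have e : ∑ l, ((k : ℤ) • Pi.single j (1:ℤ) : Fin φ.m → ℤ) l • z l = (k : ℤ) • z j := by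
          rw [Finset.sum_eq_single j]
          · simp
          · intro b _ hb
            simp [Pi.single_apply, hb]
          · intro hb
            exact absurd (Finset.mem_univ j) hb
        rwa [e] at h'
      obtain ⟨e, he⟩ := hdiv k hk ⟨(k : ℤ) • z j, hmem'⟩
      have he' : (k : ℕ) • (e : G) = (k : ℤ) • z j := by
        have := congrArg (fun d : D => (d : G)) he
        simpa using this
      have hez : (e : G) = z j := by
        by_contra hne
        rcases lt_or_gt_of_ne hne with hlt | hgt
        · have hpos' : (0:G) < (k:ℤ) • (z j - (e:G)) :=
            zsmul_pos (sub_pos.2 hlt) (by exact_mod_cast hk)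
          rw [zsmul_sub, ← he', natCast_zsmul, sub_self] at hpos'
          exact lt_irrefl _ hpos'
        · have hpos' : (0:G) < (k:ℤ) • ((e:G) - z j) :=
            zsmul_pos (sub_pos.2 hgt) (by exact_mod_cast hk)
          rw [zsmul_sub, ← he', natCast_zsmul, sub_self] at hpos'
          exact lt_irrefl _ hpos'
      rw [← hez]
      exact e.2
    set zD : Fin φ.m → D := fun j => ⟨z j, hzD j⟩ with hzDdef
    have hcoeelim : ∀ (y : Fin φ.m → D),
        (fun q => ((Sum.elim x y q : D) : G)) = Sum.elim (fun i => (x i : G)) (fun j => (y j : G)) := by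
      intro y
      funext q
      cases q with
      | inl i => rfl
      | inr j => rfl
    refine ⟨zD, ?_, ?_⟩
    · intro i
      apply Subtype.coe_injective
      show ((Term.realize (Sum.elim x zD) (φ.lhs i) : D) : G)
          = ((Term.realize (Sum.elim x zD) (φ.rhs i) : D) : G)
      rw [coe_realize, coe_realize, hcoeelim]
      have : (fun j => (zD j : G)) = z := by funext j; rfl
      rw [this]
      exact hz i
    · intro y hy
      have hyG : ∀ i, Term.realize (Sum.elim (fun i => (x i : G)) (fun j => (y j : G))) (φ.lhs i)
          = Term.realize (Sum.elim (fun i => (x i : G)) (fun j => (y j : G))) (φ.rhs i) := by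
        intro i
        rw [← hcoeelim, ← coe_realize, ← coe_realize, hy i]
      have := huniq _ hyG
      funext j
      apply Subtype.coe_injective
      have := congrFun this j
      exact this
  · -- trivial group
    have hall : ∀ g : G, g = 0 := by
      push_neg at hpos
      intro g
      exact le_antisymm (hpos g) (neg_nonpos.1 (hpos (-g)))
    have hDall : ∀ u w : D, u = w := by
      intro u w
      apply Subtype.coe_injective
      show (u : G) = (w : G)
      rw [hall (u : G), hall (w : G)]
    exact ⟨fun _ => 0, fun i => hDall _ _, fun y _ => funext fun j => hDall _ _⟩
end

section
/- If an EFD-system φ in the language 𝓛 of ℓ-groups is satisfied by some nontrivial abelian ℓ-group, then every divisible linearly ordered abelian group satisfies φ. -/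
open FirstOrder Language

set_option linter.unusedSectionVars false
set_option maxHeartbeats 1000000

namespace EFD


variable {ι : Type} [Fintype ι] [DecidableEq ι]

/-- A linear constraint: `0 ≤ ∑ c i • y i` (or strict if `strict`). -/
structure Cstr (ι : Type) where
  c : ι → ℤ
  strict : Bool

variable {D : Type*}

section Ev
variable [AddCommGroup D]

def evl (ℓ : ι → ℤ) (y : ι → D) : D := ∑ i, ℓ i • y i

lemma evl_addc (ℓ m : ι → ℤ) (y : ι → D) :
    evl (fun i => ℓ i + m i) y = evl ℓ y + evl m y := by
  simp [evl, add_zsmul, Finset.sum_add_distrib]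

lemma evl_mulc (k : ℤ) (ℓ : ι → ℤ) (y : ι → D) :
    evl (fun i => k * ℓ i) y = k • evl ℓ y := by
  simp [evl, mul_zsmul, Finset.smul_sum]

lemma evl_zero_coeffs {ℓ : ι → ℤ} (h : ∀ i, ℓ i = 0) (y : ι → D) : evl ℓ y = 0 := by
  simp [evl, fun i => h i]

lemma evl_update (ℓ : ι → ℤ) (y : ι → D) (v : ι) (d : D) :
    evl ℓ (Function.update y v d) = ℓ v • d + evl (Function.update ℓ v 0) y := by
  classical
  unfold evl
  rw [← Finset.sum_erase_add _ _ (Finset.mem_univ v),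
      ← Finset.sum_erase_add _ (fun i => Function.update ℓ v 0 i • y i) (Finset.mem_univ v)]
  simp only [Function.update_self]
  rw [zero_smul, add_zero, add_comm]
  congr 1
  apply Finset.sum_congr rfl
  intro i hi
  have : i ≠ v := Finset.ne_of_mem_erase hi
  rw [Function.update_of_ne this, Function.update_of_ne this]

lemma evl_congr_of_ne {ℓ : ι → ℤ} {y y' : ι → D}
    (h : ∀ i, ℓ i ≠ 0 → y i = y' i) : evl ℓ y = evl ℓ y' := by
  unfold evl
  apply Finset.sum_congr rfl
  intro i _
  by_cases hi : ℓ i = 0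
  · simp [hi]
  · rw [h i hi]

lemma evl_comm_hom {E : Type*} [AddCommGroup E] (f : D →+ E) (ℓ : ι → ℤ) (y : ι → D) :
    f (evl ℓ y) = evl ℓ (fun i => f (y i)) := by
  simp [evl, map_sum, map_zsmul]

end Ev

section HoldsDef
variable [AddCommGroup D] [PartialOrder D]

def holdsC (co : Cstr ι) (y : ι → D) : Prop :=
  if co.strict then 0 < evl co.c y else 0 ≤ evl co.c y

def Holds (S : List (Cstr ι)) (y : ι → D) : Prop := ∀ co ∈ S, holdsC co y

lemma holds_append {S T : List (Cstr ι)} {y : ι → D} :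
    Holds (S ++ T) y ↔ Holds S y ∧ Holds T y := by
  constructor
  · intro h; exact ⟨fun c hc => h c (List.mem_append_left _ hc),
      fun c hc => h c (List.mem_append_right _ hc)⟩
  · rintro ⟨h1, h2⟩ c hc
    rcases List.mem_append.1 hc with h | h
    · exact h1 c h
    · exact h2 c h

lemma holdsC_congr_of_ne {co : Cstr ι} {y y' : ι → D}
    (h : ∀ i, co.c i ≠ 0 → y i = y' i) : holdsC co y ↔ holdsC co y' := by
  unfold holdsC
  rw [evl_congr_of_ne h]

end HoldsDef

-- zsmul order helpers
section ZS
variable [AddCommGroup D] [LinearOrder D] [IsOrderedAddMonoid D]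

lemma zsmul_pos_iff {k : ℤ} (hk : 0 < k) {x : D} : 0 < k • x ↔ 0 < x := by
  constructor
  · intro h
    by_contra hx
    push_neg at hx
    have : k • x ≤ 0 := by
      have := zsmul_nonneg (neg_nonneg.2 hx) hk.le
      rw [smul_neg] at this
      exact neg_nonneg.1 this
    exact absurd h (not_lt.2 this)
  · intro h; exact zsmul_pos h hk

lemma zsmul_nonneg_iff {k : ℤ} (hk : 0 < k) {x : D} : 0 ≤ k • x ↔ 0 ≤ x := by
  constructor
  · intro h
    by_contra hx
    push_neg at hx
    have : 0 < k • (-x) := zsmul_pos (neg_pos.2 hx) hk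
    rw [smul_neg] at this
    have := neg_pos.1 this
    exact absurd h (not_le.2 this)
  · intro h; exact zsmul_nonneg h hk.le

lemma zsmul_le_iff {k : ℤ} (hk : 0 < k) {x y : D} : k • x ≤ k • y ↔ x ≤ y := by
  rw [← sub_nonneg, ← smul_sub, zsmul_nonneg_iff hk, sub_nonneg]

lemma zsmul_lt_iff {k : ℤ} (hk : 0 < k) {x y : D} : k • x < k • y ↔ x < y := by
  rw [← sub_pos, ← smul_sub, zsmul_pos_iff hk, sub_pos]

end ZS



section Elim
variable [AddCommGroup D] [LinearOrder D] [IsOrderedAddMonoid D]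

def combo (v : ι) (c1 c2 : Cstr ι) : Cstr ι :=
  ⟨fun i => (-(c2.c v)) * c1.c i + (c1.c v) * c2.c i, c1.strict || c2.strict⟩

def elim1 (v : ι) (S : List (Cstr ι)) : List (Cstr ι) :=
  S.filter (fun co => co.c v = 0) ++
  S.flatMap (fun c1 => S.filterMap (fun c2 =>
    if 0 < c1.c v ∧ c2.c v < 0 then some (combo v c1 c2) else none))

lemma mem_elim1 {v : ι} {S : List (Cstr ι)} {co : Cstr ι} :
    co ∈ elim1 v S ↔ (co ∈ S ∧ co.c v = 0) ∨
      ∃ c1 ∈ S, ∃ c2 ∈ S, 0 < c1.c v ∧ c2.c v < 0 ∧ co = combo v c1 c2 := by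
  unfold elim1
  rw [List.mem_append, List.mem_filter]
  constructor
  · rintro (⟨h1, h2⟩ | h)
    · exact Or.inl ⟨h1, by simpa using h2⟩
    · right
      rcases List.mem_flatMap.1 h with ⟨c1, hc1, h⟩
      rcases List.mem_filterMap.1 h with ⟨c2, hc2, h⟩
      split at h
      · rename_i hcond
        exact ⟨c1, hc1, c2, hc2, hcond.1, hcond.2, (Option.some_inj.1 h).symm⟩
      · exact absurd h (by simp)
  · rintro (⟨h1, h2⟩ | ⟨c1, hc1, c2, hc2, hp, hn, rfl⟩)
    · exact Or.inl ⟨h1, by simpa using h2⟩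
    · right
      apply List.mem_flatMap.2
      refine ⟨c1, hc1, List.mem_filterMap.2 ⟨c2, hc2, ?_⟩⟩
      rw [if_pos ⟨hp, hn⟩]

lemma elim1_zero_at {v : ι} {S : List (Cstr ι)} {co : Cstr ι} (h : co ∈ elim1 v S) :
    co.c v = 0 := by
  rcases mem_elim1.1 h with ⟨_, h⟩ | ⟨c1, _, c2, _, _, _, rfl⟩
  · exact h
  · simp [combo]; ring

lemma elim1_preserves_zero {v w : ι} {S : List (Cstr ι)}
    (h : ∀ co ∈ S, co.c w = 0) : ∀ co ∈ elim1 v S, co.c w = 0 := by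
  intro co hco
  rcases mem_elim1.1 hco with ⟨h1, _⟩ | ⟨c1, hc1, c2, hc2, _, _, rfl⟩
  · exact h co h1
  · simp [combo, h c1 hc1, h c2 hc2]

lemma evl_combo (v : ι) (c1 c2 : Cstr ι) (y : ι → D) :
    evl (combo v c1 c2).c y = (-(c2.c v)) • evl c1.c y + (c1.c v) • evl c2.c y := by
  show evl (fun i => (-(c2.c v)) * c1.c i + (c1.c v) * c2.c i) y = _
  rw [evl_addc, evl_mulc, evl_mulc]

lemma holdsC_combo {v : ι} {c1 c2 : Cstr ι} {y : ι → D}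
    (hp : 0 < c1.c v) (hn : c2.c v < 0)
    (h1 : holdsC c1 y) (h2 : holdsC c2 y) : holdsC (combo v c1 c2) y := by
  have hp2 : (0:ℤ) < -(c2.c v) := by omega
  unfold holdsC at *
  rw [evl_combo]
  cases hs1 : c1.strict <;> cases hs2 : c2.strict <;>
    simp only [hs1, hs2, if_true, if_false, Bool.false_or, Bool.true_or, Bool.or_self,
      combo] at *
  · exact add_nonneg (zsmul_nonneg h1 hp2.le) (zsmul_nonneg h2 hp.le)
  · exact add_pos_of_nonneg_of_pos (zsmul_nonneg h1 hp2.le) (zsmul_pos h2 hp)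
  · exact add_pos_of_pos_of_nonneg (zsmul_pos h1 hp2) (zsmul_nonneg h2 hp.le)
  · exact add_pos (zsmul_pos h1 hp2) (zsmul_pos h2 hp)

lemma elim1_forward {v : ι} {S : List (Cstr ι)} {y : ι → D} (h : Holds S y) :
    Holds (elim1 v S) y := by
  intro co hco
  rcases mem_elim1.1 hco with ⟨h1, _⟩ | ⟨c1, hc1, c2, hc2, hp, hn, rfl⟩
  · exact h co h1
  · exact holdsC_combo hp hn (h c1 hc1) (h c2 hc2)

end Elim


section Back
variable [AddCommGroup D] [LinearOrder D] [IsOrderedAddMonoid D]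

lemma exists_max_image {β : Type*} (l : List β) (f : β → D) (hne : l ≠ []) :
    ∃ b ∈ l, ∀ x ∈ l, f x ≤ f b := by
  induction l with
  | nil => simp at hne
  | cons a t ih =>
    rcases eq_or_ne t [] with rfl | ht
    · exact ⟨a, by simp, by simp⟩
    · rcases ih ht with ⟨b, hb, hmax⟩
      rcases le_total (f a) (f b) with h | h
      · refine ⟨b, List.mem_cons_of_mem _ hb, ?_⟩
        intro x hx
        rcases List.mem_cons.1 hx with rfl | hx
        · exact h
        · exact hmax x hx
      · refine ⟨a, List.mem_cons_self, ?_⟩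
        intro x hx
        rcases List.mem_cons.1 hx with rfl | hx
        · exact le_rfl
        · exact (hmax x hx).trans h

/-- The lower bound associated to a constraint with positive `v`-coefficient. -/
noncomputable def blo (v : ι) (C : ℤ) (y : ι → D) (co : Cstr ι) : D :=
  (C / co.c v) • (-(evl (Function.update co.c v 0) y))

/-- The upper bound associated to a constraint with negative `v`-coefficient. -/
noncomputable def bup (v : ι) (C : ℤ) (y : ι → D) (co : Cstr ι) : D :=
  (C / (-(co.c v))) • (evl (Function.update co.c v 0) y)

lemma lower_iff {v : ι} {co : Cstr ι} (hp : 0 < co.c v) {C : ℤ} (hCpos : 0 < C)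
    (hdvd : co.c v ∣ C) (y : ι → D) (d : D) :
    holdsC co (Function.update y v d) ↔
      (if co.strict then blo v C y co < C • d else blo v C y co ≤ C • d) := by
  have hqc : (C / co.c v) * co.c v = C := Int.ediv_mul_cancel hdvd
  have hq : 0 < C / co.c v := by nlinarith
  set q : ℤ := C / co.c v with hqdef
  set r : D := evl (Function.update co.c v 0) y with hrdef
  have hE : C • d - q • (-r) = q • (co.c v • d + r) := by
    rw [← hqc, mul_zsmul, smul_neg, smul_add, sub_neg_eq_add]
  have hev : evl co.c (Function.update y v d) = co.c v • d + r := evl_update _ _ _ _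
  unfold holdsC
  rw [hev]
  unfold blo
  rw [← hqdef, ← hrdef]
  cases hs : co.strict with
  | false =>
    simp only [if_false, Bool.false_eq_true]
    rw [← sub_nonneg (b := q • (-r)), hE, zsmul_nonneg_iff hq]
  | true =>
    simp only [if_true]
    rw [← sub_pos (b := q • (-r)), hE, zsmul_pos_iff hq]

lemma upper_iff {v : ι} {co : Cstr ι} (hn : co.c v < 0) {C : ℤ} (hCpos : 0 < C)
    (hdvd : co.c v ∣ C) (y : ι → D) (d : D) :
    holdsC co (Function.update y v d) ↔
      (if co.strict then C • d < bup v C y co else C • d ≤ bup v C y co) := by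
  have hdvd' : -(co.c v) ∣ C := (neg_dvd).2 hdvd
  have hqc : (C / (-(co.c v))) * (-(co.c v)) = C := Int.ediv_mul_cancel hdvd'
  have hq : 0 < C / (-(co.c v)) := by nlinarith
  set q : ℤ := C / (-(co.c v)) with hqdef
  set r : D := evl (Function.update co.c v 0) y with hrdef
  have hE : q • r - C • d = q • (co.c v • d + r) := by
    rw [← hqc, mul_zsmul, neg_zsmul, smul_add, smul_neg, sub_neg_eq_add]
    abel
  have hev : evl co.c (Function.update y v d) = co.c v • d + r := evl_update _ _ _ _
  unfold holdsC
  rw [hev]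
  unfold bup
  rw [← hqdef, ← hrdef]
  cases hs : co.strict with
  | false =>
    simp only [if_false, Bool.false_eq_true]
    rw [show (C • d ≤ q • r) ↔ (0 ≤ q • r - C • d) from (sub_nonneg).symm, hE, zsmul_nonneg_iff hq]
  | true =>
    simp only [if_true]
    rw [show (C • d < q • r) ↔ (0 < q • r - C • d) from (sub_pos).symm, hE, zsmul_pos_iff hq]

lemma smul_helper1 (a b : ℤ) (u r1 r2 : D) :
    (-b) • (a • u + r1) + a • (b • u + r2) = (-b) • r1 + a • r2 := by
  rw [smul_add, smul_add, smul_smul, smul_smul, show (-b) * a = -(a*b) by ring, neg_zsmul]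
  abel

lemma smul_helper2 (K qu ql cb ca C : ℤ) (r1 r2 : D) (h1 : K * qu = C * ca)
    (h2 : K * ql = C * cb) :
    K • (qu • r2 - ql • (-r1)) = C • (cb • r1 + ca • r2) := by
  rw [smul_neg, sub_neg_eq_add, smul_add, smul_add, smul_smul, smul_smul, smul_smul,
    smul_smul, h1, h2]
  abel

lemma cross_bounds {v : ι} {c1 c2 : Cstr ι} (hp : 0 < c1.c v) (hn : c2.c v < 0)
    {C : ℤ} (hCpos : 0 < C) (h1 : c1.c v ∣ C) (h2 : c2.c v ∣ C) {y : ι → D}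
    (hcombo : holdsC (combo v c1 c2) y) :
    blo v C y c1 ≤ bup v C y c2 ∧
      ((c1.strict || c2.strict) = true → blo v C y c1 < bup v C y c2) := by
  have h2' : -(c2.c v) ∣ C := (neg_dvd).2 h2
  have hql : (C / c1.c v) * c1.c v = C := Int.ediv_mul_cancel h1
  have hqu : (C / (-(c2.c v))) * (-(c2.c v)) = C := Int.ediv_mul_cancel h2'
  have hKpos : 0 < c1.c v * (-(c2.c v)) := mul_pos hp (by omega)
  have he1 : evl c1.c y = c1.c v • y v + evl (Function.update c1.c v 0) y := by
    conv_lhs => rw [← Function.update_eq_self v y]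
    exact evl_update _ _ _ _
  have he2 : evl c2.c y = c2.c v • y v + evl (Function.update c2.c v 0) y := by
    conv_lhs => rw [← Function.update_eq_self v y]
    exact evl_update _ _ _ _
  have hEE : evl (combo v c1 c2).c y
      = (-(c2.c v)) • evl (Function.update c1.c v 0) y
        + c1.c v • evl (Function.update c2.c v 0) y := by
    rw [evl_combo, he1, he2]
    exact smul_helper1 _ _ _ _ _
  have hmain : (c1.c v * (-(c2.c v))) • (bup v C y c2 - blo v C y c1)
      = C • evl (combo v c1 c2).c y := by
    unfold blo bup
    rw [hEE]
    refine smul_helper2 _ _ _ _ _ _ _ _ ?_ ?_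
    · linear_combination c1.c v * hqu
    · linear_combination (-(c2.c v)) * hql
  have hstrict : (combo v c1 c2).strict = (c1.strict || c2.strict) := rfl
  unfold holdsC at hcombo
  rw [hstrict] at hcombo
  cases hb : (c1.strict || c2.strict) with
  | true =>
    rw [hb] at hcombo
    simp only [if_true] at hcombo
    have h1' : 0 < C • evl (combo v c1 c2).c y := zsmul_pos hcombo hCpos
    rw [← hmain] at h1'
    have hlt := sub_pos.1 ((zsmul_pos_iff hKpos).1 h1')
    exact ⟨hlt.le, fun _ => hlt⟩
  | false =>
    rw [hb] at hcombo
    simp only [Bool.false_eq_true, if_false] at hcombo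
    have h1' : 0 ≤ C • evl (combo v c1 c2).c y := zsmul_nonneg hcombo hCpos.le
    rw [← hmain] at h1'
    have hle := sub_nonneg.1 ((zsmul_nonneg_iff hKpos).1 h1')
    exact ⟨hle, fun hc => absurd hc (by simp)⟩

end Back



section Back2
variable [AddCommGroup D] [LinearOrder D] [IsOrderedAddMonoid D]

lemma elim1_backward (hdiv : ∀ n : ℕ, 0 < n → ∀ g : D, ∃ h : D, n • h = g)
    {e : D} (he : 0 < e) (v : ι) (S : List (Cstr ι)) (y : ι → D)
    (h : Holds (elim1 v S) y) : ∃ d : D, Holds S (Function.update y v d) := by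
  classical
  have hzdiv : ∀ (C : ℤ), 0 < C → ∀ g : D, ∃ d, C • d = g := by
    intro C hC g
    obtain ⟨d, hd⟩ := hdiv C.toNat (by omega) g
    exact ⟨d, by rw [show C = (C.toNat : ℤ) by omega, natCast_zsmul, hd]⟩
  set C : ℤ := (S.map (fun co => if co.c v = 0 then 1 else |co.c v|)).prod with hCdef
  have hCpos : 0 < C := by
    apply List.prod_pos
    intro a ha
    rcases List.mem_map.1 ha with ⟨co, hco, rfl⟩
    split
    · exact one_pos
    · rename_i hne; exact abs_pos.2 hne
  have hCdvd : ∀ co ∈ S, co.c v ≠ 0 → co.c v ∣ C := by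
    intro co hco hne
    have hm := List.mem_map_of_mem (f := fun co : Cstr ι => if co.c v = 0 then 1 else |co.c v|) hco
    simp only [if_neg hne] at hm
    exact (abs_dvd _ _).1 (List.dvd_prod hm)
  set lows := S.filter (fun co => decide (0 < co.c v)) with hlowsdef
  set ups := S.filter (fun co => decide (co.c v < 0)) with hupsdef
  have hcross : ∀ c1 ∈ lows, ∀ c2 ∈ ups, blo v C y c1 ≤ bup v C y c2 ∧
      ((c1.strict || c2.strict) = true → blo v C y c1 < bup v C y c2) := by
    intro c1 hc1 c2 hc2
    have h1 := List.mem_filter.1 hc1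
    have h2 := List.mem_filter.1 hc2
    have hp : 0 < c1.c v := by simpa using h1.2
    have hn : c2.c v < 0 := by simpa using h2.2
    have hcmem : combo v c1 c2 ∈ elim1 v S :=
      mem_elim1.2 (Or.inr ⟨c1, h1.1, c2, h2.1, hp, hn, rfl⟩)
    exact cross_bounds hp hn hCpos (hCdvd _ h1.1 (by omega)) (hCdvd _ h2.1 (by omega))
      (h _ hcmem)
  suffices hsuff : ∃ m : D,
      (∀ co ∈ lows, (co.strict = true → blo v C y co < m) ∧ blo v C y co ≤ m) ∧
      (∀ co ∈ ups, (co.strict = true → m < bup v C y co) ∧ m ≤ bup v C y co) by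
    obtain ⟨m, hLo, hUp⟩ := hsuff
    obtain ⟨d, hd⟩ := hzdiv C hCpos m
    refine ⟨d, ?_⟩
    intro co hco
    rcases lt_trichotomy (co.c v) 0 with hneg | hzero | hpos
    · have hcoups : co ∈ ups := List.mem_filter.2 ⟨hco, by simpa using hneg⟩
      rw [upper_iff hneg hCpos (hCdvd co hco (by omega)) y d]
      rcases hUp co hcoups with ⟨hstrict, hle⟩
      cases hs : co.strict with
      | false =>
        simp only [Bool.false_eq_true, if_false]
        rw [hd]; exact hle
      | true =>
        simp only [if_true]
        rw [hd]; exact hstrict hs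
    · have hel : co ∈ elim1 v S := mem_elim1.2 (Or.inl ⟨hco, hzero⟩)
      refine (holdsC_congr_of_ne (fun i hi => ?_)).2 (h co hel)
      have : i ≠ v := fun hiv => hi (hiv ▸ hzero)
      rw [Function.update_of_ne this]
    · have hcolows : co ∈ lows := List.mem_filter.2 ⟨hco, by simpa using hpos⟩
      rw [lower_iff hpos hCpos (hCdvd co hco (by omega)) y d]
      rcases hLo co hcolows with ⟨hstrict, hle⟩
      cases hs : co.strict with
      | false =>
        simp only [Bool.false_eq_true, if_false]
        rw [hd]; exact hle
      | true =>
        simp only [if_true]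
        rw [hd]; exact hstrict hs
  -- now produce the middle value m
  rcases eq_or_ne lows [] with hle | hlne
  · rcases eq_or_ne ups [] with hue | hune
    · exact ⟨0, by rw [hle]; simp, by rw [hue]; simp⟩
    · obtain ⟨cu, hcu, hcumin⟩ : ∃ b ∈ ups, ∀ x ∈ ups, bup v C y b ≤ bup v C y x := by
        obtain ⟨b, hb, hmax⟩ := exists_max_image ups (fun co => -(bup v C y co)) hune
        exact ⟨b, hb, fun x hx => neg_le_neg_iff.1 (hmax x hx)⟩
      refine ⟨bup v C y cu - e, by rw [hle]; simp, ?_⟩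
      intro co hco
      have hlt : bup v C y cu - e < bup v C y co := by
        have := hcumin co hco
        have h2 : bup v C y cu - e < bup v C y cu := by
          have := sub_lt_self (bup v C y cu) he
          exact this
        exact lt_of_lt_of_le h2 this
      exact ⟨fun _ => hlt, hlt.le⟩
  · obtain ⟨cl, hcl, hclmax⟩ := exists_max_image lows (blo v C y) hlne
    rcases eq_or_ne ups [] with hue | hune
    · refine ⟨blo v C y cl + e, ?_, by rw [hue]; simp⟩
      intro co hco
      have hlt : blo v C y co < blo v C y cl + e :=
        lt_of_le_of_lt (hclmax co hco) (lt_add_of_pos_right _ he)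
      exact ⟨fun _ => hlt, hlt.le⟩
    · obtain ⟨cu, hcu, hcumin⟩ : ∃ b ∈ ups, ∀ x ∈ ups, bup v C y b ≤ bup v C y x := by
        obtain ⟨b, hb, hmax⟩ := exists_max_image ups (fun co => -(bup v C y co)) hune
        exact ⟨b, hb, fun x hx => neg_le_neg_iff.1 (hmax x hx)⟩
      have hMN : blo v C y cl ≤ bup v C y cu := (hcross cl hcl cu hcu).1
      rcases lt_or_eq_of_le hMN with hMN' | hMN'
      · obtain ⟨m, hm⟩ := hzdiv 2 (by norm_num) (blo v C y cl + bup v C y cu)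
        have h2M : blo v C y cl < m := by
          have : (2:ℤ) • blo v C y cl < (2:ℤ) • m := by
            rw [hm, two_zsmul]
            exact add_lt_add_right hMN' _
          exact (zsmul_lt_iff (by norm_num)).1 this
        have h2N : m < bup v C y cu := by
          have : (2:ℤ) • m < (2:ℤ) • bup v C y cu := by
            rw [hm, two_zsmul]
            exact add_lt_add_left hMN' _
          exact (zsmul_lt_iff (by norm_num)).1 this
        refine ⟨m, ?_, ?_⟩
        · intro co hco
          have := lt_of_le_of_lt (hclmax co hco) h2M
          exact ⟨fun _ => this, this.le⟩
        · intro co hco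
          have := lt_of_lt_of_le h2N (hcumin co hco)
          exact ⟨fun _ => this, this.le⟩
      · refine ⟨blo v C y cl, ?_, ?_⟩
        · intro co hco
          refine ⟨fun hs => ?_, hclmax co hco⟩
          have hlt : blo v C y co < bup v C y cu :=
            (hcross co hco cu hcu).2 (by rw [hs]; simp)
          rw [← hMN'] at hlt
          exact lt_of_le_of_ne (hclmax co hco) (by intro heq; rw [heq] at hlt; exact lt_irrefl _ hlt)
        · intro co hco
          refine ⟨fun hs => ?_, ?_⟩
          · have hlt : blo v C y cl < bup v C y co :=
              (hcross cl hcl co hco).2 (by rw [hs]; simp)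
            exact hlt
          · rw [hMN']
            exact hcumin co hco
  
end Back2


section ElimList
variable [AddCommGroup D] [LinearOrder D] [IsOrderedAddMonoid D]

def elimList (vs : List ι) (S : List (Cstr ι)) : List (Cstr ι) :=
  match vs with
  | [] => S
  | v :: t => elim1 v (elimList t S)

lemma elimList_forward {vs : List ι} {S : List (Cstr ι)} {y : ι → D} (h : Holds S y) :
    Holds (elimList vs S) y := by
  induction vs with
  | nil => exact h
  | cons v t ih => exact elim1_forward ih

lemma elimList_zero_at {vs : List ι} {S : List (Cstr ι)} :
    ∀ w ∈ vs, ∀ co ∈ elimList vs S, co.c w = 0 := by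
  induction vs with
  | nil => simp
  | cons v t ih =>
    intro w hw co hco
    rcases List.mem_cons.1 hw with rfl | hw
    · exact elim1_zero_at hco
    · exact elim1_preserves_zero (ih w hw) co hco

lemma elimList_backward (hdiv : ∀ n : ℕ, 0 < n → ∀ g : D, ∃ h : D, n • h = g)
    {e : D} (he : 0 < e) (vs : List ι) (S : List (Cstr ι)) (y : ι → D)
    (h : Holds (elimList vs S) y) :
    ∃ y' : ι → D, (∀ i, i ∉ vs → y' i = y i) ∧ Holds S y' := by
  induction vs generalizing y with
  | nil => exact ⟨y, fun i _ => rfl, h⟩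
  | cons v t ih =>
    obtain ⟨d, hd⟩ := elim1_backward hdiv he v (elimList t S) y h
    obtain ⟨y', hy', hS⟩ := ih _ hd
    refine ⟨y', fun i hi => ?_, hS⟩
    have hiv : i ≠ v := fun hiv => hi (hiv ▸ (List.mem_cons_self (a := v) (l := t)))
    have hit : i ∉ t := fun hit => hi (List.mem_cons_of_mem _ hit)
    rw [hy' i hit, Function.update_of_ne hiv]

lemma holds_congr_of_agree {S : List (Cstr ι)} {y y' : ι → D}
    (h : ∀ i, (∃ co ∈ S, co.c i ≠ 0) → y i = y' i) : Holds S y ↔ Holds S y' := by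
  constructor <;> intro hh co hco
  · exact (holdsC_congr_of_ne (fun i hi => h i ⟨co, hco, hi⟩)).1 (hh co hco)
  · exact (holdsC_congr_of_ne (fun i hi => h i ⟨co, hco, hi⟩)).2 (hh co hco)

end ElimList


section Pieces

def unit1 (i : ι) : ι → ℤ := fun j => if j = i then 1 else 0

variable {G : Type*}

lemma evl_unit1 [AddCommGroup G] (i : ι) (y : ι → G) : evl (unit1 i) y = y i := by
  unfold evl unit1
  rw [Finset.sum_eq_single i]
  · simp
  · intro b _ hb
    simp [hb]
  · simp

lemma evl_negc [AddCommGroup G] (ℓ : ι → ℤ) (y : ι → G) :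
    evl (fun j => -(ℓ j)) y = -(evl ℓ y) := by
  simp [evl, neg_zsmul, Finset.sum_neg_distrib]

lemma evl_subc [AddCommGroup G] (ℓ m : ι → ℤ) (y : ι → G) :
    evl (fun j => ℓ j - m j) y = evl ℓ y - evl m y := by
  simp only [sub_eq_add_neg]
  rw [show (fun j => ℓ j + -(m j)) = (fun j => ℓ j + (fun j' => -(m j')) j) from rfl,
    evl_addc, evl_negc]

def pieces : LGrpLang.Term ι → List (List (Cstr ι) × (ι → ℤ))
  | .var i => [([], unit1 i)]
  | .func (l := 0) _ _ => [([], fun _ => 0)]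
  | .func (l := 1) _ ts =>
      (pieces (ts 0)).map (fun P => (P.1, fun j => -(P.2 j)))
  | .func (l := 2) LGrpBin.add ts =>
      (pieces (ts 0)).flatMap (fun P => (pieces (ts 1)).map
        (fun Q => (P.1 ++ Q.1, fun j => P.2 j + Q.2 j)))
  | .func (l := 2) LGrpBin.join ts =>
      (pieces (ts 0)).flatMap (fun P => (pieces (ts 1)).map
        (fun Q => (P.1 ++ Q.1 ++ [⟨fun j => P.2 j - Q.2 j, false⟩], P.2))) ++
      (pieces (ts 0)).flatMap (fun P => (pieces (ts 1)).map
        (fun Q => (P.1 ++ Q.1 ++ [⟨fun j => Q.2 j - P.2 j, false⟩], Q.2)))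
  | .func (l := 2) LGrpBin.meet ts =>
      (pieces (ts 0)).flatMap (fun P => (pieces (ts 1)).map
        (fun Q => (P.1 ++ Q.1 ++ [⟨fun j => Q.2 j - P.2 j, false⟩], P.2))) ++
      (pieces (ts 0)).flatMap (fun P => (pieces (ts 1)).map
        (fun Q => (P.1 ++ Q.1 ++ [⟨fun j => P.2 j - Q.2 j, false⟩], Q.2)))
  | .func (l := _+3) f _ => f.elim

lemma pieces_complete [AddCommGroup G] [LinearOrder G] [IsOrderedAddMonoid G] :
    ∀ (t : LGrpLang.Term ι) (y : ι → G), ∃ P ∈ pieces t,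
      Holds P.1 y ∧ Term.realize y t = evl P.2 y := by
  intro t
  induction t with
  | var i =>
    intro y
    refine ⟨([], unit1 i), by simp [pieces], fun co hco => absurd hco (by simp), ?_⟩
    simp [Term.realize, evl_unit1]
  | @func l f ts ih =>
    match l, f with
    | 0, f =>
      intro y
      refine ⟨([], fun _ => 0), by simp [pieces], fun co hco => absurd hco (by simp), ?_⟩
      rw [evl_zero_coeffs (fun _ => rfl)]
      rfl
    | 1, f =>
      intro y
      obtain ⟨P, hP, hH, hV⟩ := ih 0 y
      refine ⟨(P.1, fun j => -(P.2 j)), ?_, hH, ?_⟩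
      · simp only [pieces, List.mem_map]
        exact ⟨P, hP, rfl⟩
      · show -(Term.realize y (ts 0)) = _
        rw [hV, evl_negc]
    | 2, LGrpBin.add =>
      intro y
      obtain ⟨P, hP, hHP, hVP⟩ := ih 0 y
      obtain ⟨Q, hQ, hHQ, hVQ⟩ := ih 1 y
      refine ⟨(P.1 ++ Q.1, fun j => P.2 j + Q.2 j), ?_, holds_append.2 ⟨hHP, hHQ⟩, ?_⟩
      · simp only [pieces, List.mem_flatMap, List.mem_map]
        exact ⟨P, hP, Q, hQ, rfl⟩
      · show Term.realize y (ts 0) + Term.realize y (ts 1) = _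
        rw [hVP, hVQ, ← evl_addc]
    | 2, LGrpBin.join =>
      intro y
      obtain ⟨P, hP, hHP, hVP⟩ := ih 0 y
      obtain ⟨Q, hQ, hHQ, hVQ⟩ := ih 1 y
      rcases le_total (Term.realize y (ts 1)) (Term.realize y (ts 0)) with hle | hle
      · refine ⟨(P.1 ++ Q.1 ++ [⟨fun j => P.2 j - Q.2 j, false⟩], P.2), ?_, ?_, ?_⟩
        · simp only [pieces, List.mem_append, List.mem_flatMap, List.mem_map]
          exact Or.inl ⟨P, hP, Q, hQ, rfl⟩
        · refine holds_append.2 ⟨holds_append.2 ⟨hHP, hHQ⟩, ?_⟩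
          intro co hco
          rw [List.mem_singleton] at hco
          subst hco
          show (0:G) ≤ evl _ y
          rw [evl_subc, ← hVP, ← hVQ, sub_nonneg]
          exact hle
        · show Term.realize y (ts 0) ⊔ Term.realize y (ts 1) = _
          rw [sup_eq_left.2 hle, hVP]
      · refine ⟨(P.1 ++ Q.1 ++ [⟨fun j => Q.2 j - P.2 j, false⟩], Q.2), ?_, ?_, ?_⟩
        · simp only [pieces, List.mem_append, List.mem_flatMap, List.mem_map]
          exact Or.inr ⟨P, hP, Q, hQ, rfl⟩
        · refine holds_append.2 ⟨holds_append.2 ⟨hHP, hHQ⟩, ?_⟩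
          intro co hco
          rw [List.mem_singleton] at hco
          subst hco
          show (0:G) ≤ evl _ y
          rw [evl_subc, ← hVP, ← hVQ, sub_nonneg]
          exact hle
        · show Term.realize y (ts 0) ⊔ Term.realize y (ts 1) = _
          rw [sup_eq_right.2 hle, hVQ]
    | 2, LGrpBin.meet =>
      intro y
      obtain ⟨P, hP, hHP, hVP⟩ := ih 0 y
      obtain ⟨Q, hQ, hHQ, hVQ⟩ := ih 1 y
      rcases le_total (Term.realize y (ts 0)) (Term.realize y (ts 1)) with hle | hle
      · refine ⟨(P.1 ++ Q.1 ++ [⟨fun j => Q.2 j - P.2 j, false⟩], P.2), ?_, ?_, ?_⟩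
        · simp only [pieces, List.mem_append, List.mem_flatMap, List.mem_map]
          exact Or.inl ⟨P, hP, Q, hQ, rfl⟩
        · refine holds_append.2 ⟨holds_append.2 ⟨hHP, hHQ⟩, ?_⟩
          intro co hco
          rw [List.mem_singleton] at hco
          subst hco
          show (0:G) ≤ evl _ y
          rw [evl_subc, ← hVP, ← hVQ, sub_nonneg]
          exact hle
        · show Term.realize y (ts 0) ⊓ Term.realize y (ts 1) = _
          rw [inf_eq_left.2 hle, hVP]
      · refine ⟨(P.1 ++ Q.1 ++ [⟨fun j => P.2 j - Q.2 j, false⟩], Q.2), ?_, ?_, ?_⟩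
        · simp only [pieces, List.mem_append, List.mem_flatMap, List.mem_map]
          exact Or.inr ⟨P, hP, Q, hQ, rfl⟩
        · refine holds_append.2 ⟨holds_append.2 ⟨hHP, hHQ⟩, ?_⟩
          intro co hco
          rw [List.mem_singleton] at hco
          subst hco
          show (0:G) ≤ evl _ y
          rw [evl_subc, ← hVP, ← hVQ, sub_nonneg]
          exact hle
        · show Term.realize y (ts 0) ⊓ Term.realize y (ts 1) = _
          rw [inf_eq_right.2 hle, hVQ]
    | (n+3), f => exact f.elim

end Pieces


section Sound
variable {G : Type*}

lemma pieces_sound [AddCommGroup G] [LinearOrder G] [IsOrderedAddMonoid G] :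
    ∀ (t : LGrpLang.Term ι), ∀ P ∈ pieces t, ∀ y : ι → G,
      Holds P.1 y → Term.realize y t = evl P.2 y := by
  intro t
  induction t with
  | var i =>
    intro P hP y _
    simp only [pieces, List.mem_singleton] at hP
    subst hP
    simp [Term.realize, evl_unit1]
  | @func l f ts ih =>
    match l, f with
    | 0, f =>
      intro P hP y _
      simp only [pieces, List.mem_singleton] at hP
      subst hP
      rw [evl_zero_coeffs (fun _ => rfl)]
      rfl
    | 1, f =>
      intro P hP y hH
      simp only [pieces, List.mem_map] at hP
      obtain ⟨Q, hQ, rfl⟩ := hP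
      show -(Term.realize y (ts 0)) = _
      rw [ih 0 Q hQ y hH, evl_negc]
    | 2, LGrpBin.add =>
      intro P hP y hH
      simp only [pieces, List.mem_flatMap, List.mem_map] at hP
      obtain ⟨Q, hQ, R, hR, rfl⟩ := hP
      rw [holds_append] at hH
      show Term.realize y (ts 0) + Term.realize y (ts 1) = _
      rw [ih 0 Q hQ y hH.1, ih 1 R hR y hH.2, ← evl_addc]
    | 2, LGrpBin.join =>
      intro P hP y hH
      simp only [pieces, List.mem_append, List.mem_flatMap, List.mem_map] at hP
      show Term.realize y (ts 0) ⊔ Term.realize y (ts 1) = _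
      rcases hP with ⟨Q, hQ, R, hR, rfl⟩ | ⟨Q, hQ, R, hR, rfl⟩ <;>
        rw [holds_append] at hH <;>
        [rcases hH with ⟨hH1, hH2⟩; rcases hH with ⟨hH1, hH2⟩] <;>
        rw [holds_append] at hH1 <;>
        [rcases hH1 with ⟨hHQ, hHR⟩; rcases hH1 with ⟨hHQ, hHR⟩]
      · have hguard := hH2 _ (List.mem_singleton_self _)
        have : (0:G) ≤ evl (fun j => Q.2 j - R.2 j) y := hguard
        rw [evl_subc, sub_nonneg] at this
        rw [ih 0 Q hQ y hHQ, ih 1 R hR y hHR]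
        exact sup_eq_left.2 this
      · have hguard := hH2 _ (List.mem_singleton_self _)
        have : (0:G) ≤ evl (fun j => R.2 j - Q.2 j) y := hguard
        rw [evl_subc, sub_nonneg] at this
        rw [ih 0 Q hQ y hHQ, ih 1 R hR y hHR]
        exact sup_eq_right.2 this
    | 2, LGrpBin.meet =>
      intro P hP y hH
      simp only [pieces, List.mem_append, List.mem_flatMap, List.mem_map] at hP
      show Term.realize y (ts 0) ⊓ Term.realize y (ts 1) = _
      rcases hP with ⟨Q, hQ, R, hR, rfl⟩ | ⟨Q, hQ, R, hR, rfl⟩ <;>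
        rw [holds_append] at hH <;>
        [rcases hH with ⟨hH1, hH2⟩; rcases hH with ⟨hH1, hH2⟩] <;>
        rw [holds_append] at hH1 <;>
        [rcases hH1 with ⟨hHQ, hHR⟩; rcases hH1 with ⟨hHQ, hHR⟩]
      · have hguard := hH2 _ (List.mem_singleton_self _)
        have : (0:G) ≤ evl (fun j => R.2 j - Q.2 j) y := hguard
        rw [evl_subc, sub_nonneg] at this
        rw [ih 0 Q hQ y hHQ, ih 1 R hR y hHR]
        exact inf_eq_left.2 this
      · have hguard := hH2 _ (List.mem_singleton_self _)
        have : (0:G) ≤ evl (fun j => Q.2 j - R.2 j) y := hguard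
        rw [evl_subc, sub_nonneg] at this
        rw [ih 0 Q hQ y hHQ, ih 1 R hR y hHR]
        exact inf_eq_right.2 this
    | (n+3), f => exact f.elim

end Sound


section EqSystems
variable {G : Type*}

def eqSystems : List (LGrpLang.Term ι × LGrpLang.Term ι) → List (List (Cstr ι))
  | [] => [([] : List (Cstr ι))]
  | (s, t) :: rest =>
    (pieces s).flatMap fun P => (pieces t).flatMap fun Q =>
      (eqSystems rest).map fun R =>
        P.1 ++ Q.1 ++ [⟨fun j => P.2 j - Q.2 j, false⟩, ⟨fun j => Q.2 j - P.2 j, false⟩] ++ R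

lemma eqSystems_sound [AddCommGroup G] [LinearOrder G] [IsOrderedAddMonoid G] :
    ∀ (L : List (LGrpLang.Term ι × LGrpLang.Term ι)), ∀ S ∈ eqSystems L, ∀ y : ι → G,
      Holds S y → ∀ p ∈ L, Term.realize y p.1 = Term.realize y p.2 := by
  intro L
  induction L with
  | nil => intro S _ y _ p hp; exact absurd hp (by simp)
  | cons st rest ih =>
    intro S hS y hH p hp
    obtain ⟨s, t⟩ := st
    simp only [eqSystems, List.mem_flatMap, List.mem_map] at hS
    obtain ⟨P, hP, Q, hQ, R, hR, rfl⟩ := hS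
    rw [holds_append, holds_append, holds_append] at hH
    obtain ⟨⟨⟨hHP, hHQ⟩, hHg⟩, hHR⟩ := hH
    rcases List.mem_cons.1 hp with rfl | hp
    · have h1 : holdsC (⟨fun j => P.2 j - Q.2 j, false⟩ : Cstr ι) y := hHg _ (by simp)
      have h2 : holdsC (⟨fun j => Q.2 j - P.2 j, false⟩ : Cstr ι) y := hHg _ (by simp)
      simp only [holdsC, Bool.false_eq_true, if_false] at h1 h2
      rw [evl_subc, sub_nonneg] at h1 h2
      show Term.realize y s = Term.realize y t
      rw [pieces_sound s P hP y hHP, pieces_sound t Q hQ y hHQ]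
      exact le_antisymm h2 h1
    · exact ih R hR y hHR p hp

lemma eqSystems_complete [AddCommGroup G] [LinearOrder G] [IsOrderedAddMonoid G] :
    ∀ (L : List (LGrpLang.Term ι × LGrpLang.Term ι)) (y : ι → G),
      (∀ p ∈ L, Term.realize y p.1 = Term.realize y p.2) →
      ∃ S ∈ eqSystems L, Holds S y := by
  intro L
  induction L with
  | nil => intro y _; exact ⟨[], by simp [eqSystems], fun co hco => absurd hco (by simp)⟩
  | cons st rest ih =>
    intro y hy
    obtain ⟨s, t⟩ := st
    obtain ⟨P, hP, hHP, hVP⟩ := pieces_complete s y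
    obtain ⟨Q, hQ, hHQ, hVQ⟩ := pieces_complete t y
    obtain ⟨R, hR, hHR⟩ := ih y (fun p hp => hy p (List.mem_cons_of_mem _ hp))
    have hval : Term.realize y s = Term.realize y t := hy (s, t) (List.mem_cons_self)
    refine ⟨P.1 ++ Q.1 ++ [⟨fun j => P.2 j - Q.2 j, false⟩, ⟨fun j => Q.2 j - P.2 j, false⟩]
      ++ R, ?_, ?_⟩
    · simp only [eqSystems, List.mem_flatMap, List.mem_map]
      exact ⟨P, hP, Q, hQ, R, hR, rfl⟩
    · rw [holds_append, holds_append, holds_append]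
      refine ⟨⟨⟨hHP, hHQ⟩, ?_⟩, hHR⟩
      intro co hco
      rcases List.mem_cons.1 hco with rfl | hco
      · show (0:G) ≤ evl _ y
        rw [evl_subc, ← hVP, ← hVQ, sub_nonneg, hval]
      · rw [List.mem_singleton] at hco
        subst hco
        show (0:G) ≤ evl _ y
        rw [evl_subc, ← hVP, ← hVQ, sub_nonneg, hval]

end EqSystems


section Primes
variable {A : Type*} [Lattice A] [AddCommGroup A] [CovariantClass A A (· + ·) (· ≤ ·)]

lemma abs_eq_zero' {a : A} (h : |a| = 0) : a = 0 := by
  have h1 : a ≤ 0 := by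
    have : a ≤ |a| := le_sup_left
    rw [h] at this; exact this
  have h2 : -a ≤ 0 := by
    have : -a ≤ |a| := le_sup_right
    rw [h] at this; exact this
  exact le_antisymm h1 (neg_nonpos.1 h2)

/-- A solid subgroup (ℓ-ideal). -/
def IsSolid (P : AddSubgroup A) : Prop := ∀ x ∈ P, ∀ y : A, |y| ≤ |x| → y ∈ P

lemma abs_mem_of_mem {P : AddSubgroup A} (hP : IsSolid P) {x : A} (hx : x ∈ P) : |x| ∈ P :=
  hP x hx |x| (by rw [abs_abs])

/-- Disjointness is preserved by addition. -/
lemma inf_zero_add {x y u : A} (hx : 0 ≤ x) (hy : 0 ≤ y) (hu : 0 ≤ u)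
    (hxy : x ⊓ y = 0) (huy : u ⊓ y = 0) : (u + x) ⊓ y = 0 := by
  have h0 : 0 ≤ (u + x) ⊓ y := le_inf (add_nonneg hu hx) hy
  have h1 : (u + x) ⊓ y ≤ (u + x) ⊓ (y + x) := inf_le_inf_left _ (le_add_of_nonneg_right hx)
  have h2 : (u + x) ⊓ (y + x) = (u ⊓ y) + x := by
    rw [add_comm u x, add_comm y x, ← add_inf, add_comm]
  have h3 : (u + x) ⊓ y ≤ x := by
    rw [huy, zero_add] at h2
    exact h1.trans_eq h2
  have h4 : (u + x) ⊓ y ≤ x ⊓ y := le_inf h3 inf_le_right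
  rw [hxy] at h4
  exact le_antisymm h4 h0

lemma inf_zero_nsmul_right {x y : A} (hx : 0 ≤ x) (hy : 0 ≤ y) (hxy : x ⊓ y = 0) (K : ℕ) :
    x ⊓ (K • y) = 0 := by
  induction K with
  | zero =>
    rw [zero_nsmul]
    exact inf_eq_right.2 hx
  | succ k ih =>
    have hyx : y ⊓ x = 0 := by rw [inf_comm]; exact hxy
    have hihc : (k • y) ⊓ x = 0 := by rw [inf_comm]; exact ih
    rw [succ_nsmul, inf_comm]
    exact inf_zero_add hy hx (nsmul_nonneg hy k) hyx hihc
lemma nsmul_inf_zero {x y : A} (hx : 0 ≤ x) (hy : 0 ≤ y) (hxy : x ⊓ y = 0) (K : ℕ) :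
    (K • x) ⊓ (K • y) = 0 := by
  have h1 : x ⊓ (K • y) = 0 := inf_zero_nsmul_right hx hy hxy K
  have h2 : (K • y) ⊓ x = 0 := by rw [inf_comm]; exact h1
  have h3 : (K • y) ⊓ (K • x) = 0 :=
    inf_zero_nsmul_right (nsmul_nonneg hy K) hx h2 K
  rw [inf_comm]; exact h3

/-- Existence of a prime solid subgroup avoiding a given positive element. -/
lemma exists_prime_solid (a : A) (ha : a ≠ 0) :
    ∃ P : AddSubgroup A, IsSolid P ∧ a ∉ P ∧
      ∀ x y : A, 0 ≤ x → 0 ≤ y → x ⊓ y = 0 → x ∈ P ∨ y ∈ P := by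
  classical
  set 𝒮 : Set (AddSubgroup A) := {P | IsSolid P ∧ a ∉ P} with h𝒮
  have hbot : (⊥ : AddSubgroup A) ∈ 𝒮 := by
    constructor
    · intro x hx y hy
      rw [AddSubgroup.mem_bot] at hx ⊢
      subst hx
      rw [abs_zero] at hy
      exact abs_eq_zero' (le_antisymm hy (abs_nonneg y))
    · rw [AddSubgroup.mem_bot]; exact ha
  obtain ⟨P, hPmaximal⟩ := zorn_le₀ 𝒮 (fun c hcs hchain => by
    rcases c.eq_empty_or_nonempty with rfl | ⟨y0, hy0⟩
    · exact ⟨⊥, hbot, fun z hz => absurd hz (by simp)⟩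
    · refine ⟨{ carrier := ⋃ Q ∈ c, (Q : Set A)
                zero_mem' := Set.mem_biUnion hy0 (zero_mem y0)
                add_mem' := ?_
                neg_mem' := ?_ }, ⟨?_, ?_⟩, ?_⟩
      · rintro g h hg hh
        simp only [Set.mem_iUnion] at hg hh ⊢
        obtain ⟨Q1, hQ1, hgQ⟩ := hg
        obtain ⟨Q2, hQ2, hhQ⟩ := hh
        rcases eq_or_ne Q1 Q2 with rfl | hne
        · exact ⟨Q1, hQ1, add_mem hgQ hhQ⟩
        · rcases hchain hQ1 hQ2 hne with hle | hle
          · exact ⟨Q2, hQ2, add_mem (hle hgQ) hhQ⟩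
          · exact ⟨Q1, hQ1, add_mem hgQ (hle hhQ)⟩
      · rintro g hg
        simp only [Set.mem_iUnion] at hg ⊢
        obtain ⟨Q1, hQ1, hgQ⟩ := hg
        exact ⟨Q1, hQ1, neg_mem hgQ⟩
      · intro x hx z hz
        simp only [AddSubgroup.mem_mk, AddSubmonoid.mem_mk, AddSubsemigroup.mem_mk, Set.mem_iUnion] at hx ⊢
        obtain ⟨Q1, hQ1, hxQ⟩ := hx
        exact ⟨Q1, hQ1, (hcs hQ1).1 x hxQ z hz⟩
      · intro hmem
        simp only [AddSubgroup.mem_mk, AddSubmonoid.mem_mk, AddSubsemigroup.mem_mk, Set.mem_iUnion] at hmem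
        obtain ⟨Q1, hQ1, haQ⟩ := hmem
        exact (hcs hQ1).2 haQ
      · intro Q hQ g hg
        simp only [AddSubgroup.mem_mk, AddSubmonoid.mem_mk, AddSubsemigroup.mem_mk, Set.mem_iUnion]
        exact ⟨Q, hQ, hg⟩)
  obtain ⟨hP𝒮, hPmax⟩ := hPmaximal
  obtain ⟨hPsolid, haP⟩ := hP𝒮
  refine ⟨P, hPsolid, haP, ?_⟩
  intro x y hx hy hxy
  by_contra hcon
  push_neg at hcon
  obtain ⟨hxP, hyP⟩ := hcon
  -- the solid subgroup generated by P and a positive element u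
  have key : ∀ u : A, 0 ≤ u → u ∉ P →
      ∃ p ∈ P, 0 ≤ p ∧ ∃ k : ℕ, |a| ≤ p + k • u := by
    intro u hu huP
    set Q : AddSubgroup A :=
      { carrier := {g | ∃ p ∈ P, 0 ≤ p ∧ ∃ k : ℕ, |g| ≤ p + k • u}
        zero_mem' := ⟨0, zero_mem P, le_refl 0, 0, by simp⟩
        add_mem' := by
          rintro g h ⟨p1, hp1, hp1n, k1, hk1⟩ ⟨p2, hp2, hp2n, k2, hk2⟩
          refine ⟨p1 + p2, add_mem hp1 hp2, add_nonneg hp1n hp2n, k1 + k2, ?_⟩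
          calc |g + h| ≤ |g| + |h| := abs_add_le g h
            _ ≤ (p1 + k1 • u) + (p2 + k2 • u) := add_le_add hk1 hk2
            _ = p1 + p2 + (k1 + k2) • u := by rw [add_nsmul]; abel
        neg_mem' := by
          rintro g ⟨p1, hp1, hp1n, k1, hk1⟩
          exact ⟨p1, hp1, hp1n, k1, by rwa [abs_neg]⟩ } with hQdef
    have hQsolid : IsSolid Q := by
      rintro g ⟨p1, hp1, hp1n, k1, hk1⟩ z hz
      exact ⟨p1, hp1, hp1n, k1, hz.trans hk1⟩
    have hPQ : P ≤ Q := by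
      intro g hg
      exact ⟨|g|, abs_mem_of_mem hPsolid hg, abs_nonneg g, 0, by simp⟩
    have huQ : u ∈ Q := ⟨0, zero_mem P, le_refl 0, 1, by rw [abs_of_nonneg hu]; simp⟩
    have haQ : a ∈ Q := by
      by_contra haQ
      have hQP : Q ≤ P := hPmax ⟨hQsolid, haQ⟩ hPQ
      exact huP (hQP huQ)
    exact haQ
  obtain ⟨p1, hp1, hp1n, k1, hk1⟩ := key x hx hxP
  obtain ⟨p2, hp2, hp2n, k2, hk2⟩ := key y hy hyP
  set K := max k1 k2 with hK
  have hb1 : p1 + k1 • x ≤ p1 + p2 + K • x := by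
    have h1 : k1 • x ≤ K • x := nsmul_le_nsmul_left hx (le_max_left k1 k2)
    calc p1 + k1 • x ≤ p1 + K • x := add_le_add_right h1 p1
      _ ≤ p1 + p2 + K • x := by
        have := add_le_add_right (add_le_add_left hp2n p1) (K • x)
        simpa [add_zero] using this
  have hb2 : p2 + k2 • y ≤ p1 + p2 + K • y := by
    have h1 : k2 • y ≤ K • y := nsmul_le_nsmul_left hy (le_max_right k1 k2)
    calc p2 + k2 • y ≤ p2 + K • y := add_le_add_right h1 p2
      _ ≤ p1 + p2 + K • y := by
        have := add_le_add_right (add_le_add_right hp1n p2) (K • y)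
        simpa [zero_add, add_comm p1 p2] using this
  have habs : |a| ≤ p1 + p2 := by
    have h1 : |a| ≤ (p1 + p2 + K • x) ⊓ (p1 + p2 + K • y) :=
      le_inf (hk1.trans hb1) (hk2.trans hb2)
    rwa [← add_inf, nsmul_inf_zero hx hy hxy K, add_zero] at h1
  have hsum : p1 + p2 ∈ P := add_mem hp1 hp2
  have : a ∈ P := by
    apply hPsolid (p1 + p2) hsum a
    rwa [abs_of_nonneg (add_nonneg hp1n hp2n)]
  exact haP this

lemma le_abs_self' (a : A) : a ≤ |a| := le_sup_left

lemma posPart_lipschitz (a b : A) : |a⁺ - b⁺| ≤ |a - b| := by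
  have key : ∀ u v : A, u⁺ - v⁺ ≤ |u - v| := by
    intro u v
    have h1 : u ≤ v + |u - v| := by
      have := le_abs_self' (u - v)
      have h2 : u - v + v ≤ |u - v| + v := add_le_add_left this v
      rw [sub_add_cancel] at h2
      rw [add_comm]
      exact h2
    have h0 : (0:A) ≤ 0 + |u - v| := by
      rw [zero_add]; exact abs_nonneg _
    have hsup : u ⊔ 0 ≤ (v + |u - v|) ⊔ (0 + |u - v|) := sup_le_sup h1 h0
    rw [← sup_add] at hsup
    have : u⁺ ≤ v⁺ + |u - v| := hsup
    exact sub_le_iff_le_add'.2 this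
  have h1 := key a b
  have h2 := key b a
  rw [abs_sub_comm] at h2
  apply sup_le h1
  rw [neg_sub]
  exact h2

lemma posPart_mem_wd {P : AddSubgroup A} (hsolid : IsSolid P) {g g' : A}
    (hgg' : -g + g' ∈ P) : (-g)⁺ ∈ P ↔ (-g')⁺ ∈ P := by
  have hd : (-g)⁺ - (-g')⁺ ∈ P := by
    apply hsolid (-g + g') hgg'
    have := posPart_lipschitz (-g) (-g')
    have heq : (-g) - (-g') = -g + g' := by abel
    rw [heq] at this
    exact this
  constructor
  · intro h
    have := AddSubgroup.sub_mem P h hd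
    have heq : (-g)⁺ - ((-g)⁺ - (-g')⁺) = (-g')⁺ := by abel
    rwa [heq] at this
  · intro h
    have := AddSubgroup.add_mem P hd h
    have heq : ((-g)⁺ - (-g')⁺) + (-g')⁺ = (-g)⁺ := by abel
    rwa [heq] at this

lemma posPart_add_le' (a b : A) : (a + b)⁺ ≤ a⁺ + b⁺ := by
  apply sup_le
  · exact add_le_add (le_posPart a) (le_posPart b)
  · exact add_nonneg (posPart_nonneg a) (posPart_nonneg b)

lemma posPart_sub_eq (g h : A) : (g - h)⁺ = (g ⊔ h) - h := by
  rw [sup_sub, sub_self]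
  rfl

lemma exists_loag_hom (A : Type) [Lattice A] [AddCommGroup A]
    [CovariantClass A A (· + ·) (· ≤ ·)] (a : A) (ha : 0 < a) :
    ∃ (B : Type) (_ : AddCommGroup B) (_ : LinearOrder B) (_ : IsOrderedAddMonoid B) (q : A →+ B),
      (∀ g h : A, q (g ⊔ h) = q g ⊔ q h) ∧ (∀ g h : A, q (g ⊓ h) = q g ⊓ q h) ∧ 0 < q a := by
  classical
  obtain ⟨P, hsolid, haP, hprime⟩ := exists_prime_solid a (ne_of_gt ha)
  set C : AddGroupCone (A ⧸ P) :=
    { carrier := {x | ∃ g : A, (QuotientAddGroup.mk g : A ⧸ P) = x ∧ (-g)⁺ ∈ P}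
      zero_mem' := ⟨0, rfl, by simp [zero_mem]⟩
      add_mem' := by
        rintro x y ⟨g, rfl, hg⟩ ⟨h, rfl, hh⟩
        refine ⟨g + h, rfl, ?_⟩
        apply hsolid ((-g)⁺ + (-h)⁺) (AddSubgroup.add_mem P hg hh)
        rw [abs_of_nonneg (posPart_nonneg _),
          abs_of_nonneg (add_nonneg (posPart_nonneg _) (posPart_nonneg _))]
        rw [neg_add]
        exact posPart_add_le' (-g) (-h)
      eq_zero_of_mem_of_neg_mem' := by
        rintro x ⟨g, rfl, hg⟩ ⟨h, hmk, hh⟩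
        have hrel : -h + (-g) ∈ P := by
          rw [← QuotientAddGroup.eq]
          rw [hmk]
          rfl
        have hgpos : g⁺ ∈ P := by
          have := (posPart_mem_wd hsolid hrel).1 hh
          rwa [neg_neg] at this
        have habs : |g| ∈ P := by
          have := AddSubgroup.add_mem P hgpos hg
          rw [show (-g)⁺ = g⁻ from rfl] at this
          rwa [posPart_add_negPart] at this
        have : g ∈ P := hsolid |g| habs g (by rw [abs_abs])
        exact (QuotientAddGroup.eq_zero_iff g).2 this } with hCdef
  haveI hmax : HasMemOrNegMem C := by
    constructor
    intro x
    induction x using QuotientAddGroup.induction_on with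
    | H g =>
      rcases hprime (g⁺) ((-g)⁺) (posPart_nonneg g) (posPart_nonneg (-g))
          (by rw [show (-g)⁺ = g⁻ from rfl]; exact posPart_inf_negPart_eq_zero g) with h | h
      · right
        exact ⟨-g, rfl, by rwa [neg_neg]⟩
      · left
        exact ⟨g, rfl, h⟩
  letI instB : LinearOrder (A ⧸ P) := LinearOrder.mkOfAddGroupCone C
  haveI instB2 : IsOrderedAddMonoid (A ⧸ P) := IsOrderedAddMonoid.mkOfCone C
  have h0le : ∀ g : A, (0 ≤ (QuotientAddGroup.mk g : A ⧸ P)) ↔ (-g)⁺ ∈ P := by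
    intro g
    have hle : (0 ≤ (QuotientAddGroup.mk g : A ⧸ P)) ↔
        ((QuotientAddGroup.mk g : A ⧸ P) - 0) ∈ C := Iff.rfl
    rw [hle, sub_zero]
    constructor
    · rintro ⟨g', hmk, hg'⟩
      have hrel : -g' + g ∈ P := by rw [← QuotientAddGroup.eq, hmk]
      exact (posPart_mem_wd hsolid hrel).1 hg'
    · intro h
      exact ⟨g, rfl, h⟩
  set q : A →+ A ⧸ P := QuotientAddGroup.mk' P with hqdef
  have hmono : ∀ g h : A, g ≤ h → q g ≤ q h := by
    intro g h hgh
    have : (0 : A ⧸ P) ≤ q (h - g) := by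
      rw [show q (h - g) = QuotientAddGroup.mk (h - g) from rfl, h0le]
      have : (-(h-g))⁺ = 0 := posPart_eq_zero.2 (by simpa using hgh)
      rw [this]
      exact zero_mem P
    have h2 : q g + 0 ≤ q g + q (h - g) := add_le_add_right this (q g)
    rw [add_zero, ← map_add] at h2
    rw [show g + (h - g) = h by abel] at h2
    exact h2
  have hsup : ∀ g h : A, q (g ⊔ h) = q g ⊔ q h := by
    intro g h
    rcases le_total (q g) (q h) with hle | hle
    · rw [sup_eq_right.2 hle]
      have hp : (g - h)⁺ ∈ P := by
        have : (0:A ⧸ P) ≤ QuotientAddGroup.mk (h - g) := by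
          have h2 : q h - q g = q (h - g) := by rw [map_sub]
          have h3 : (0:A ⧸ P) ≤ q h - q g := sub_nonneg.2 hle
          rw [h2] at h3
          exact h3
        rw [h0le] at this
        rwa [show -(h-g) = g - h by abel] at this
      have hmk : QuotientAddGroup.mk (g ⊔ h) = (QuotientAddGroup.mk h : A ⧸ P) := by
        rw [QuotientAddGroup.eq]
        have heq : -(g ⊔ h) + h = -((g - h)⁺) := by rw [posPart_sub_eq]; abel
        rw [heq]
        exact neg_mem hp
      exact hmk
    · rw [sup_eq_left.2 hle]
      have hp : (h - g)⁺ ∈ P := by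
        have h3 : (0:A ⧸ P) ≤ QuotientAddGroup.mk (g - h) := by
          have h2 : q g - q h = q (g - h) := by rw [map_sub]
          have h4 : (0:A ⧸ P) ≤ q g - q h := sub_nonneg.2 hle
          rw [h2] at h4
          exact h4
        rw [h0le] at h3
        rwa [show -(g-h) = h - g by abel] at h3
      have hmk : QuotientAddGroup.mk (g ⊔ h) = (QuotientAddGroup.mk g : A ⧸ P) := by
        rw [QuotientAddGroup.eq]
        have heq : -(g ⊔ h) + g = -((h - g)⁺) := by
          rw [posPart_sub_eq, sup_comm]
          abel
        rw [heq]
        exact neg_mem hp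
      exact hmk
  have hinf : ∀ g h : A, q (g ⊓ h) = q g ⊓ q h := by
    intro g h
    have hgh : g ⊓ h = -((-g) ⊔ (-h)) := by rw [neg_sup, neg_neg, neg_neg]
    rw [hgh, map_neg, hsup, map_neg, map_neg, neg_sup, neg_neg, neg_neg]
  have hqa : 0 < q a := by
    have h1 : 0 ≤ q a := by
      rw [show q a = QuotientAddGroup.mk a from rfl, h0le]
      have : (-a)⁺ = 0 := posPart_eq_zero.2 (neg_nonpos.2 ha.le)
      rw [this]
      exact zero_mem P
    rcases lt_or_eq_of_le h1 with hlt | heq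
    · exact hlt
    · exact absurd ((QuotientAddGroup.eq_zero_iff a).1 heq.symm) haP
  exact ⟨A ⧸ P, inferInstance, instB, instB2, q, hsup, hinf, hqa⟩
end Primes

section Transfer

lemma realize_hom {G H : Type*} [Lattice G] [AddCommGroup G] [Lattice H] [AddCommGroup H]
    (f : G →+ H) (hsup : ∀ a b : G, f (a ⊔ b) = f a ⊔ f b)
    (hinf : ∀ a b : G, f (a ⊓ b) = f a ⊓ f b)
    {α : Type*} (t : LGrpLang.Term α) (v : α → G) :
    Term.realize (fun i => f (v i)) t = f (Term.realize v t) := by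
  induction t with
  | var i => rfl
  | @func l g ts ih =>
    match l, g with
    | 0, g =>
      show (0 : H) = f 0
      rw [map_zero]
    | 1, g =>
      show -(Term.realize (fun i => f (v i)) (ts 0)) = f (-(Term.realize v (ts 0)))
      rw [ih 0, map_neg]
    | 2, LGrpBin.add =>
      show Term.realize (fun i => f (v i)) (ts 0) + Term.realize (fun i => f (v i)) (ts 1)
        = f (Term.realize v (ts 0) + Term.realize v (ts 1))
      rw [ih 0, ih 1, map_add]
    | 2, LGrpBin.join =>
      show Term.realize (fun i => f (v i)) (ts 0) ⊔ Term.realize (fun i => f (v i)) (ts 1)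
        = f (Term.realize v (ts 0) ⊔ Term.realize v (ts 1))
      rw [ih 0, ih 1, hsup]
    | 2, LGrpBin.meet =>
      show Term.realize (fun i => f (v i)) (ts 0) ⊓ Term.realize (fun i => f (v i)) (ts 1)
        = f (Term.realize v (ts 0) ⊓ Term.realize v (ts 1))
      rw [ih 0, ih 1, hinf]
    | (n+3), g => exact g.elim

variable {B : Type*} [AddCommGroup B] [LinearOrder B] [IsOrderedAddMonoid B]

lemma zsmul_pos_iff_of_pos {b : B} (hb : 0 < b) {k : ℤ} : 0 < k • b ↔ 0 < k := by
  constructor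
  · intro h
    by_contra hk
    push_neg at hk
    have : k • b ≤ 0 := by
      have h2 : 0 ≤ (-k) • b := zsmul_nonneg hb.le (by omega)
      rw [neg_zsmul] at h2
      exact neg_nonneg.1 h2
    exact absurd h (not_lt.2 this)
  · intro h
    exact zsmul_pos hb h

lemma zsmul_nonneg_iff_of_pos {b : B} (hb : 0 < b) {k : ℤ} : 0 ≤ k • b ↔ 0 ≤ k := by
  constructor
  · intro h
    by_contra hk
    push_neg at hk
    have h2 : 0 < (-k) • b := zsmul_pos hb (by omega)
    rw [neg_zsmul] at h2
    have := neg_pos.1 h2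
    exact absurd h (not_le.2 this)
  · intro h
    exact zsmul_nonneg hb.le h

lemma evl_zsmul_point (ℓ : ι → ℤ) (w : ι → ℤ) (b : B) :
    evl ℓ (fun i => w i • b) = (evl ℓ w) • b := by
  unfold evl
  rw [Finset.sum_smul]
  apply Finset.sum_congr rfl
  intro i _
  rw [smul_smul, smul_eq_mul]

lemma holdsC_zsmul_point {b : B} (hb : 0 < b) (co : Cstr ι) (w : ι → ℤ) :
    holdsC co (fun i => w i • b) ↔ holdsC co w := by
  unfold holdsC
  rw [evl_zsmul_point]
  cases hs : co.strict with
  | false =>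
    simp only [Bool.false_eq_true, if_false]
    exact zsmul_nonneg_iff_of_pos hb
  | true =>
    simp only [if_true]
    exact zsmul_pos_iff_of_pos hb

lemma evl_rat_mul (ℓ : ι → ℤ) (N : ℚ) (p : ι → ℚ) :
    evl ℓ (fun i => N * p i) = N * evl ℓ p := by
  unfold evl
  rw [Finset.mul_sum]
  apply Finset.sum_congr rfl
  intro i _
  rw [zsmul_eq_mul, zsmul_eq_mul]
  ring

lemma holdsC_int_of_rat (co : Cstr ι) (p : ι → ℚ) (w : ι → ℤ) (N : ℚ) (hN : 0 < N)
    (hw : ∀ i, (w i : ℚ) = N * p i) (h : holdsC co p) : holdsC co w := by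
  have hcast : ((evl co.c w : ℤ) : ℚ) = N * evl co.c p := by
    have h1 := evl_comm_hom (Int.castAddHom ℚ) co.c w
    simp only [Int.coe_castAddHom] at h1
    rw [h1]
    rw [show (fun i => ((w i : ℤ) : ℚ)) = fun i => N * p i from funext hw]
    exact evl_rat_mul co.c N p
  unfold holdsC at h ⊢
  cases hs : co.strict with
  | true =>
    rw [hs] at h
    simp only [if_true] at h ⊢
    have : (0:ℚ) < N * evl co.c p := mul_pos hN h
    rw [← hcast] at this
    exact_mod_cast this
  | false =>
    rw [hs] at h
    simp only [Bool.false_eq_true, if_false] at h ⊢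
    have : (0:ℚ) ≤ N * evl co.c p := mul_nonneg hN.le h
    rw [← hcast] at this
    exact_mod_cast this

def antiC (co : Cstr ι) : Cstr ι := ⟨fun i => -(co.c i), !co.strict⟩

lemma antiC_holds {co : Cstr ι} {y : ι → B} (h : ¬ holdsC co y) : holdsC (antiC co) y := by
  unfold holdsC antiC at *
  rw [show evl (fun i => -(co.c i)) y = -(evl co.c y) from evl_negc co.c y]
  cases hs : co.strict with
  | true =>
    rw [hs] at h
    simp only [if_true] at h
    simp only [Bool.not_true, Bool.false_eq_true, if_false]
    exact neg_nonneg.2 (not_lt.1 h)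
  | false =>
    rw [hs] at h
    simp only [Bool.false_eq_true, if_false] at h
    simp only [Bool.not_false, if_true]
    exact neg_pos.2 (not_le.1 h)

lemma antiC_not_both {co : Cstr ι} {y : ι → B} (h1 : holdsC co y) (h2 : holdsC (antiC co) y) :
    False := by
  unfold holdsC antiC at *
  rw [show evl (fun i => -(co.c i)) y = -(evl co.c y) from evl_negc co.c y] at h2
  cases hs : co.strict with
  | true =>
    rw [hs] at h1 h2
    simp only [if_true] at h1
    simp only [Bool.not_true, Bool.false_eq_true, if_false] at h2
    have := neg_nonneg.1 h2
    exact absurd h1 (not_lt.2 this)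
  | false =>
    rw [hs] at h1 h2
    simp only [Bool.false_eq_true, if_false] at h1
    simp only [Bool.not_false, if_true] at h2
    have := neg_pos.1 h2
    exact absurd h1 (not_le.2 this)

lemma holdsC_ground_transfer {B2 : Type*} [AddCommGroup B2] [LinearOrder B2] [IsOrderedAddMonoid B2] {co : Cstr ι}
    (hzero : ∀ i, co.c i = 0) {y1 : ι → B} (h : holdsC co y1) (y2 : ι → B2) :
    holdsC co y2 := by
  unfold holdsC at *
  cases hs : co.strict with
  | true =>
    rw [hs] at h
    simp only [if_true] at h
    rw [evl_zero_coeffs hzero] at h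
    exact absurd h (lt_irrefl 0)
  | false =>
    simp only [Bool.false_eq_true, if_false]
    rw [evl_zero_coeffs hzero]

lemma exists_int_scale (p : ι → ℚ) :
    ∃ (w : ι → ℤ) (N : ℚ), 0 < N ∧ ∀ i, (w i : ℚ) = N * p i := by
  classical
  set N : ℕ := ∏ i, (p i).den with hNdef
  have hNpos : 0 < N := Finset.prod_pos (fun i _ => (p i).pos)
  refine ⟨fun i => ((N / (p i).den : ℕ) : ℤ) * (p i).num, (N : ℚ), by positivity, ?_⟩
  intro i
  have hdvd : (p i).den ∣ N := Finset.dvd_prod_of_mem _ (Finset.mem_univ i)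
  have hden : ((p i).den : ℚ) ≠ 0 := by
    exact_mod_cast (p i).den_nz
  show ((((N / (p i).den : ℕ) : ℤ) * (p i).num : ℤ) : ℚ) = (N : ℚ) * p i
  rw [Int.cast_mul, Int.cast_natCast, Nat.cast_div hdvd hden, div_mul_eq_mul_div,
    mul_div_assoc, Rat.num_div_den]

end Transfer


end EFD

open EFD in
/-- If an EFD-sentence has a nontrivial abelian ℓ-group model, then every divisible
linearly ordered abelian group satisfies it. -/
theorem divisible_satisfies_efd (φ : EFDSystem LGrpLang)
    (A : Type) [Lattice A] [AddCommGroup A] [CovariantClass A A (· + ·) (· ≤ ·)]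
    [Nontrivial A] (hA : φ.Satisfies A)
    (D : Type) [AddCommGroup D] [LinearOrder D] [IsOrderedAddMonoid D]
    (hdiv : ∀ n : ℕ, 0 < n → ∀ g : D, ∃ h : D, n • h = g) :
    φ.Satisfies D := by
  classical
  by_cases hDsub : Subsingleton D
  · intro x
    exact ⟨fun _ => 0, fun i => Subsingleton.elim _ _,
      fun z' _ => funext fun j => Subsingleton.elim _ _⟩
  have hDnt : Nontrivial D := not_subsingleton_iff_nontrivial.1 hDsub
  obtain ⟨gD, hgD⟩ := exists_ne (0 : D)
  have heD : (0 : D) < |gD| := abs_pos.2 hgD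
  -- a positive element of A
  obtain ⟨b, hb⟩ := exists_ne (0 : A)
  have hapos : 0 < |b| :=
    lt_of_le_of_ne (abs_nonneg b) (fun h => hb (abs_eq_zero' h.symm))
  set a : A := |b| with hadef
  -- totally ordered quotient of A
  obtain ⟨B, instB0, instB, instB2, q, hqsup, hqinf, hqa⟩ := exists_loag_hom A a hapos
  letI := instB
  -- ordered group structure on A
  letI instOA : IsOrderedAddMonoid A :=
    { add_le_add_left := fun a b h c => by
        rw [add_comm a c, add_comm b c]; exact CovariantClass.elim c h }
  -- the embedding of ℤ into A
  set jA : ℤ →+ A :=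
    { toFun := fun k => k • a
      map_zero' := zero_zsmul a
      map_add' := fun k l => add_zsmul a k l } with hjAdef
  have hjA : ∀ k : ℤ, jA k = k • a := fun k => rfl
  have hjAmono : ∀ {k l : ℤ}, k ≤ l → jA k ≤ jA l := by
    intro k l hkl
    rw [hjA, hjA]
    exact zsmul_le_zsmul_left hapos.le hkl
  have hjAstrict : ∀ {k l : ℤ}, k < l → jA k < jA l := by
    intro k l hkl
    rw [hjA, hjA]
    exact zsmul_lt_zsmul_left hapos hkl
  have hjAsup : ∀ k l : ℤ, jA (k ⊔ l) = jA k ⊔ jA l := by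
    intro k l
    rcases le_total k l with h | h
    · rw [sup_eq_right.2 h, sup_eq_right.2 (hjAmono h)]
    · rw [sup_eq_left.2 h, sup_eq_left.2 (hjAmono h)]
  have hjAinf : ∀ k l : ℤ, jA (k ⊓ l) = jA k ⊓ jA l := by
    intro k l
    rcases le_total k l with h | h
    · rw [inf_eq_left.2 h, inf_eq_left.2 (hjAmono h)]
    · rw [inf_eq_right.2 h, inf_eq_right.2 (hjAmono h)]
  have hjAinj : ∀ {k l : ℤ}, jA k = jA l → k = l := by
    intro k l h
    rcases lt_trichotomy k l with hlt | heq | hlt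
    · exact absurd h (ne_of_lt (hjAstrict hlt))
    · exact heq
    · exact absurd h.symm (ne_of_lt (hjAstrict hlt))
  -- divisibility of ℚ
  have hdivQ : ∀ n : ℕ, 0 < n → ∀ g : ℚ, ∃ h : ℚ, n • h = g := by
    intro n hn g
    refine ⟨g / n, ?_⟩
    rw [nsmul_eq_mul]
    field_simp
  -- the system data
  set L1 : List (LGrpLang.Term (Fin φ.n ⊕ Fin φ.m) × LGrpLang.Term (Fin φ.n ⊕ Fin φ.m)) :=
    (List.finRange φ.r).map (fun i => (φ.lhs i, φ.rhs i)) with hL1def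
  have hmemL1 : ∀ i : Fin φ.r, (φ.lhs i, φ.rhs i) ∈ L1 :=
    fun i => List.mem_map_of_mem (List.mem_finRange i)
  have hL1mem : ∀ p ∈ L1, ∃ i : Fin φ.r, p = (φ.lhs i, φ.rhs i) := by
    intro p hp
    rw [hL1def, List.mem_map] at hp
    obtain ⟨i, _, rfl⟩ := hp
    exact ⟨i, rfl⟩
  set zvars : List (Fin φ.n ⊕ Fin φ.m) := (List.finRange φ.m).map Sum.inr with hzvarsdef
  set xvars : List (Fin φ.n ⊕ Fin φ.m) := (List.finRange φ.n).map Sum.inl with hxvarsdef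
  have hzmem : ∀ j : Fin φ.m, (Sum.inr j : Fin φ.n ⊕ Fin φ.m) ∈ zvars :=
    fun j => List.mem_map_of_mem (List.mem_finRange j)
  have hxnotz : ∀ i : Fin φ.n, (Sum.inl i : Fin φ.n ⊕ Fin φ.m) ∉ zvars := by
    intro i hmem
    rw [hzvarsdef, List.mem_map] at hmem
    obtain ⟨j, _, hj⟩ := hmem
    exact absurd hj (by simp)
  have hcover1 : ∀ v : Fin φ.n ⊕ Fin φ.m, v ∈ xvars ++ zvars := by
    intro v
    rcases v with i | j
    · exact List.mem_append_left _ (List.mem_map_of_mem (List.mem_finRange i))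
    · exact List.mem_append_right _ (hzmem j)
  -- ===================== UNIQUENESS =====================
  have huniq : ∀ (x : Fin φ.n → D) (z z' : Fin φ.m → D),
      (∀ i, Term.realize (Sum.elim x z) (φ.lhs i) = Term.realize (Sum.elim x z) (φ.rhs i)) →
      (∀ i, Term.realize (Sum.elim x z') (φ.lhs i) = Term.realize (Sum.elim x z') (φ.rhs i)) →
      z = z' := by
    intro x z z' hz hz'
    by_contra hne
    obtain ⟨j0, hj0⟩ := Function.ne_iff.1 hne
    set ι2 := (Fin φ.n ⊕ Fin φ.m) ⊕ Fin φ.m with hι2def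
    set g2 : (Fin φ.n ⊕ Fin φ.m) → ι2 :=
      (fun v => match v with
        | Sum.inl i => Sum.inl (Sum.inl i)
        | Sum.inr j => Sum.inr j) with hg2def
    set L2 : List (LGrpLang.Term ι2 × LGrpLang.Term ι2) :=
      L1.map (fun p => (p.1.relabel Sum.inl, p.2.relabel Sum.inl)) ++
      L1.map (fun p => (p.1.relabel g2, p.2.relabel g2)) with hL2def
    set P2 : ι2 → D := Sum.elim (Sum.elim x z) z' with hP2def
    have hP2eq : ∀ p ∈ L2, Term.realize P2 p.1 = Term.realize P2 p.2 := by
      intro p hp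
      rw [hL2def, List.mem_append, List.mem_map, List.mem_map] at hp
      rcases hp with ⟨p1, hp1, rfl⟩ | ⟨p1, hp1, rfl⟩
      · obtain ⟨i, rfl⟩ := hL1mem p1 hp1
        show Term.realize P2 ((φ.lhs i).relabel Sum.inl) = _
        rw [Term.realize_relabel, Term.realize_relabel]
        have hcomp : P2 ∘ Sum.inl = Sum.elim x z := funext fun v => by
          rcases v with i | j <;> rfl
        rw [hcomp]
        exact hz i
      · obtain ⟨i, rfl⟩ := hL1mem p1 hp1
        show Term.realize P2 ((φ.lhs i).relabel g2) = _
        rw [Term.realize_relabel, Term.realize_relabel]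
        have hcomp : P2 ∘ g2 = Sum.elim x z' := funext fun v => by
          rcases v with i | j <;> rfl
        rw [hcomp]
        exact hz' i
    obtain ⟨S2, hS2mem, hS2P2⟩ := eqSystems_complete L2 P2 hP2eq
    set δ : ι2 → ℤ := fun i2 =>
      unit1 (Sum.inr j0 : ι2) i2 - unit1 (Sum.inl (Sum.inr j0) : ι2) i2 with hδdef
    have hδev : ∀ (G : Type) [AddCommGroup G] [LinearOrder G] [IsOrderedAddMonoid G] (y : ι2 → G),
        evl δ y = y (Sum.inr j0) - y (Sum.inl (Sum.inr j0)) := by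
      intro G _ _ _ y
      rw [hδdef]
      rw [show (fun i2 => unit1 (Sum.inr j0 : ι2) i2 - unit1 (Sum.inl (Sum.inr j0) : ι2) i2)
        = (fun i2 => unit1 (Sum.inr j0 : ι2) i2 - unit1 (Sum.inl (Sum.inr j0) : ι2) i2)
        from rfl]
      rw [evl_subc, evl_unit1, evl_unit1]
    obtain ⟨co0, hco0P2, hco0int⟩ : ∃ co0 : Cstr ι2, holdsC co0 P2 ∧
        ∀ w : ι2 → ℤ, holdsC co0 w → w (Sum.inr j0) ≠ w (Sum.inl (Sum.inr j0)) := by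
      rcases lt_or_gt_of_ne hj0 with hlt | hlt
      · refine ⟨⟨δ, true⟩, ?_, ?_⟩
        · show 0 < evl δ P2
          rw [hδev D P2]
          show (0:D) < z' j0 - z j0
          exact sub_pos.2 hlt
        · intro w hw
          have : (0:ℤ) < evl δ w := hw
          rw [hδev ℤ w] at this
          omega
      · refine ⟨⟨fun i2 => -(δ i2), true⟩, ?_, ?_⟩
        · show 0 < evl (fun i2 => -(δ i2)) P2
          rw [evl_negc, hδev D P2]
          show (0:D) < -(z' j0 - z j0)
          rw [neg_sub]
          exact sub_pos.2 hlt
        · intro w hw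
          have : (0:ℤ) < evl (fun i2 => -(δ i2)) w := hw
          rw [evl_negc, hδev ℤ w] at this
          omega
    set S2' : List (Cstr ι2) := co0 :: S2 with hS2'def
    have hS2'P2 : Holds S2' P2 := by
      intro co hco
      rcases List.mem_cons.1 hco with rfl | hco
      · exact hco0P2
      · exact hS2P2 co hco
    set allv2 : List ι2 := ((xvars ++ zvars).map Sum.inl) ++ (List.finRange φ.m).map Sum.inr
      with hallv2def
    have hcover2 : ∀ v : ι2, v ∈ allv2 := by
      intro v
      rcases v with v1 | j
      · exact List.mem_append_left _ (List.mem_map_of_mem (hcover1 v1))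
      · exact List.mem_append_right _ (List.mem_map_of_mem (List.mem_finRange j))
    have hground : Holds (elimList allv2 S2') P2 := elimList_forward hS2'P2
    have hgzero : ∀ co ∈ elimList allv2 S2', ∀ i2 : ι2, co.c i2 = 0 :=
      fun co hco i2 => elimList_zero_at i2 (hcover2 i2) co hco
    have hgQ : Holds (elimList allv2 S2') (fun _ => (0:ℚ)) :=
      fun co hco => holdsC_ground_transfer (hgzero co hco) (hground co hco) _
    obtain ⟨pQ, -, hpQ⟩ :=
      elimList_backward hdivQ one_pos allv2 S2' (fun _ => (0:ℚ)) hgQ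
    obtain ⟨w, N, hN, hw⟩ := exists_int_scale pQ
    have hwH : Holds S2' w := fun co hco => holdsC_int_of_rat co pQ w N hN hw (hpQ co hco)
    have hwS2 : Holds S2 w := fun co hco => hwH co (List.mem_cons_of_mem _ hco)
    have hwco0 : holdsC co0 w := hwH co0 (List.mem_cons_self)
    have hEQ := eqSystems_sound L2 S2 hS2mem w hwS2
    set xI : Fin φ.n → ℤ := fun i => w (Sum.inl (Sum.inl i)) with hxIdef
    set zI : Fin φ.m → ℤ := fun j => w (Sum.inl (Sum.inr j)) with hzIdef
    set zI' : Fin φ.m → ℤ := fun j => w (Sum.inr j) with hzI'def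
    have hsolZ : ∀ i, Term.realize (Sum.elim xI zI) (φ.lhs i)
        = Term.realize (Sum.elim xI zI) (φ.rhs i) := by
      intro i
      have := hEQ ((φ.lhs i).relabel Sum.inl, (φ.rhs i).relabel Sum.inl)
        (by
          rw [hL2def, List.mem_append]
          exact Or.inl (List.mem_map_of_mem (hmemL1 i)))
      rw [Term.realize_relabel, Term.realize_relabel] at this
      have hcomp : w ∘ Sum.inl = Sum.elim xI zI := funext fun v => by
        rcases v with i | j <;> rfl
      rwa [hcomp] at this
    have hsolZ' : ∀ i, Term.realize (Sum.elim xI zI') (φ.lhs i)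
        = Term.realize (Sum.elim xI zI') (φ.rhs i) := by
      intro i
      have := hEQ ((φ.lhs i).relabel g2, (φ.rhs i).relabel g2)
        (by
          rw [hL2def, List.mem_append]
          exact Or.inr (List.mem_map_of_mem (hmemL1 i)))
      rw [Term.realize_relabel, Term.realize_relabel] at this
      have hcomp : w ∘ g2 = Sum.elim xI zI' := funext fun v => by
        rcases v with i | j <;> rfl
      rwa [hcomp] at this
    -- push into A
    set xA : Fin φ.n → A := fun i => jA (xI i) with hxAdef
    set zA : Fin φ.m → A := fun j => jA (zI j) with hzAdef
    set zA' : Fin φ.m → A := fun j => jA (zI' j) with hzA'def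
    have hsolA : ∀ i, Term.realize (Sum.elim xA zA) (φ.lhs i)
        = Term.realize (Sum.elim xA zA) (φ.rhs i) := by
      intro i
      have h1 := realize_hom jA hjAsup hjAinf (φ.lhs i) (Sum.elim xI zI)
      have h2 := realize_hom jA hjAsup hjAinf (φ.rhs i) (Sum.elim xI zI)
      have hcomp : (fun v => jA (Sum.elim xI zI v)) = Sum.elim xA zA := funext fun v => by
        rcases v with i | j <;> rfl
      rw [hcomp] at h1 h2
      rw [h1, h2, hsolZ i]
    have hsolA' : ∀ i, Term.realize (Sum.elim xA zA') (φ.lhs i)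
        = Term.realize (Sum.elim xA zA') (φ.rhs i) := by
      intro i
      have h1 := realize_hom jA hjAsup hjAinf (φ.lhs i) (Sum.elim xI zI')
      have h2 := realize_hom jA hjAsup hjAinf (φ.rhs i) (Sum.elim xI zI')
      have hcomp : (fun v => jA (Sum.elim xI zI' v)) = Sum.elim xA zA' := funext fun v => by
        rcases v with i | j <;> rfl
      rw [hcomp] at h1 h2
      rw [h1, h2, hsolZ' i]
    obtain ⟨zwit, -, hzuniq⟩ := hA xA
    have h1 : zA = zwit := hzuniq zA hsolA
    have h2 : zA' = zwit := hzuniq zA' hsolA'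
    have : zA = zA' := h1.trans h2.symm
    have hj : jA (zI j0) = jA (zI' j0) := congrFun this j0
    exact (hco0int w hwco0).symm (hjAinj hj)
  -- ===================== EXISTENCE =====================
  have hex : ∀ x : Fin φ.n → D, ∃ z : Fin φ.m → D,
      ∀ i, Term.realize (Sum.elim x z) (φ.lhs i) = Term.realize (Sum.elim x z) (φ.rhs i) := by
    intro x
    set x1 : (Fin φ.n ⊕ Fin φ.m) → D := Sum.elim x (fun _ => 0) with hx1def
    set Sys := eqSystems L1 with hSysdef
    set T : List (Cstr (Fin φ.n ⊕ Fin φ.m)) :=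
      Sys.flatMap (fun S => (elimList zvars S).map
        (fun co => if holdsC co x1 then co else antiC co)) with hTdef
    have hTx1 : Holds T x1 := by
      intro co hco
      rw [hTdef, List.mem_flatMap] at hco
      obtain ⟨S, hS, hco⟩ := hco
      rw [List.mem_map] at hco
      obtain ⟨co', hco', rfl⟩ := hco
      by_cases h : holdsC co' x1
      · rwa [if_pos h]
      · rw [if_neg h]
        exact antiC_holds h
    have hTzero : ∀ co ∈ T, ∀ j : Fin φ.m, co.c (Sum.inr j) = 0 := by
      intro co hco j
      rw [hTdef, List.mem_flatMap] at hco
      obtain ⟨S, hS, hco⟩ := hco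
      rw [List.mem_map] at hco
      obtain ⟨co', hco', rfl⟩ := hco
      have hz' : co'.c (Sum.inr j) = 0 :=
        elimList_zero_at _ (hzmem j) co' hco'
      by_cases h : holdsC co' x1
      · rwa [if_pos h]
      · rw [if_neg h]
        show -(co'.c (Sum.inr j)) = 0
        rw [hz', neg_zero]
    have hgroundE : Holds (elimList (xvars ++ zvars) T) x1 := elimList_forward hTx1
    have hgzeroE : ∀ co ∈ elimList (xvars ++ zvars) T, ∀ v, co.c v = 0 :=
      fun co hco v => elimList_zero_at v (hcover1 v) co hco
    have hgQE : Holds (elimList (xvars ++ zvars) T) (fun _ => (0:ℚ)) :=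
      fun co hco => holdsC_ground_transfer (hgzeroE co hco) (hgroundE co hco) _
    obtain ⟨pQ, -, hpQ⟩ :=
      elimList_backward hdivQ one_pos (xvars ++ zvars) T (fun _ => (0:ℚ)) hgQE
    obtain ⟨wI, N, hN, hwN⟩ := exists_int_scale pQ
    have hwT : Holds T wI := fun co hco => holdsC_int_of_rat co pQ wI N hN hwN (hpQ co hco)
    -- the A-side solution at the integer point
    set xA : Fin φ.n → A := fun i => jA (wI (Sum.inl i)) with hxA2def
    obtain ⟨zA, hzA, -⟩ := hA xA
    set yB2 : (Fin φ.n ⊕ Fin φ.m) → B := fun v => q (Sum.elim xA zA v) with hyB2def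
    have hsolB : ∀ p ∈ L1, Term.realize yB2 p.1 = Term.realize yB2 p.2 := by
      intro p hp
      obtain ⟨i, rfl⟩ := hL1mem p hp
      have h1 := realize_hom q hqsup hqinf (φ.lhs i) (Sum.elim xA zA)
      have h2 := realize_hom q hqsup hqinf (φ.rhs i) (Sum.elim xA zA)
      show Term.realize yB2 (φ.lhs i) = Term.realize yB2 (φ.rhs i)
      rw [hyB2def]
      rw [h1, h2, hzA i]
    obtain ⟨S0, hS0mem, hS0B⟩ := eqSystems_complete L1 yB2 hsolB
    have hES0 : Holds (elimList zvars S0) yB2 := elimList_forward hS0B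
    -- transfer the eliminated system back to the D point x1
    have hkey : Holds (elimList zvars S0) x1 := by
      intro co hco
      by_contra hnot
      have hanti : antiC co ∈ T := by
        rw [hTdef, List.mem_flatMap]
        refine ⟨S0, hS0mem, ?_⟩
        rw [List.mem_map]
        exact ⟨co, hco, by rw [if_neg hnot]⟩
      have hantiw : holdsC (antiC co) wI := hwT _ hanti
      have hantiB : holdsC (antiC co) (fun v => wI v • q a) :=
        (holdsC_zsmul_point hqa _ wI).2 hantiw
      have hcozero : ∀ j : Fin φ.m, co.c (Sum.inr j) = 0 :=
        fun j => elimList_zero_at _ (hzmem j) co hco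
      have hcoB : holdsC co (fun v => wI v • q a) := by
        refine (holdsC_congr_of_ne (fun v hv => ?_)).1 (hES0 co hco)
        rcases v with i | j
        · show q (Sum.elim xA zA (Sum.inl i)) = wI (Sum.inl i) • q a
          show q (jA (wI (Sum.inl i))) = _
          rw [hjA, map_zsmul]
        · exact absurd (hcozero j) hv
      exact antiC_not_both hcoB hantiB
    obtain ⟨y', hyagree, hy'⟩ := elimList_backward hdiv heD zvars S0 x1 hkey
    set z : Fin φ.m → D := fun j => y' (Sum.inr j) with hzdef
    have hy'eq : y' = Sum.elim x z := by
      funext v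
      rcases v with i | j
      · rw [hyagree (Sum.inl i) (hxnotz i)]
        rfl
      · rfl
    refine ⟨z, ?_⟩
    intro i
    have := eqSystems_sound L1 S0 hS0mem y' hy' (φ.lhs i, φ.rhs i) (hmemL1 i)
    rwa [hy'eq] at this
  intro x
  obtain ⟨z, hz⟩ := hex x
  exact ⟨z, hz, fun z' hz' => huniq x z' z hz' hz⟩
end

section
/- For every 𝓛_D-term s with variables indexed by Fin n there exist a positive integer k and an 𝓛-term t with variables indexed by Fin n such that for every divisible linearly ordered abelian group D and every a : Fin n → D, one has k • Term.realize a s = Term.realize a t. -/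
open FirstOrder Language

open scoped Classical

/-- Function symbols of the language `𝓛_D`: those of `LGrpLang` together with a unary
division symbol `d_k` for each positive integer `k`. -/
def LDivFunc : ℕ → Type
  | 0 => Unit
  | 1 => Unit ⊕ ℕ+
  | 2 => LGrpBin
  | _ => Empty

/-- The expansion `𝓛_D` of the language of ℓ-groups by a unary division symbol `d_k`
for each positive integer `k`. -/
def LDivLang : FirstOrder.Language :=
  ⟨LDivFunc, fun _ => Empty⟩

/-- The `𝓛_D`-structure on a linearly ordered abelian group, where `d_k` sends `x` to
the unique `z` with `k • z = x` when such a `z` exists (as it does when the group is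
divisible; it is then unique since linearly ordered abelian groups are torsion-free),
and to `0` otherwise. -/
noncomputable instance ldivStructure (D : Type*) [AddCommGroup D] [LinearOrder D]
    [IsOrderedAddMonoid D] :
    LDivLang.Structure D where
  funMap {n} f x :=
    match n, f, x with
    | 0, _, _ => 0
    | 1, Sum.inl _, x => -(x 0)
    | 1, Sum.inr k, x => if h : ∃ z : D, (k : ℕ) • z = x 0 then h.choose else 0
    | 2, LGrpBin.add, x => x 0 + x 1
    | 2, LGrpBin.join, x => x 0 ⊔ x 1
    | 2, LGrpBin.meet, x => x 0 ⊓ x 1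
    | (_+3), f, _ => f.elim
  RelMap {_} r := r.elim

/-- `k • t` as an `LGrpLang`-term, via iterated addition. -/
def smulTerm {α : Type*} : ℕ → LGrpLang.Term α → LGrpLang.Term α
  | 0, _ => Term.func (L := LGrpLang) (l := 0) (Unit.unit : LGrpFunc 0) ![]
  | (k+1), t => Term.func (L := LGrpLang) (l := 2) (LGrpBin.add : LGrpFunc 2) ![t, smulTerm k t]

lemma realize_smulTerm {α : Type*} {G : Type*} [Lattice G] [AddCommGroup G]
    (a : α → G) (k : ℕ) (t : LGrpLang.Term α) :
    Term.realize a (smulTerm k t) = k • Term.realize a t := by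
  induction k with
  | zero => simp [smulTerm]; rfl
  | succ k ih =>
    have : Term.realize a (smulTerm (k+1) t)
        = Term.realize a t + Term.realize a (smulTerm k t) := rfl
    rw [this, ih, succ_nsmul, add_comm]

/-- For every `𝓛_D`-term `s` in variables `Fin n` there are a positive integer `k` and an
`𝓛`-term `t` such that `k • s(ā) = t(ā)` holds in every divisible linearly ordered
abelian group. -/
theorem div_term_mul_eq_lgrp_term {n : ℕ} (s : LDivLang.Term (Fin n)) :
    ∃ (k : ℕ) (t : LGrpLang.Term (Fin n)), 0 < k ∧
      ∀ (D : Type) [AddCommGroup D] [LinearOrder D] [IsOrderedAddMonoid D],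
        (∀ n' : ℕ, 0 < n' → ∀ g : D, ∃ h : D, n' • h = g) →
        ∀ a : Fin n → D, k • Term.realize a s = Term.realize a t := by
  induction s with
  | var i => exact ⟨1, Term.var i, one_pos, fun D _ _ _ _ a => by simp⟩
  | @func l f ts ih =>
    match l, f, ts, ih with
    | 0, _, ts, _ =>
      refine ⟨1, Term.func (l := 0) (Unit.unit : LGrpFunc 0) ![], one_pos, fun D _ _ _ _ a => ?_⟩
      simp only [Term.realize_func]
      show (1 : ℕ) • (0 : D) = (0 : D)
      simp
    | 1, Sum.inl _, ts, ih =>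
      obtain ⟨k, t, hk, H⟩ := ih 0
      refine ⟨k, Term.func (l := 1) (Unit.unit : LGrpFunc 1) ![t], hk, fun D _ _ _ hdiv a => ?_⟩
      have h0 := H D hdiv a
      show k • (-(Term.realize a (ts 0))) = -(Term.realize a t)
      rw [smul_neg, h0]
    | 1, Sum.inr m, ts, ih =>
      obtain ⟨k, t, hk, H⟩ := ih 0
      refine ⟨(m : ℕ) * k, t, Nat.mul_pos m.pos hk, fun D _ _ _ hdiv a => ?_⟩
      have h0 := H D hdiv a
      have hex : ∃ z : D, (m : ℕ) • z = Term.realize a (ts 0) :=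
        hdiv m m.pos _
      show ((m : ℕ) * k) • (if h : ∃ z : D, (m : ℕ) • z = Term.realize a (ts 0)
            then h.choose else 0) = Term.realize a t
      rw [dif_pos hex, mul_nsmul, hex.choose_spec, h0]
    | 2, LGrpBin.add, ts, ih =>
      obtain ⟨k1, t1, hk1, H1⟩ := ih 0
      obtain ⟨k2, t2, hk2, H2⟩ := ih 1
      refine ⟨k1 * k2, Term.func (l := 2) (LGrpBin.add : LGrpFunc 2)
        ![smulTerm k2 t1, smulTerm k1 t2], Nat.mul_pos hk1 hk2, fun D _ _ _ hdiv a => ?_⟩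
      have h1 := H1 D hdiv a
      have h2 := H2 D hdiv a
      show (k1 * k2) • (Term.realize a (ts 0) + Term.realize a (ts 1))
          = Term.realize a (smulTerm k2 t1) + Term.realize a (smulTerm k1 t2)
      rw [realize_smulTerm, realize_smulTerm, ← h1, ← h2, smul_add,
        mul_nsmul, mul_comm k1 k2, mul_nsmul]
    | 2, LGrpBin.join, ts, ih =>
      obtain ⟨k1, t1, hk1, H1⟩ := ih 0
      obtain ⟨k2, t2, hk2, H2⟩ := ih 1
      refine ⟨k1 * k2, Term.func (l := 2) (LGrpBin.join : LGrpFunc 2)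
        ![smulTerm k2 t1, smulTerm k1 t2], Nat.mul_pos hk1 hk2, fun D _ _ _ hdiv a => ?_⟩
      have h1 := H1 D hdiv a
      have h2 := H2 D hdiv a
      have hmono : Monotone (fun x : D => (k1 * k2) • x) :=
        fun x y h => nsmul_le_nsmul_right h _
      show (k1 * k2) • (Term.realize a (ts 0) ⊔ Term.realize a (ts 1))
          = Term.realize a (smulTerm k2 t1) ⊔ Term.realize a (smulTerm k1 t2)
      rw [realize_smulTerm, realize_smulTerm, ← h1, ← h2, hmono.map_max,
        mul_nsmul, mul_comm k1 k2, mul_nsmul]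
    | 2, LGrpBin.meet, ts, ih =>
      obtain ⟨k1, t1, hk1, H1⟩ := ih 0
      obtain ⟨k2, t2, hk2, H2⟩ := ih 1
      refine ⟨k1 * k2, Term.func (l := 2) (LGrpBin.meet : LGrpFunc 2)
        ![smulTerm k2 t1, smulTerm k1 t2], Nat.mul_pos hk1 hk2, fun D _ _ _ hdiv a => ?_⟩
      have h1 := H1 D hdiv a
      have h2 := H2 D hdiv a
      have hmono : Monotone (fun x : D => (k1 * k2) • x) :=
        fun x y h => nsmul_le_nsmul_right h _
      show (k1 * k2) • (Term.realize a (ts 0) ⊓ Term.realize a (ts 1))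
          = Term.realize a (smulTerm k2 t1) ⊓ Term.realize a (smulTerm k1 t2)
      rw [realize_smulTerm, realize_smulTerm, ← h1, ← h2, hmono.map_min,
        mul_nsmul, mul_comm k1 k2, mul_nsmul]
end

section
/- Let k be a positive integer and G an abelian ℓ-group. Then the following are equivalent: (a) for every x ∈ G there is exactly one z ∈ G with 0 ≤ z and k • z = x ⊔ (−x); (b) for every x ∈ G there is exactly one z ∈ G with k • z = x. (The translation δ_k* of the hoop sentence δ_k is equivalent to δ_k over abelian ℓ-groups.) -/
section Aux

variable {G : Type*} [Lattice G] [AddCommGroup G] [CovariantClass G G (· + ·) (· ≤ ·)]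

/-- Subadditivity of `a ⊓ ·` on nonnegative elements. -/
lemma aux_inf_add_le (a b c : G) (ha : 0 ≤ a) (hb : 0 ≤ b) (hc : 0 ≤ c) :
    a ⊓ (b + c) ≤ (a ⊓ b) + (a ⊓ c) := by
  rw [← sub_le_iff_le_add]
  refine le_inf ?_ ?_
  · rw [sub_inf, sup_le_iff]
    constructor
    · exact le_trans (sub_nonpos.2 inf_le_left) ha
    · exact le_trans (sub_le_sub_right inf_le_left c) (le_trans (sub_le_self a hc) le_rfl)
  · rw [sub_inf, sup_le_iff]
    constructor
    · exact le_trans (sub_nonpos.2 inf_le_left) hb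
    · calc a ⊓ (b + c) - c ≤ (b + c) - c := sub_le_sub_right inf_le_right c
        _ = b := add_sub_cancel_right b c

lemma aux_inf_nsmul (n : ℕ) (a b : G) (ha : 0 ≤ a) (hb : 0 ≤ b) (h : a ⊓ b = 0) :
    a ⊓ n • b = 0 := by
  induction n with
  | zero => simpa using inf_of_le_right ha
  | succ n ih =>
    refine le_antisymm ?_ (le_inf ha (nsmul_nonneg hb _))
    calc a ⊓ (n + 1) • b = a ⊓ (b + n • b) := by rw [succ_nsmul']
      _ ≤ (a ⊓ b) + (a ⊓ n • b) := aux_inf_add_le a b (n • b) ha hb (nsmul_nonneg hb n)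
      _ = 0 := by rw [h, ih, add_zero]

lemma aux_nsmul_inf_nsmul (n : ℕ) (a b : G) (ha : 0 ≤ a) (hb : 0 ≤ b) (h : a ⊓ b = 0) :
    n • a ⊓ n • b = 0 := by
  have h1 : b ⊓ n • a = 0 := aux_inf_nsmul n b a hb ha (by rwa [inf_comm])
  have h2 : n • a ⊓ n • b = 0 :=
    aux_inf_nsmul n (n • a) b (nsmul_nonneg ha n) hb (by rwa [inf_comm])
  exact h2

/-- In an abelian ℓ-group, `0 ≤ k • z` implies `0 ≤ z` for `k > 0`. -/
lemma aux_nonneg_of_nsmul_nonneg {k : ℕ} (hk : 0 < k) {z : G} (h : 0 ≤ k • z) : 0 ≤ z := by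
  have hd : z⁺ ⊓ z⁻ = 0 := posPart_inf_negPart_eq_zero z
  have h2 : k • z⁺ ⊓ k • z⁻ = 0 :=
    aux_nsmul_inf_nsmul k _ _ (posPart_nonneg z) (negPart_nonneg z) hd
  have h3 : k • z⁻ ≤ k • z⁺ := by
    have : k • z = k • z⁺ - k • z⁻ := by rw [← smul_sub, posPart_sub_negPart]
    rw [this] at h
    exact sub_nonneg.mp h
  have h4 : k • z⁻ = 0 := by
    rw [← h2, inf_comm, inf_eq_left.2 h3]
  have h5 : z⁻ ≤ k • z⁻ := by
    obtain ⟨m, rfl⟩ := Nat.exists_eq_succ_of_ne_zero hk.ne'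
    calc z⁻ = 0 + z⁻ := (zero_add _).symm
      _ ≤ m • z⁻ + z⁻ := add_le_add_left (nsmul_nonneg (negPart_nonneg z) m) _
      _ = (m + 1) • z⁻ := (succ_nsmul z⁻ m).symm
  have h6 : z⁻ = 0 := le_antisymm (h4 ▸ h5) (negPart_nonneg z)
  exact negPart_eq_zero.mp h6

/-- Injectivity of `k • ·` in an abelian ℓ-group for `k > 0`. -/
lemma aux_nsmul_injective {k : ℕ} (hk : 0 < k) {z w : G} (h : k • z = k • w) : z = w := by
  have h1 : (0 : G) ≤ k • (z - w) := by rw [smul_sub, h, sub_self]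
  have h2 : (0 : G) ≤ k • (w - z) := by rw [smul_sub, h, sub_self]
  have := aux_nonneg_of_nsmul_nonneg hk h1
  have := aux_nonneg_of_nsmul_nonneg hk h2
  exact le_antisymm (sub_nonneg.mp ‹(0:G) ≤ w - z›) (sub_nonneg.mp ‹(0:G) ≤ z - w›)

end Aux

/-- Over abelian ℓ-groups, the translation `δ_k*` of the hoop sentence `δ_k`
(`∀ x ∃! z ≥ 0, k z = x ⊔ (-x)`) is equivalent to `δ_k` (`∀ x ∃! z, k z = x`). -/
theorem delta_k_star_iff_delta_k (k : ℕ) (hk : 0 < k) (G : Type)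
    [Lattice G] [AddCommGroup G] [CovariantClass G G (· + ·) (· ≤ ·)] :
    (∀ x : G, ∃! z : G, 0 ≤ z ∧ k • z = x ⊔ (-x)) ↔ (∀ x : G, ∃! z : G, k • z = x) := by
  constructor
  · intro H x
    -- Get positive k-th roots of x⁺ and x⁻.
    obtain ⟨a, ⟨ha0, hak⟩, -⟩ := H (x⁺)
    obtain ⟨b, ⟨hb0, hbk⟩, -⟩ := H (x⁻)
    have hxp : (x⁺ : G) ⊔ (-(x⁺)) = x⁺ := by
      rw [sup_eq_left]
      exact le_trans (neg_nonpos.2 (posPart_nonneg x)) (posPart_nonneg x)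
    have hxn : (x⁻ : G) ⊔ (-(x⁻)) = x⁻ := by
      rw [sup_eq_left]
      exact le_trans (neg_nonpos.2 (negPart_nonneg x)) (negPart_nonneg x)
    rw [hxp] at hak
    rw [hxn] at hbk
    refine ⟨a - b, ?_, ?_⟩
    · show k • (a - b) = x
      rw [smul_sub, hak, hbk, posPart_sub_negPart]
    · intro y hy
      apply aux_nsmul_injective hk
      rw [hy, smul_sub, hak, hbk, posPart_sub_negPart]
  · intro H x
    obtain ⟨z, hz, huniq⟩ := H (x ⊔ (-x))
    have hz0 : 0 ≤ z := by
      apply aux_nonneg_of_nsmul_nonneg hk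
      rw [hz]
      have h2 : (0 : G) ≤ 2 • (x ⊔ -x) := by
        have := add_le_add (le_sup_left : x ≤ x ⊔ -x) (le_sup_right : -x ≤ x ⊔ -x)
        rwa [add_neg_cancel, ← two_nsmul] at this
      exact aux_nonneg_of_nsmul_nonneg (by norm_num) h2
    exact ⟨z, ⟨hz0, hz⟩, fun y hy => huniq y hy.2⟩
end
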